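/- arXiv:2601.13598 — 6 statements merged into one kernel-verified Lean document; each statement's English description precedes it below -/
import Mathlib

section
/- Every real skew-symmetric matrix X of size 2n-by-2n admits a factorization X = U T U^T where U is a real orthogonal matrix and T is block-diagonal with 2-by-2 blocks of the form [[0, b_j], [-b_j, 0]]. Moreover, the spectrum of X is {±i b_1, ..., ±i b_n}. -/
open Matrix

open Module

/-- Block-diagonal 2n×2n matrix with 2×2 blocks `[[0, b k],[-b k, 0]]`. -/
def blockT (n : ℕ) (b : ℕ → ℝ) : Matrix (Fin (2*n)) (Fin (2*n)) ℝ :=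
  Matrix.of fun i j =>
    if i.1 % 2 = 0 ∧ j.1 = i.1 + 1 then b (i.1 / 2)
    else if j.1 % 2 = 0 ∧ i.1 = j.1 + 1 then -(b (j.1 / 2)) else 0

set_option linter.unreachableTactic false
set_option linter.unusedTactic false
set_option linter.unnecessarySeqFocus false

local notation "⟪" x ", " y "⟫" => @inner ℝ _ _ x y

def pe (n : ℕ) : Fin 2 × Fin n ≃ Fin (2*n) :=
  (Equiv.prodComm (Fin 2) (Fin n)).trans (finProdFinEquiv.trans (finCongr (mul_comm n 2)))

lemma pe_val (n : ℕ) (p : Fin 2 × Fin n) : ((pe n) p).1 = 2 * p.2.1 + p.1.1 := by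
  obtain ⟨r, k⟩ := p
  simp [pe, finProdFinEquiv]
  ring

lemma skew_pairs (n : ℕ) :
    ∀ (E : Type) [NormedAddCommGroup E] [InnerProductSpace ℝ E] [FiniteDimensional ℝ E]
      (T : E →ₗ[ℝ] E), finrank ℝ E = 2*n → (∀ x y : E, ⟪T x, y⟫ = -⟪x, T y⟫) →
    ∃ (v : Fin 2 × Fin n → E) (b : Fin n → ℝ), Orthonormal ℝ v ∧
      ∀ k : Fin n, T (v (0,k)) = -(b k) • v (1,k) ∧ T (v (1,k)) = b k • v (0,k) := by
  induction n with
  | zero =>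
    intro E _ _ _ T _ _
    exact ⟨fun p => p.2.elim0, fun k => k.elim0,
      ⟨fun i => i.2.elim0, fun i => i.2.elim0⟩, fun k => k.elim0⟩
  | succ n IH =>
    intro E _ _ _ T hE hT
    have hS : (T ∘ₗ T).IsSymmetric := by
      intro x y
      simp only [LinearMap.comp_apply]
      rw [hT, hT x (T y), neg_neg]
    by_cases hmu : ∃ i, hS.eigenvalues hE i ≠ 0
    · obtain ⟨i, hi⟩ := hmu
      set μ := hS.eigenvalues hE i with hμdef
      set w := hS.eigenvectorBasis hE i with hwdef
      have hw1 : ‖w‖ = 1 := (hS.eigenvectorBasis hE).orthonormal.1 i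
      have heig : T (T w) = μ • w := by
        have h := (hS.hasEigenvector_eigenvectorBasis hE i).apply_eq_smul
        simp only [LinearMap.comp_apply] at h
        exact_mod_cast h
      have hμval : μ = -⟪T w, T w⟫ := by
        have h1 : ⟪T (T w), w⟫ = μ * ⟪w, w⟫ := by rw [heig, real_inner_smul_left]
        have h2 : ⟪w, w⟫ = 1 := by
          rw [real_inner_self_eq_norm_sq, hw1]; norm_num
        have h3 := hT (T w) w
        rw [h3, h2, mul_one] at h1
        linarith
      set b0 := ‖T w‖ with hb0def
      have hb0pos : 0 < b0 := by
        rcases (norm_nonneg (T w)).lt_or_eq with h | h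
        · exact h
        · exfalso; apply hi
          have hTw0 : T w = 0 := norm_eq_zero.mp h.symm
          rw [hμval, hTw0]
          simp
      have hb0ne : b0 ≠ 0 := ne_of_gt hb0pos
      have hμb : μ = -(b0^2) := by
        rw [hμval, real_inner_self_eq_norm_sq, hb0def]
      set u0 := w with hu0def
      set u1 := -(b0⁻¹) • T w with hu1def
      have hu1norm : ‖u1‖ = 1 := by
        rw [hu1def, norm_smul]
        simp only [norm_neg, norm_inv, Real.norm_eq_abs, abs_of_pos hb0pos]
        exact inv_mul_cancel₀ hb0ne
      have hTu0 : T u0 = -b0 • u1 := by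
        rw [hu1def, smul_smul]
        have : -b0 * -b0⁻¹ = 1 := by field_simp
        rw [this, one_smul]
      have hTu1 : T u1 = b0 • u0 := by
        rw [hu1def, LinearMap.map_smul, heig, smul_smul, hμb]
        congr 1
        field_simp
      have hinner_w_Tw : ⟪w, T w⟫ = 0 := by
        have h := hT w w
        have h2 : ⟪w, T w⟫ = ⟪T w, w⟫ := real_inner_comm _ _
        linarith [h, h2]
      have hinner01 : ⟪u0, u1⟫ = 0 := by
        rw [hu1def, real_inner_smul_right, hinner_w_Tw, mul_zero]
      have hinner10 : ⟪u1, u0⟫ = 0 := by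
        rw [real_inner_comm]; exact hinner01
      have h00 : ⟪u0, u0⟫ = 1 := by
        rw [real_inner_self_eq_norm_sq, hw1]; norm_num
      have h11 : ⟪u1, u1⟫ = 1 := by
        rw [real_inner_self_eq_norm_sq, hu1norm]; norm_num
      set f : Fin 2 → E := ![u0, u1] with hfdef
      have hon : Orthonormal ℝ f := by
        rw [orthonormal_iff_ite]
        intro p q
        fin_cases p <;> fin_cases q <;>
          simp [hfdef, h00, h11, hinner01, hinner10, hu1norm, hw1]
      set K := Submodule.span ℝ (Set.range f) with hKdef
      have hu0K : u0 ∈ K := Submodule.subset_span ⟨0, rfl⟩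
      have hu1K : u1 ∈ K := Submodule.subset_span ⟨1, rfl⟩
      have hKT : ∀ x ∈ K, T x ∈ K := by
        intro x hx
        induction hx using Submodule.span_induction with
        | mem y hy =>
          obtain ⟨p, rfl⟩ := hy
          fin_cases p
          · show T u0 ∈ K
            rw [hTu0]; exact K.smul_mem _ hu1K
          · show T u1 ∈ K
            rw [hTu1]; exact K.smul_mem _ hu0K
        | zero => simp
        | add y z _ _ hy hz => rw [map_add]; exact K.add_mem hy hz
        | smul c y _ hy => rw [LinearMap.map_smul]; exact K.smul_mem c hy
      have hWT : ∀ x ∈ Kᗮ, T x ∈ Kᗮ := by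
        intro x hx
        rw [Submodule.mem_orthogonal]
        intro y hy
        have h1 := hT y x
        have h2 : ⟪T y, x⟫ = 0 :=
          (Submodule.mem_orthogonal K x).mp hx (T y) (hKT y hy)
        linarith [h1, h2]
      set T' : Kᗮ →ₗ[ℝ] Kᗮ := T.restrict hWT with hT'def
      have hT'coe : ∀ x : Kᗮ, (T' x : E) = T x := fun x => rfl
      have hW2 : finrank ℝ Kᗮ = 2*n := by
        have h1 := Submodule.finrank_add_finrank_orthogonal K
        have h2 : finrank ℝ K = 2 := by
          rw [hKdef, finrank_span_eq_card hon.linearIndependent]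
          simp
        rw [h2, hE] at h1
        omega
      have hT'skew : ∀ x y : Kᗮ, ⟪T' x, y⟫ = -⟪x, T' y⟫ := by
        intro x y
        have := hT (x : E) (y : E)
        simpa [Submodule.coe_inner, hT'coe] using this
      obtain ⟨v', b', hon', hpair'⟩ := IH Kᗮ T' hW2 hT'skew
      refine ⟨fun p => p.2.cases (f p.1) (fun k => (v' (p.1, k) : E)),
        fun k => k.cases b0 b', ?_, ?_⟩
      · rw [orthonormal_iff_ite]
        rintro ⟨r, k⟩ ⟨s, l⟩
        have horth : ∀ (r : Fin 2) (x : Kᗮ), ⟪f r, (x : E)⟫ = 0 := by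
          intro r x
          have hfK : f r ∈ K := Submodule.subset_span ⟨r, rfl⟩
          exact (Submodule.mem_orthogonal K (x : E)).mp x.2 (f r) hfK
        have horth' : ∀ (r : Fin 2) (x : Kᗮ), ⟪(x : E), f r⟫ = 0 := by
          intro r x
          rw [real_inner_comm]; exact horth r x
        induction k using Fin.cases with
        | zero =>
          induction l using Fin.cases with
          | zero =>
            have := (orthonormal_iff_ite.mp hon) r s
            simpa [Prod.ext_iff] using this
          | succ l =>
            have hne : (0 : Fin (n+1)) ≠ l.succ := (Fin.succ_ne_zero l).symm
            simp [horth, hne]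
        | succ k =>
          induction l using Fin.cases with
          | zero =>
            have hne : (k.succ : Fin (n+1)) ≠ 0 := Fin.succ_ne_zero k
            simp [horth', hne]
          | succ l =>
            have := (orthonormal_iff_ite.mp hon') (r, k) (s, l)
            rw [Submodule.coe_inner] at this
            simpa [Prod.ext_iff, Fin.succ_inj] using this
      · intro k
        induction k using Fin.cases with
        | zero =>
          constructor
          · simpa [hfdef] using hTu0
          · simpa [hfdef] using hTu1
        | succ k =>
          obtain ⟨h1, h2⟩ := hpair' k
          constructor
          · show T ((v' (0, k) : Kᗮ) : E) = _
            rw [← hT'coe, h1]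
            simp
          · show T ((v' (1, k) : Kᗮ) : E) = _
            rw [← hT'coe, h2]
            simp
    · push_neg at hmu
      have hS0 : T ∘ₗ T = 0 := by
        apply (hS.eigenvectorBasis hE).toBasis.ext
        intro i
        simp only [OrthonormalBasis.coe_toBasis, LinearMap.zero_apply]
        have h := (hS.hasEigenvector_eigenvectorBasis hE i).apply_eq_smul
        rw [h, hmu i]
        simp
      have hT0 : T = 0 := by
        ext x
        have h1 : T (T x) = 0 := by
          have := congrArg (fun g => g x) hS0
          simpa using this
        have h2 := hT (T x) x
        rw [h1, inner_zero_left] at h2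
        have h3 : ⟪T x, T x⟫ = 0 := by linarith
        simpa using inner_self_eq_zero.mp h3
      set B := (stdOrthonormalBasis ℝ E).reindex
        ((finCongr hE).trans (pe (n+1)).symm) with hBdef
      exact ⟨B, 0, B.orthonormal, fun k => by simp [hT0]⟩


lemma blockT_eq (n : ℕ) (b : ℕ → ℝ) :
    blockT n b = (reindex (pe n) (pe n))
      (blockDiagonal fun k : Fin n => !![0, b k.1; -(b k.1), 0]) := by
  ext i j
  obtain ⟨⟨r, k⟩, rfl⟩ := (pe n).surjective i
  obtain ⟨⟨s, l⟩, rfl⟩ := (pe n).surjective j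
  rw [reindex_apply, submatrix_apply, Equiv.symm_apply_apply, Equiv.symm_apply_apply]
  have hik := pe_val n (r, k)
  have hjl := pe_val n (s, l)
  have hkl : k = l ↔ k.1 = l.1 := Fin.ext_iff
  fin_cases r <;> fin_cases s <;>
    · simp only [blockT, of_apply, blockDiagonal_apply, hik, hjl]
      rcases eq_or_ne k l with rfl | h
      · norm_num <;> first
          | rfl
          | omega
          | (congr 1; omega)
          | (intros; omega)
          | (split_ifs <;> first | rfl | omega | (congr 1; omega) | (intros; omega))
      · have h' : k.1 ≠ l.1 := fun hh => h (Fin.ext hh)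
        norm_num [h] <;> first
          | rfl
          | omega
          | (intros; omega)
          | (split_ifs <;> first | rfl | omega | (intros; omega))


theorem real_skew_canonical_form (n : ℕ)
    (X : Matrix (Fin (2*n)) (Fin (2*n)) ℝ) (hX : Xᵀ = -X) :
    ∃ (U : Matrix (Fin (2*n)) (Fin (2*n)) ℝ) (b : ℕ → ℝ),
      U * Uᵀ = 1 ∧ Uᵀ * U = 1 ∧
      X = U * blockT n b * Uᵀ ∧
      spectrum ℂ (X.map ((↑) : ℝ → ℂ)) =
        {z : ℂ | ∃ k < n, z = Complex.I * (b k : ℂ) ∨ z = -(Complex.I * (b k : ℂ))} := by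
  classical
  let T : EuclideanSpace ℝ (Fin (2*n)) →ₗ[ℝ] EuclideanSpace ℝ (Fin (2*n)) :=
    { toFun := fun x => WithLp.toLp 2 (X *ᵥ x)
      map_add' := fun x y => by simp [Matrix.mulVec_add]
      map_smul' := fun c x => by simp [Matrix.mulVec_smul] }
  have hTapp : ∀ x : EuclideanSpace ℝ (Fin (2*n)), T x = X *ᵥ x := fun _ => rfl
  have hEdim : finrank ℝ (EuclideanSpace ℝ (Fin (2*n))) = 2*n := by
    simp [finrank_euclideanSpace]
  have hTskew : ∀ x y : EuclideanSpace ℝ (Fin (2*n)), ⟪T x, y⟫ = -⟪x, T y⟫ := by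
    intro x y
    simp only [hTapp, PiLp.inner_apply, RCLike.inner_apply, conj_trivial]
    simp only [mul_comm (y.ofLp _) _, mul_comm ((X *ᵥ y.ofLp) _) _]
    have h1 : ∑ i, (X *ᵥ x) i * y i = (X *ᵥ x) ⬝ᵥ y := rfl
    have h2 : ∑ i, x i * (X *ᵥ y) i = x ⬝ᵥ (X *ᵥ y) := rfl
    rw [h1, h2, dotProduct_mulVec x X y, ← mulVec_transpose, hX]
    simp [dotProduct_comm, neg_mulVec, dotProduct_neg, neg_dotProduct]
  obtain ⟨v, b', hon, hpair⟩ := skew_pairs n (EuclideanSpace ℝ (Fin (2*n))) T hEdim hTskew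
  set b : ℕ → ℝ := fun k => if h : k < n then b' ⟨k, h⟩ else 0 with hbdef
  have hbval : ∀ k : Fin n, b k.1 = b' k := by
    intro k; simp [hbdef, k.2]
  set U : Matrix (Fin (2*n)) (Fin (2*n)) ℝ := Matrix.of fun i j => v ((pe n).symm j) i
    with hUdef
  have hinner : ∀ p q : Fin 2 × Fin n, ∑ i, v p i * v q i = if p = q then 1 else 0 := by
    intro p q
    have := orthonormal_iff_ite.mp hon p q
    rw [PiLp.inner_apply] at this
    simpa [RCLike.inner_apply, conj_trivial, mul_comm] using this
  have hUtU : Uᵀ * U = 1 := by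
    ext j j'
    rw [Matrix.mul_apply]
    simp only [hUdef, transpose_apply, of_apply]
    rw [hinner]
    simp [Matrix.one_apply, Equiv.apply_eq_iff_eq]
  have hUUt : U * Uᵀ = 1 := mul_eq_one_comm.mp hUtU
  have hXU : X * U = U * blockT n b := by
    ext i j
    rw [Matrix.mul_apply, Matrix.mul_apply]
    simp only [hUdef, of_apply]
    rw [blockT_eq n b]
    -- RHS : sum over k
    rw [← Equiv.sum_comp (pe n) (fun k => v ((pe n).symm k) i *
      ((reindex (pe n) (pe n)) (blockDiagonal fun k : Fin n => !![0, b k.1; -(b k.1), 0])) k j)]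
    simp only [Equiv.symm_apply_apply, reindex_apply, submatrix_apply]
    obtain ⟨⟨s, m⟩, hq⟩ : ∃ p, (pe n).symm j = p := ⟨_, rfl⟩
    rw [hq]
    have hL : ∑ x, X i x * v (s, m) x = (T (v (s, m))) i := rfl
    rw [hL, Fintype.sum_prod_type, Fin.sum_univ_two]
    simp only [blockDiagonal_apply, mul_ite, mul_zero]
    rw [Finset.sum_ite_eq' Finset.univ m, Finset.sum_ite_eq' Finset.univ m]
    fin_cases s <;> simp only [Fin.zero_eta, Fin.mk_one, Fin.isValue, id_eq]
    · rw [(hpair m).1]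
      simp [hbval, PiLp.smul_apply]
      ring
    · rw [(hpair m).2]
      simp [hbval, PiLp.smul_apply]
      ring
  have hfact : X = U * blockT n b * Uᵀ := by
    calc X = X * (U * Uᵀ) := by rw [hUUt, mul_one]
    _ = (X * U) * Uᵀ := by rw [mul_assoc]
    _ = U * blockT n b * Uᵀ := by rw [hXU]
  refine ⟨U, b, hUUt, hUtU, hfact, ?_⟩
  -- spectrum computation
  set f : ℝ →+* ℂ := Complex.ofRealHom with hfdef
  have hmapcoe : ∀ (A : Matrix (Fin (2*n)) (Fin (2*n)) ℝ), A.map ((↑) : ℝ → ℂ) = A.map f := fun A => rfl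
  set Uc := U.map f with hUcdef
  set Tc := (blockT n b).map f with hTcdef
  have hUcUt : Uc * Ucᵀ = 1 := by
    rw [hUcdef, ← Matrix.transpose_map, ← Matrix.map_mul, hUUt, Matrix.map_one f f.map_zero f.map_one]
  have hUtUc : Ucᵀ * Uc = 1 := by
    rw [hUcdef, ← Matrix.transpose_map, ← Matrix.map_mul, hUtU, Matrix.map_one f f.map_zero f.map_one]
  have hXc : X.map f = Uc * Tc * Ucᵀ := by
    rw [hfact, Matrix.map_mul, Matrix.map_mul, Matrix.transpose_map]
  -- determinant computation
  have hTcblock : Tc = (reindex (pe n) (pe n))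
      (blockDiagonal fun k : Fin n => !![(0:ℂ), (b k.1 : ℂ); -(b k.1 : ℂ), 0]) := by
    rw [hTcdef, blockT_eq n b]
    have : (blockDiagonal fun k : Fin n => !![(0:ℝ), b k.1; -(b k.1), 0]).map f
        = blockDiagonal fun k : Fin n => !![(0:ℂ), (b k.1 : ℂ); -(b k.1 : ℂ), 0] := by
      rw [Matrix.blockDiagonal_map _ f f.map_zero]
      have hblk : ∀ k : Fin n, (!![(0:ℝ), b k.1; -(b k.1), 0]).map f
          = !![(0:ℂ), (b k.1:ℂ); -(b k.1:ℂ), 0] := by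
        intro k
        refine Matrix.ext fun r s => ?_
        fin_cases r <;> fin_cases s <;> simp [hfdef]
      simp only [hblk]
    rw [← this]
    rfl
  have hdet : ∀ z : ℂ, (z • (1 : Matrix (Fin (2*n)) (Fin (2*n)) ℂ) - Tc).det
      = ∏ k : Fin n, (z^2 + (b k.1 : ℂ)^2) := by
    intro z
    have h1 : z • (1 : Matrix (Fin (2*n)) (Fin (2*n)) ℂ) - Tc
        = (reindexAlgEquiv ℂ ℂ (pe n))
          (z • 1 - blockDiagonal fun k : Fin n => !![(0:ℂ), (b k.1 : ℂ); -(b k.1 : ℂ), 0]) := by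
      rw [hTcblock, map_sub, _root_.map_smul, _root_.map_one]
      simp only [reindexAlgEquiv_apply]
    rw [h1, reindexAlgEquiv_apply, det_reindex_self]
    have h2 : z • (1 : Matrix (Fin 2 × Fin n) (Fin 2 × Fin n) ℂ)
          - blockDiagonal (fun k : Fin n => !![(0:ℂ), (b k.1 : ℂ); -(b k.1 : ℂ), 0])
        = blockDiagonal fun k : Fin n => !![z, -(b k.1 : ℂ); (b k.1 : ℂ), z] := by
      rw [← Matrix.blockDiagonal_one, ← Matrix.blockDiagonal_smul, ← Matrix.blockDiagonal_sub]
      refine congrArg blockDiagonal (funext fun k => ?_)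
      simp only [Pi.sub_apply, Pi.smul_apply, Pi.one_apply]
      refine Matrix.ext fun r s => ?_
      fin_cases r <;> fin_cases s <;> simp [Matrix.one_apply]
    rw [h2, Matrix.det_blockDiagonal]
    congr 1
    funext k
    rw [Matrix.det_fin_two_of]
    ring
  ext z
  rw [Set.mem_setOf_eq, spectrum.mem_iff, Algebra.algebraMap_eq_smul_one, hmapcoe]
  have hconj : z • (1 : Matrix (Fin (2*n)) (Fin (2*n)) ℂ) - X.map f
      = Uc * (z • 1 - Tc) * Ucᵀ := by
    rw [hXc, Matrix.mul_sub, Matrix.sub_mul]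
    congr 1
    rw [Matrix.mul_smul, Matrix.mul_one, Matrix.smul_mul, hUcUt]
  have hdeteq : (z • (1 : Matrix (Fin (2*n)) (Fin (2*n)) ℂ) - X.map f).det
      = (z • 1 - Tc).det := by
    rw [hconj, Matrix.det_mul, Matrix.det_mul]
    have : Uc.det * Ucᵀ.det = 1 := by
      rw [← Matrix.det_mul, hUcUt, Matrix.det_one]
    calc Uc.det * (z • 1 - Tc).det * Ucᵀ.det
        = (z • 1 - Tc).det * (Uc.det * Ucᵀ.det) := by ring
      _ = (z • 1 - Tc).det := by rw [this, mul_one]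
  rw [Matrix.isUnit_iff_isUnit_det, isUnit_iff_ne_zero, not_not, hdeteq, hdet,
    Finset.prod_eq_zero_iff]
  constructor
  · rintro ⟨k, -, hk⟩
    refine ⟨k.1, k.2, ?_⟩
    have hfac : z^2 + (b k.1 : ℂ)^2 = (z - Complex.I * (b k.1 : ℂ)) * (z + Complex.I * (b k.1 : ℂ)) := by
      ring_nf
      rw [Complex.I_sq]
      ring
    rw [hfac, mul_eq_zero, sub_eq_zero, add_eq_zero_iff_eq_neg] at hk
    exact hk
  · rintro ⟨k, hkn, hk⟩
    refine ⟨⟨k, hkn⟩, Finset.mem_univ _, ?_⟩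
    have hfac : z^2 + (b k : ℂ)^2 = (z - Complex.I * (b k : ℂ)) * (z + Complex.I * (b k : ℂ)) := by
      ring_nf
      rw [Complex.I_sq]
      ring
    rw [hfac, mul_eq_zero, sub_eq_zero, add_eq_zero_iff_eq_neg]
    exact hk
end

section
/- The determinant of any real skew-symmetric 2n-by-2n matrix is the square of a polynomial function with real coefficients in the matrix entries; i.e., there exists a polynomial p in the entries x_{ij} such that det(X) = p(X)^2 for all skew-symmetric X. -/
open Matrix

lemma skew_det_sq {K : Type*} [Field K] [CharZero K] :
    ∀ (m : ℕ) (X : Matrix (Fin (2*m)) (Fin (2*m)) K), Xᵀ = -X → ∃ t : K, X.det = t^2 := by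
  intro m
  induction m with
  | zero =>
    intro X _
    haveI : IsEmpty (Fin (2*0)) := by rw [Nat.mul_zero]; infer_instance
    exact ⟨1, by simp [Matrix.det_isEmpty]⟩
  | succ m ih =>
    intro X h
    haveI : NeZero (2*(m+1)) := ⟨by omega⟩
    have hsk : ∀ i j, X j i = -X i j := fun i j => by
      have := congrFun (congrFun h i) j
      simpa [Matrix.transpose_apply] using this
    have hdiag : ∀ i, X i i = 0 := fun i => by
      have h2 : (2:K) * X i i = 0 := by linear_combination hsk i i
      exact (mul_eq_zero.mp h2).resolve_left two_ne_zero
    -- key step for matrices with X 0 1 ≠ 0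
    have key : ∀ W : Matrix (Fin (2*(m+1))) (Fin (2*(m+1))) K,
        Wᵀ = -W → W 0 1 ≠ 0 → ∃ t : K, W.det = t^2 := by
      intro W hW ha
      have hWsk : ∀ i j, W j i = -W i j := fun i j => by
        have := congrFun (congrFun hW i) j
        simpa [Matrix.transpose_apply] using this
      have hWdiag : ∀ i, W i i = 0 := fun i => by
        have h2 : (2:K) * W i i = 0 := by linear_combination hWsk i i
        exact (mul_eq_zero.mp h2).resolve_left two_ne_zero
      set e : (Fin 2 ⊕ Fin (2*m)) ≃ Fin (2*(m+1)) :=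
        finSumFinEquiv.trans (finCongr (by ring)) with he
      set Y : Matrix (Fin 2 ⊕ Fin (2*m)) (Fin 2 ⊕ Fin (2*m)) K := W.submatrix e e with hYdef
      have hdetY : Y.det = W.det := Matrix.det_submatrix_equiv_self e W
      have hYsk : ∀ i j, Y j i = -Y i j := fun i j => hWsk _ _
      have he0 : e (Sum.inl 0) = 0 := by
        apply Fin.ext
        simp [he, finSumFinEquiv, finCongr]
      have he1 : e (Sum.inl 1) = 1 := by
        apply Fin.ext
        simp [he, finSumFinEquiv, finCongr]
        exact (Nat.mod_eq_of_lt (by omega)).symm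
      set A := Y.toBlocks₁₁ with hA
      set B := Y.toBlocks₁₂ with hB
      set C := Y.toBlocks₂₁ with hC
      set D := Y.toBlocks₂₂ with hD
      set a := W 0 1 with haa
      have hA00 : A 0 0 = 0 := by simp [hA, toBlocks₁₁, hYdef, he0]; exact hWdiag _
      have hA11 : A 1 1 = 0 := by simp [hA, toBlocks₁₁, hYdef]; rw [he1]; exact hWdiag _
      have hA01 : A 0 1 = a := by simp [hA, toBlocks₁₁, hYdef]; rw [he0, he1]
      have hA10 : A 1 0 = -a := by simp [hA, toBlocks₁₁, hYdef]; rw [he0, he1]; exact hWsk _ _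
      have hdetA : A.det = a^2 := by
        rw [Matrix.det_fin_two, hA00, hA11, hA01, hA10]; ring
      have hAu : IsUnit A.det := by rw [hdetA]; exact (pow_ne_zero 2 ha).isUnit
      haveI : Invertible A := A.invertibleOfIsUnitDet hAu
      have hinvOf : ⅟A = A⁻¹ := invOf_eq_nonsing_inv A
      have hAinvT : (A⁻¹)ᵀ = -A⁻¹ := by
        rw [Matrix.transpose_nonsing_inv]
        have hAT : Aᵀ = -A := by
          ext i j
          simp [Matrix.transpose_apply]
          exact hYsk _ _
        rw [hAT]
        apply Matrix.inv_eq_right_inv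
        rw [neg_mul_neg, Matrix.mul_nonsing_inv A hAu]
      set S := D - C * ⅟A * B with hS
      have hSsk : Sᵀ = -S := by
        have hBT : Bᵀ = -C := by
          ext i j; simp [hB, hC, Matrix.transpose_apply, toBlocks₁₂, toBlocks₂₁]; exact hYsk _ _
        have hCT : Cᵀ = -B := by
          ext i j; simp [hB, hC, Matrix.transpose_apply, toBlocks₁₂, toBlocks₂₁]; exact hYsk _ _
        have hDT : Dᵀ = -D := by
          ext i j; simp [hD, Matrix.transpose_apply, toBlocks₂₂]; exact hYsk _ _
        rw [hS, Matrix.transpose_sub, hDT, Matrix.transpose_mul, Matrix.transpose_mul,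
          hinvOf, hAinvT, hBT, hCT]
        simp only [Matrix.neg_mul, Matrix.mul_neg, neg_neg, Matrix.mul_assoc, sub_eq_add_neg, neg_add, neg_neg]
      obtain ⟨s, hs⟩ := ih S hSsk
      refine ⟨a * s, ?_⟩
      have hblocks : Y = fromBlocks A B C D := (Matrix.fromBlocks_toBlocks Y).symm
      rw [← hdetY, hblocks, Matrix.det_fromBlocks₁₁, ← hS, hs, hdetA]
      ring
    -- main case split
    by_cases hrow : ∀ j, X 0 j = 0
    · exact ⟨0, by rw [Matrix.det_eq_zero_of_row_eq_zero 0 hrow]; ring⟩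
    · push_neg at hrow
      obtain ⟨j₀, hj₀⟩ := hrow
      have hj0ne : j₀ ≠ 0 := fun hh => hj₀ (hh ▸ hdiag 0)
      set σ := Equiv.swap (1 : Fin (2*(m+1))) j₀ with hσ
      set X' := X.submatrix σ σ with hX'
      have h01 : (0 : Fin (2*(m+1))) ≠ 1 := by
        intro hh
        have h0 : ((0 : Fin (2*(m+1))) : ℕ) = 0 := rfl
        have h1 : ((1 : Fin (2*(m+1))) : ℕ) = 1 := by rw [Fin.val_one']; exact Nat.mod_eq_of_lt (by omega)
        rw [hh] at h0
        omega
      have hσ0 : σ 0 = 0 := Equiv.swap_apply_of_ne_of_ne h01 (Ne.symm hj0ne)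
      have hσ1 : σ 1 = j₀ := Equiv.swap_apply_left _ _
      have hskew' : X'ᵀ = -X' := by
        ext i j
        simp [hX', Matrix.transpose_apply, Matrix.submatrix_apply]
        exact hsk _ _
      have h01' : X' 0 1 ≠ 0 := by
        simpa [hX', Matrix.submatrix_apply, hσ0, hσ1] using hj₀
      obtain ⟨t, ht⟩ := key X' hskew' h01'
      exact ⟨t, by rw [← Matrix.det_submatrix_equiv_self σ X, ← ht]⟩

theorem det_skew_is_square_of_polynomial (n : ℕ) :
    ∃ p : MvPolynomial (Fin (2*n) × Fin (2*n)) ℝ,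
      ∀ X : Matrix (Fin (2*n)) (Fin (2*n)) ℝ, Xᵀ = -X →
        X.det = (MvPolynomial.eval (fun ij => X ij.1 ij.2) p)^2 := by
  set R := MvPolynomial (Fin (2*n) × Fin (2*n)) ℝ with hR
  set K := FractionRing R with hK
  set φ := algebraMap R K with hφ
  have hφinj : Function.Injective φ := IsFractionRing.injective R K
  haveI : CharZero K := charZero_of_injective_algebraMap hφinj
  set M : Matrix (Fin (2*n)) (Fin (2*n)) R :=
    fun i j => MvPolynomial.X (i, j) - MvPolynomial.X (j, i) with hM
  have hMk : (M.map φ)ᵀ = -(M.map φ) := by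
    ext i j
    show φ (M j i) = -φ (M i j)
    simp only [hM]
    rw [← map_neg, neg_sub]
  obtain ⟨u, hu⟩ := skew_det_sq n (M.map φ) hMk
  have hu' : φ M.det = u^2 := by rw [RingHom.map_det]; exact hu
  -- u is integral over R, hence in R
  have hint : IsIntegral R u := by
    refine ⟨Polynomial.X^2 - Polynomial.C M.det, Polynomial.monic_X_pow_sub_C _ (by norm_num), ?_⟩
    simp [Polynomial.eval₂_sub, hu']
    rw [← hφ, hu', sub_self]
  obtain ⟨t, ht⟩ := IsIntegrallyClosed.isIntegral_iff.mp hint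
  have htt : M.det = t^2 := by
    apply hφinj
    rw [hu', map_pow, ht]
  refine ⟨MvPolynomial.C (((2:ℝ)^n)⁻¹) * t, ?_⟩
  intro X hX
  set v : Fin (2*n) × Fin (2*n) → ℝ := fun ij => X ij.1 ij.2 with hv
  have hsk : ∀ i j, X j i = -X i j := fun i j => by
    have := congrFun (congrFun hX i) j
    simpa [Matrix.transpose_apply] using this
  have hmap : M.map (MvPolynomial.eval v) = (2:ℝ) • X := by
    ext i j
    show MvPolynomial.eval v (M i j) = (2:ℝ) • X i j
    simp only [hM]
    rw [MvPolynomial.eval_sub, MvPolynomial.eval_X, MvPolynomial.eval_X]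
    simp only [hv]
    rw [hsk i j, smul_eq_mul]
    ring
  have hevdet : MvPolynomial.eval v M.det = 2^(2*n) * X.det := by
    rw [show (MvPolynomial.eval v) M.det = (M.map (MvPolynomial.eval v)).det from
      RingHom.map_det _ _, hmap, Matrix.det_smul]
    simp
  have h2 : MvPolynomial.eval v (t^2) = 2^(2*n) * X.det := by rw [← htt]; exact hevdet
  have hev : (MvPolynomial.eval v) (MvPolynomial.C (((2:ℝ)^n)⁻¹) * t)
      = ((2:ℝ)^n)⁻¹ * (MvPolynomial.eval v) t := by simp
  rw [hev, mul_pow, ← map_pow, h2,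
    show (2:ℝ)^(2*n) = ((2:ℝ)^n)^2 by rw [← pow_mul, mul_comm]]
  have h2n : ((2:ℝ)^n) ≠ 0 := by positivity
  field_simp
end

section
/- The set of invertible real skew-symmetric 2n-by-2n matrices is not path-connected: in particular J_+ (the direct sum of n copies of [[0,1],[-1,0]]) and J_- (the same but with the first block negated) cannot be joined by a continuous path of invertible skew-symmetric matrices. -/
open Matrix Equiv
namespace PfTheory
variable {n : ℕ}
def lo (n : ℕ) (k : Fin n) : Fin (2*n) := ⟨2*k.1, by omega⟩
def hi (n : ℕ) (k : Fin n) : Fin (2*n) := ⟨2*k.1+1, by omega⟩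
def pr (m : Fin (2*n)) : Fin n := ⟨m.1/2, by have := m.2; omega⟩
lemma lo_or_hi (m : Fin (2*n)) : m = lo n (pr m) ∨ m = hi n (pr m) := by
  rcases Nat.even_or_odd m.1 with ⟨c, hc⟩ | ⟨c, hc⟩
  · left; apply Fin.ext; show m.1 = 2*(m.1/2); omega
  · right; apply Fin.ext; show m.1 = 2*(m.1/2)+1; omega
@[simp] lemma pr_lo (k : Fin n) : pr (lo n k) = k := by apply Fin.ext; show (2*k.1)/2 = k.1; omega
@[simp] lemma pr_hi (k : Fin n) : pr (hi n k) = k := by apply Fin.ext; show (2*k.1+1)/2 = k.1; omega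
lemma lo_ne_hi (k k' : Fin n) : lo n k ≠ hi n k' := by
  intro h; have := congrArg Fin.val h; simp [lo, hi] at this; omega
noncomputable def pf (n : ℕ) (A : Matrix (Fin (2*n)) (Fin (2*n)) ℝ) : ℝ :=
  ((2^n * n.factorial : ℕ) : ℝ)⁻¹ *
    ∑ σ : Perm (Fin (2*n)), ((Perm.sign σ : ℤ) : ℝ) * ∏ k : Fin n, A (σ (lo n k)) (σ (hi n k))
def ppos (σ : Perm (Fin (2*n))) (i : Fin (2*n)) : Fin n := pr (σ⁻¹ i)
lemma ppos_spec (σ : Perm (Fin (2*n))) (i : Fin (2*n)) :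
    σ (lo n (ppos σ i)) = i ∨ σ (hi n (ppos σ i)) = i := by
  rcases lo_or_hi (σ⁻¹ i) with h | h
  · left; rw [ppos, ← h]; simp
  · right; rw [ppos, ← h]; simp
lemma ppos_ne (σ : Perm (Fin (2*n))) (i : Fin (2*n)) (k : Fin n) (hk : k ≠ ppos σ i) :
    σ (lo n k) ≠ i ∧ σ (hi n k) ≠ i := by
  constructor <;> intro h
  · apply hk; have : σ⁻¹ i = lo n k := by rw [← h]; simp
    rw [ppos, this, pr_lo]
  · apply hk; have : σ⁻¹ i = hi n k := by rw [← h]; simp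
    rw [ppos, this, pr_hi]

lemma pf_congr {A B : Matrix (Fin (2*n)) (Fin (2*n)) ℝ}
    (h : ∀ k l, k ≠ l → A k l = B k l) : pf n A = pf n B := by
  unfold pf; congr 1; apply Finset.sum_congr rfl; intro σ _
  congr 1; apply Finset.prod_congr rfl; intro k _
  exact h _ _ (fun he => lo_ne_hi k k (σ.injective he))

lemma prod_split (f g g' : Fin n → ℝ) (k₀ : Fin n) (c : ℝ)
    (h0 : f k₀ = g k₀ + c * g' k₀) (h : ∀ k, k ≠ k₀ → f k = g k ∧ g' k = g k) :
    ∏ k, f k = ∏ k, g k + c * ∏ k, g' k := by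
  rw [← Finset.mul_prod_erase Finset.univ f (Finset.mem_univ k₀),
      ← Finset.mul_prod_erase Finset.univ g (Finset.mem_univ k₀),
      ← Finset.mul_prod_erase Finset.univ g' (Finset.mem_univ k₀)]
  have e1 : ∏ x ∈ Finset.univ.erase k₀, f x = ∏ x ∈ Finset.univ.erase k₀, g x :=
    Finset.prod_congr rfl (fun x hx => (h x (Finset.ne_of_mem_erase hx)).1)
  have e2 : ∏ x ∈ Finset.univ.erase k₀, g' x = ∏ x ∈ Finset.univ.erase k₀, g x :=
    Finset.prod_congr rfl (fun x hx => (h x (Finset.ne_of_mem_erase hx)).2)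
  rw [e1, e2, h0]; ring

lemma pf_slot {A A' M : Matrix (Fin (2*n)) (Fin (2*n)) ℝ} (i : Fin (2*n)) (c : ℝ)
    (h1 : ∀ k l, k ≠ i → l ≠ i → A' k l = A k l ∧ M k l = A k l)
    (h2 : ∀ l, l ≠ i → M i l = A i l + c * A' i l)
    (h3 : ∀ k, k ≠ i → M k i = A k i + c * A' k i) :
    pf n M = pf n A + c * pf n A' := by
  have key : ∀ σ : Perm (Fin (2*n)), ∏ k, M (σ (lo n k)) (σ (hi n k)) =
      ∏ k, A (σ (lo n k)) (σ (hi n k)) + c * ∏ k, A' (σ (lo n k)) (σ (hi n k)) := by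
    intro σ
    apply prod_split _ _ _ (ppos σ i) c
    · rcases ppos_spec σ i with h | h
      · have hne : σ (hi n (ppos σ i)) ≠ i :=
          fun he => lo_ne_hi (ppos σ i) (ppos σ i) (σ.injective (h.trans he.symm))
        rw [h]; exact h2 _ hne
      · have hne : σ (lo n (ppos σ i)) ≠ i :=
          fun he => lo_ne_hi (ppos σ i) (ppos σ i) (σ.injective (he.trans h.symm))
        rw [h]; exact h3 _ hne
    · intro k hk
      obtain ⟨hl, hh⟩ := ppos_ne σ i k hk
      exact ⟨(h1 _ _ hl hh).2, (h1 _ _ hl hh).1⟩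
  unfold pf
  rw [show (∑ σ : Perm (Fin (2*n)), ((Perm.sign σ : ℤ) : ℝ) * ∏ k, M (σ (lo n k)) (σ (hi n k)))
      = ∑ σ : Perm (Fin (2*n)), (((Perm.sign σ : ℤ) : ℝ) * ∏ k, A (σ (lo n k)) (σ (hi n k))
        + c * (((Perm.sign σ : ℤ) : ℝ) * ∏ k, A' (σ (lo n k)) (σ (hi n k))))
      from Finset.sum_congr rfl (fun σ _ => by rw [key σ]; ring),
    Finset.sum_add_distrib, ← Finset.mul_sum]
  ring

end PfTheory

namespace PfTheory2
open PfTheory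
variable {n : ℕ}

lemma pf_zero_slot {A : Matrix (Fin (2*n)) (Fin (2*n)) ℝ} (i : Fin (2*n))
    (hr : ∀ l, A i l = 0) (hc : ∀ k, A k i = 0) : pf n A = 0 := by
  unfold pf
  rw [Finset.sum_eq_zero, mul_zero]
  intro σ _
  have : ∏ k, A (σ (lo n k)) (σ (hi n k)) = 0 := by
    apply Finset.prod_eq_zero (Finset.mem_univ (ppos σ i))
    rcases ppos_spec σ i with h | h
    · rw [h]; exact hr _
    · rw [h]; exact hc _
  rw [this, mul_zero]

lemma pf_submatrix (A : Matrix (Fin (2*n)) (Fin (2*n)) ℝ) (e : Perm (Fin (2*n))) :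
    pf n (A.submatrix e e) = ((Perm.sign e : ℤ) : ℝ) * pf n A := by
  unfold pf
  have hs := Fintype.sum_equiv (Equiv.mulLeft e)
    (fun σ : Perm (Fin (2*n)) => ((Perm.sign σ : ℤ) : ℝ) * ∏ k, A.submatrix e e (σ (lo n k)) (σ (hi n k)))
    (fun τ : Perm (Fin (2*n)) => ((Perm.sign e : ℤ) : ℝ) * (((Perm.sign τ : ℤ) : ℝ) * ∏ k, A (τ (lo n k)) (τ (hi n k))))
    ?_
  · rw [hs, ← Finset.mul_sum]; ring
  · intro σ
    simp only [Equiv.coe_mulLeft, submatrix_apply]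
    have hsg : Perm.sign (e * σ) = Perm.sign e * Perm.sign σ := _root_.map_mul _ _ _
    have hpr : ∀ k : Fin n, A (e (σ (lo n k))) (e (σ (hi n k))) = A ((e * σ) (lo n k)) ((e * σ) (hi n k)) :=
      fun k => rfl
    simp only [hpr, hsg]
    rcases Int.units_eq_one_or (Perm.sign e) with h | h <;> rw [h] <;> push_cast <;> ring

lemma pf_swap_eq_zero {A : Matrix (Fin (2*n)) (Fin (2*n)) ℝ} {i j : Fin (2*n)} (hij : i ≠ j)
    (h : ∀ k l, k ≠ l → A (Equiv.swap i j k) (Equiv.swap i j l) = A k l) : pf n A = 0 := by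
  have h1 : pf n (A.submatrix (Equiv.swap i j) (Equiv.swap i j)) = pf n A :=
    pf_congr (fun k l hkl => h k l hkl)
  rw [pf_submatrix, Equiv.Perm.sign_swap hij] at h1
  push_cast at h1
  linarith

end PfTheory2

namespace PfTheory3
open PfTheory PfTheory2
variable {n : ℕ}

/-- congruence by the transvection `I + c E i j`: add `c`×(row j) to row i and `c`×(col j) to col i -/
def tstep (A : Matrix (Fin (2*n)) (Fin (2*n)) ℝ) (i j : Fin (2*n)) (c : ℝ) :
    Matrix (Fin (2*n)) (Fin (2*n)) ℝ :=
  Matrix.of fun k l => A k l + (if k = i then c * A j l else 0) + (if l = i then c * A k j else 0)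

lemma pf_tstep (A : Matrix (Fin (2*n)) (Fin (2*n)) ℝ) {i j : Fin (2*n)} (hij : i ≠ j) (c : ℝ) :
    pf n (tstep A i j c) = pf n A := by
  set A' : Matrix (Fin (2*n)) (Fin (2*n)) ℝ :=
    Matrix.of (fun k l => if k = i then A j l else if l = i then A k j else A k l) with hA'
  have hslot : pf n (tstep A i j c) = pf n A + c * pf n A' := by
    apply pf_slot i c
    · intro k l hk hl; constructor
      · show (if k = i then A j l else if l = i then A k j else A k l) = A k l
        rw [if_neg hk, if_neg hl]
      · show A k l + _ + _ = A k l
        rw [if_neg hk, if_neg hl]; ring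
    · intro l hl
      show A i l + _ + _ = A i l + c * (if i = i then A j l else _)
      rw [if_pos rfl, if_neg hl, if_pos rfl]; ring
    · intro k hk
      show A k i + _ + _ = A k i + c * (if k = i then A j i else if i = i then A k j else A k i)
      rw [if_neg hk, if_pos rfl, if_neg hk, if_pos rfl]; ring
  have hzero : pf n A' = 0 := by
    apply pf_swap_eq_zero hij
    intro k l hkl
    show (if Equiv.swap i j k = i then A j (Equiv.swap i j l)
        else if Equiv.swap i j l = i then A (Equiv.swap i j k) j else A (Equiv.swap i j k) (Equiv.swap i j l))
      = (if k = i then A j l else if l = i then A k j else A k l)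
    have hji : j ≠ i := hij.symm
    by_cases hki : k = i <;> by_cases hkj : k = j <;> by_cases hli : l = i <;> by_cases hlj : l = j <;>
      simp_all [Equiv.swap_apply_def]
  rw [hslot, hzero, mul_zero, add_zero]

lemma det_tstep (A : Matrix (Fin (2*n)) (Fin (2*n)) ℝ) {i j : Fin (2*n)} (hij : i ≠ j) (c : ℝ)
    (hjj : A j j = 0) : (tstep A i j c).det = A.det := by
  have hB : tstep A i j c = Matrix.updateCol (Matrix.updateRow A i (A i + c • A j)) i
      (fun k => (Matrix.updateRow A i (A i + c • A j)) k i + c • (Matrix.updateRow A i (A i + c • A j)) k j) := by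
    ext k l
    show A k l + (if k = i then c * A j l else 0) + (if l = i then c * A k j else 0) = _
    simp only [Matrix.updateCol_apply, Matrix.updateRow_apply, Pi.add_apply, Pi.smul_apply,
      smul_eq_mul]
    by_cases hki : k = i <;> by_cases hli : l = i <;> simp [hki, hli, hjj] <;> ring
  rw [hB, Matrix.det_updateCol_add_smul_self _ hij, Matrix.det_updateRow_add_smul_self _ hij]

lemma tstep_skew {A : Matrix (Fin (2*n)) (Fin (2*n)) ℝ} (hA : ∀ k l, A l k = -A k l)
    (i j : Fin (2*n)) (c : ℝ) : ∀ k l, (tstep A i j c) l k = -(tstep A i j c) k l := by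
  intro k l
  show A l k + (if l = i then c * A j k else 0) + (if k = i then c * A l j else 0)
    = -(A k l + (if k = i then c * A j l else 0) + (if l = i then c * A k j else 0))
  rw [hA k l, hA k j, hA j l]
  by_cases hli : l = i <;> by_cases hki : k = i <;> simp [hli, hki] <;> ring

end PfTheory3

namespace PfTheory4
open PfTheory PfTheory2 PfTheory3
variable {m : ℕ}

lemma lo_inj {k k' : Fin m} (h : lo m k = lo m k') : k = k' := by
  have := congrArg Fin.val h; simp [lo] at this; exact Fin.ext (by omega)

lemma hi_inj {k k' : Fin m} (h : hi m k = hi m k') : k = k' := by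
  have := congrArg Fin.val h; simp [hi] at this; exact Fin.ext (by omega)

lemma swap_lo_lo (a b k : Fin m) :
    Equiv.swap (lo m a) (lo m b) (lo m k) = lo m (Equiv.swap a b k) := by
  rcases eq_or_ne k a with rfl | hka
  · rw [Equiv.swap_apply_left, Equiv.swap_apply_left]
  · rcases eq_or_ne k b with rfl | hkb
    · rw [Equiv.swap_apply_right, Equiv.swap_apply_right]
    · rw [Equiv.swap_apply_of_ne_of_ne (fun h => hka (lo_inj h)) (fun h => hkb (lo_inj h)),
        Equiv.swap_apply_of_ne_of_ne hka hkb]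

lemma swap_hi_hi (a b k : Fin m) :
    Equiv.swap (hi m a) (hi m b) (hi m k) = hi m (Equiv.swap a b k) := by
  rcases eq_or_ne k a with rfl | hka
  · rw [Equiv.swap_apply_left, Equiv.swap_apply_left]
  · rcases eq_or_ne k b with rfl | hkb
    · rw [Equiv.swap_apply_right, Equiv.swap_apply_right]
    · rw [Equiv.swap_apply_of_ne_of_ne (fun h => hka (hi_inj h)) (fun h => hkb (hi_inj h)),
        Equiv.swap_apply_of_ne_of_ne hka hkb]

lemma swap_lo_lo_hi (a b k : Fin m) :
    Equiv.swap (lo m a) (lo m b) (hi m k) = hi m k :=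
  Equiv.swap_apply_of_ne_of_ne (fun h => lo_ne_hi a k h.symm) (fun h => lo_ne_hi b k h.symm)

lemma swap_hi_hi_lo (a b k : Fin m) :
    Equiv.swap (hi m a) (hi m b) (lo m k) = lo m k :=
  Equiv.swap_apply_of_ne_of_ne (lo_ne_hi k a) (lo_ne_hi k b)

/-- embedding Fin 2 ⊕ Fin (2m) ≃ Fin (2(m+1)) -/
def shiftE : (Fin 2 ⊕ Fin (2*m)) ≃ Fin (2*(m+1)) :=
  finSumFinEquiv.trans (finCongr (by ring))

def shift (x : Fin (2*m)) : Fin (2*(m+1)) := shiftE (Sum.inr x)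

lemma shift_val (x : Fin (2*m)) : (shift x).1 = 2 + x.1 := rfl

lemma shiftE_inl_val (a : Fin 2) : (shiftE (m := m) (Sum.inl a)).1 = a.1 := rfl

lemma shiftE_inl_z0 : shiftE (m := m) (Sum.inl 0) = lo (m+1) 0 := by
  apply Fin.ext; show (0:ℕ) = 2*(0:Fin (m+1)).1; simp

lemma shiftE_inl_z1 : shiftE (m := m) (Sum.inl 1) = hi (m+1) 0 := by
  apply Fin.ext; show (1:ℕ) = 2*(0:Fin (m+1)).1+1; simp

/-- extend a permutation of Fin 2m to Fin 2(m+1) fixing 0 and 1 -/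
def extP (σ' : Equiv.Perm (Fin (2*m))) : Equiv.Perm (Fin (2*(m+1))) :=
  shiftE.permCongr (Equiv.sumCongr (1 : Equiv.Perm (Fin 2)) σ')

lemma extP_shift (σ' : Equiv.Perm (Fin (2*m))) (x : Fin (2*m)) :
    extP σ' (shift x) = shift (σ' x) := by
  simp [extP, shift, Equiv.permCongr_apply]

lemma extP_inl (σ' : Equiv.Perm (Fin (2*m))) (a : Fin 2) :
    extP σ' (shiftE (Sum.inl a)) = shiftE (Sum.inl a) := by
  simp [extP, Equiv.permCongr_apply]

lemma sign_extP (σ' : Equiv.Perm (Fin (2*m))) :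
    Equiv.Perm.sign (extP σ') = Equiv.Perm.sign σ' := by
  rw [extP, Equiv.Perm.sign_permCongr, Equiv.Perm.sign_sumCongr]; simp

lemma extP_inj : Function.Injective (extP (m := m)) := by
  intro a b h
  ext x
  have := congrArg (fun σ => σ (shift x)) h
  simp only [extP_shift] at this
  have : shiftE (Sum.inr (a x)) = shiftE (Sum.inr (b x)) := this
  have := shiftE.injective this
  exact congrArg Fin.val (Sum.inr.inj this)

lemma extP_surj (τ : Equiv.Perm (Fin (2*(m+1))))
    (h0 : τ (lo (m+1) 0) = lo (m+1) 0) (h1 : τ (hi (m+1) 0) = hi (m+1) 0) :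
    ∃ σ', extP σ' = τ := by
  set p : Equiv.Perm (Fin 2 ⊕ Fin (2*m)) := shiftE.permCongr.symm τ with hp
  have hfix : ∀ a : Fin 2, p (Sum.inl a) = Sum.inl a := by
    intro a
    have ha : τ (shiftE (Sum.inl a)) = shiftE (Sum.inl a) := by
      have : a = 0 ∨ a = 1 := by omega
      rcases this with rfl | rfl
      · rw [shiftE_inl_z0]; exact h0
      · rw [shiftE_inl_z1]; exact h1
    show shiftE.symm (τ (shiftE (Sum.inl a))) = Sum.inl a
    rw [ha, Equiv.symm_apply_apply]
  have hmem : p ∈ (Equiv.Perm.sumCongrHom (Fin 2) (Fin (2*m))).range := by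
    apply Equiv.Perm.mem_sumCongrHom_range_of_perm_mapsTo_inl
    rintro x ⟨a, rfl⟩
    exact ⟨a, (hfix a).symm⟩
  obtain ⟨⟨σl, σr⟩, hσ⟩ := hmem
  have hσl : σl = 1 := by
    ext a
    have := congrArg (fun q => q (Sum.inl a)) hσ
    simp only [Equiv.Perm.sumCongrHom_apply, Equiv.sumCongr_apply, Sum.map_inl] at this
    rw [hfix a] at this
    have h2 := Sum.inl.inj this
    rw [Equiv.Perm.one_apply]
    exact congrArg Fin.val h2
  refine ⟨σr, ?_⟩
  have : p = Equiv.sumCongr 1 σr := by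
    rw [← hσ, hσl]; rfl
  rw [extP, ← this, hp]
  exact Equiv.apply_symm_apply _ τ

end PfTheory4

namespace PfTheory5
open PfTheory PfTheory2 PfTheory3 PfTheory4
variable {m : ℕ}

/-- pair-position swap on Fin (2(m+1)) -/
def piP (k₀ : Fin (m+1)) : Equiv.Perm (Fin (2*(m+1))) :=
  Equiv.swap (lo (m+1) 0) (lo (m+1) k₀) * Equiv.swap (hi (m+1) 0) (hi (m+1) k₀)

def phiP (b : Bool) : Equiv.Perm (Fin (2*(m+1))) :=
  if b then Equiv.swap (lo (m+1) 0) (hi (m+1) 0) else 1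

lemma piP_lo (k₀ k : Fin (m+1)) : piP k₀ (lo (m+1) k) = lo (m+1) (Equiv.swap 0 k₀ k) := by
  show Equiv.swap _ _ (Equiv.swap _ _ (lo (m+1) k)) = _
  rw [swap_hi_hi_lo, swap_lo_lo]

lemma piP_hi (k₀ k : Fin (m+1)) : piP k₀ (hi (m+1) k) = hi (m+1) (Equiv.swap 0 k₀ k) := by
  show Equiv.swap _ _ (Equiv.swap _ _ (hi (m+1) k)) = _
  rw [swap_hi_hi, swap_lo_lo_hi]

lemma piP_sq (k₀ : Fin (m+1)) : piP k₀ * piP k₀ = 1 := by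
  ext x
  rcases lo_or_hi x with h | h <;> rw [h] <;>
    simp only [Equiv.Perm.mul_apply, piP_lo, piP_hi, Equiv.swap_apply_self, Equiv.Perm.one_apply]

lemma phiP_sq (b : Bool) : phiP (m := m) b * phiP b = 1 := by
  cases b <;> simp [phiP, Equiv.swap_mul_self]

lemma phiP_cancel (b : Bool) (x : Equiv.Perm (Fin (2*(m+1)))) : phiP b * (phiP b * x) = x := by
  rw [← mul_assoc, phiP_sq, one_mul]

lemma sign_piP (k₀ : Fin (m+1)) : Equiv.Perm.sign (piP k₀) = 1 := by
  rcases eq_or_ne k₀ 0 with rfl | h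
  · rw [piP, Equiv.swap_self, Equiv.swap_self]
    simp
  · rw [piP, _root_.map_mul,
      Equiv.Perm.sign_swap (fun he => h (lo_inj he).symm),
      Equiv.Perm.sign_swap (fun he => h (hi_inj he).symm)]
    simp

def wP (B : Matrix (Fin (2*(m+1))) (Fin (2*(m+1))) ℝ) (σ : Equiv.Perm (Fin (2*(m+1)))) : ℝ :=
  ((Equiv.Perm.sign σ : ℤ) : ℝ) * ∏ k : Fin (m+1), B (σ (lo (m+1) k)) (σ (hi (m+1) k))

lemma wP_pi (B : Matrix (Fin (2*(m+1))) (Fin (2*(m+1))) ℝ) (ν : Equiv.Perm (Fin (2*(m+1))))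
    (k₀ : Fin (m+1)) : wP B (ν * piP k₀) = wP B ν := by
  unfold wP
  rw [_root_.map_mul, sign_piP, mul_one]
  congr 1
  have : ∀ k, B ((ν * piP k₀) (lo (m+1) k)) ((ν * piP k₀) (hi (m+1) k))
      = B (ν (lo (m+1) (Equiv.swap 0 k₀ k))) (ν (hi (m+1) (Equiv.swap 0 k₀ k))) := by
    intro k
    simp only [Equiv.Perm.mul_apply, piP_lo, piP_hi]
  simp only [this]
  exact Equiv.prod_comp (Equiv.swap 0 k₀) (fun k => B (ν (lo (m+1) k)) (ν (hi (m+1) k)))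

lemma wP_phi (B : Matrix (Fin (2*(m+1))) (Fin (2*(m+1))) ℝ) (τ : Equiv.Perm (Fin (2*(m+1))))
    (h0 : τ (lo (m+1) 0) = lo (m+1) 0) (h1 : τ (hi (m+1) 0) = hi (m+1) 0)
    (hsk : B (hi (m+1) 0) (lo (m+1) 0) = -B (lo (m+1) 0) (hi (m+1) 0)) (b : Bool) :
    wP B (τ * phiP b) = wP B τ := by
  cases b
  · simp [phiP]
  · unfold wP
    rw [_root_.map_mul]
    have hne : lo (m+1) 0 ≠ hi (m+1) 0 := lo_ne_hi 0 0
    rw [show phiP true = Equiv.swap (lo (m+1) 0) (hi (m+1) 0) from rfl,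
      Equiv.Perm.sign_swap hne]
    rw [Fin.prod_univ_succ, Fin.prod_univ_succ]
    have e0 : (τ * Equiv.swap (lo (m+1) 0) (hi (m+1) 0)) (lo (m+1) 0) = hi (m+1) 0 := by
      simp only [Equiv.Perm.mul_apply, Equiv.swap_apply_left]; exact h1
    have e1 : (τ * Equiv.swap (lo (m+1) 0) (hi (m+1) 0)) (hi (m+1) 0) = lo (m+1) 0 := by
      simp only [Equiv.Perm.mul_apply, Equiv.swap_apply_right]; exact h0
    have erest : ∀ k : Fin m,
        B ((τ * Equiv.swap (lo (m+1) 0) (hi (m+1) 0)) (lo (m+1) k.succ))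
          ((τ * Equiv.swap (lo (m+1) 0) (hi (m+1) 0)) (hi (m+1) k.succ))
        = B (τ (lo (m+1) k.succ)) (τ (hi (m+1) k.succ)) := by
      intro k
      have hsucc : (k.succ : Fin (m+1)) ≠ 0 := Fin.succ_ne_zero k
      simp only [Equiv.Perm.mul_apply]
      rw [Equiv.swap_apply_of_ne_of_ne (fun he => hsucc (lo_inj he)) (lo_ne_hi _ _),
        Equiv.swap_apply_of_ne_of_ne (fun he => lo_ne_hi 0 k.succ he.symm)
          (fun he => hsucc (hi_inj he))]
    simp only [erest, e0, e1, h0, h1, hsk]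
    push_cast
    ring

lemma wP_ext (B : Matrix (Fin (2*(m+1))) (Fin (2*(m+1))) ℝ) (σ' : Equiv.Perm (Fin (2*m))) :
    wP B (extP σ') = B (lo (m+1) 0) (hi (m+1) 0) *
      (((Equiv.Perm.sign σ' : ℤ) : ℝ) *
        ∏ k : Fin m, B (shift (σ' (lo m k))) (shift (σ' (hi m k)))) := by
  unfold wP
  rw [sign_extP, Fin.prod_univ_succ]
  have e0 : extP σ' (lo (m+1) 0) = lo (m+1) 0 := by
    rw [← shiftE_inl_z0]; exact extP_inl σ' 0
  have e1 : extP σ' (hi (m+1) 0) = hi (m+1) 0 := by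
    rw [← shiftE_inl_z1]; exact extP_inl σ' 1
  have elo : ∀ k : Fin m, lo (m+1) k.succ = shift (lo m k) := by
    intro k; apply Fin.ext; show 2*(k.1+1) = 2 + 2*k.1; ring
  have ehi : ∀ k : Fin m, hi (m+1) k.succ = shift (hi m k) := by
    intro k; apply Fin.ext; show 2*(k.1+1)+1 = 2 + (2*k.1+1); ring
  have erest : ∀ k : Fin m, B (extP σ' (lo (m+1) k.succ)) (extP σ' (hi (m+1) k.succ))
      = B (shift (σ' (lo m k))) (shift (σ' (hi m k))) := by
    intro k; rw [elo k, ehi k, extP_shift, extP_shift]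
  simp only [erest, e0, e1]
  ring

end PfTheory5

namespace PfTheory6
open PfTheory PfTheory2 PfTheory3 PfTheory4 PfTheory5
variable {m : ℕ}

def FP (p : (Fin (m+1) × Bool) × Equiv.Perm (Fin (2*m))) : Equiv.Perm (Fin (2*(m+1))) :=
  extP p.2 * phiP p.1.2 * piP p.1.1

lemma extP_fix0 (σ' : Equiv.Perm (Fin (2*m))) : extP σ' (lo (m+1) 0) = lo (m+1) 0 := by
  rw [← shiftE_inl_z0]; exact extP_inl σ' 0

lemma extP_fix1 (σ' : Equiv.Perm (Fin (2*m))) : extP σ' (hi (m+1) 0) = hi (m+1) 0 := by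
  rw [← shiftE_inl_z1]; exact extP_inl σ' 1

lemma FP_at_pair (k₀ : Fin (m+1)) (b : Bool) (σ' : Equiv.Perm (Fin (2*m))) :
    FP ((k₀, b), σ') (lo (m+1) k₀) = (if b then hi (m+1) 0 else lo (m+1) 0)
    ∧ FP ((k₀, b), σ') (hi (m+1) k₀) = (if b then lo (m+1) 0 else hi (m+1) 0) := by
  have hl : piP k₀ (lo (m+1) k₀) = lo (m+1) 0 := by rw [piP_lo, Equiv.swap_apply_right]
  have hh : piP k₀ (hi (m+1) k₀) = hi (m+1) 0 := by rw [piP_hi, Equiv.swap_apply_right]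
  constructor
  · show extP σ' (phiP b (piP k₀ (lo (m+1) k₀))) = _
    rw [hl]
    cases b
    · simp [phiP, extP_fix0]
    · simp [phiP, extP_fix1]
  · show extP σ' (phiP b (piP k₀ (hi (m+1) k₀))) = _
    rw [hh]
    cases b
    · simp [phiP, extP_fix1]
    · simp [phiP, extP_fix0]

lemma FP_inj : Function.Injective (FP (m := m)) := by
  rintro ⟨⟨k₀, b⟩, σ'⟩ ⟨⟨l₀, c⟩, τ'⟩ h
  have hbc : b = c := by
    cases b <;> cases c
    · rfl
    · exfalso
      have e1 := (FP_at_pair k₀ false σ').1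
      have e2 := (FP_at_pair l₀ true τ').2
      rw [h] at e1
      simp only [if_true, if_false, Bool.false_eq_true, ite_false, ite_true] at e1 e2
      have heq : lo (m+1) k₀ = hi (m+1) l₀ :=
        (FP ((l₀,true),τ')).injective (e1.trans e2.symm)
      exact lo_ne_hi _ _ heq
    · exfalso
      have e1 := (FP_at_pair k₀ true σ').2
      have e2 := (FP_at_pair l₀ false τ').1
      rw [h] at e1
      simp only [if_true, if_false, Bool.false_eq_true, ite_false, ite_true] at e1 e2
      have heq : hi (m+1) k₀ = lo (m+1) l₀ :=
        (FP ((l₀,false),τ')).injective (e1.trans e2.symm)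
      exact lo_ne_hi _ _ heq.symm
    · rfl
  subst hbc
  have hk : k₀ = l₀ := by
    have e1 := (FP_at_pair k₀ b σ').1
    have e2 := (FP_at_pair l₀ b τ').1
    rw [h] at e1
    exact lo_inj ((FP ((l₀,b),τ')).injective (e1.trans e2.symm))
  subst hk
  have : extP σ' = extP τ' := mul_right_cancel (mul_right_cancel h)
  rw [extP_inj this]

lemma val_lt_two (x : Fin (2*(m+1))) (hx : x.1 < 2) : x = lo (m+1) 0 ∨ x = hi (m+1) 0 := by
  have : x.1 = 0 ∨ x.1 = 1 := by omega
  rcases this with h | h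
  · left; apply Fin.ext; rw [h]; rfl
  · right; apply Fin.ext; rw [h]; rfl

lemma FP_cover (B : Matrix (Fin (2*(m+1))) (Fin (2*(m+1))) ℝ)
    (hcross : ∀ k l : Fin (2*(m+1)), k.1 < 2 → 2 ≤ l.1 → B k l = 0 ∧ B l k = 0)
    (σ : Equiv.Perm (Fin (2*(m+1)))) (hw : wP B σ ≠ 0) : ∃ p, FP p = σ := by
  have hfac : ∀ k, B (σ (lo (m+1) k)) (σ (hi (m+1) k)) ≠ 0 := by
    intro k hk
    apply hw
    unfold wP
    rw [Finset.prod_eq_zero (Finset.mem_univ k) hk, mul_zero]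
  set u := σ⁻¹ (lo (m+1) 0) with hu
  have hσu : σ u = lo (m+1) 0 := by rw [hu]; simp
  rcases lo_or_hi u with h | h
  · -- b = false, k₀ := pr u, σ (lo k₀) = z0
    set k₀ := pr u with hk₀
    have hlo : σ (lo (m+1) k₀) = lo (m+1) 0 := by rw [← h]; exact hσu
    have hhi : σ (hi (m+1) k₀) = hi (m+1) 0 := by
      have hne0 := hfac k₀
      rw [hlo] at hne0
      have hlt : (σ (hi (m+1) k₀)).1 < 2 := by
        by_contra hge
        exact hne0 (hcross _ _ (by show (0:ℕ) < 2; omega) (by omega)).1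
      rcases val_lt_two _ hlt with he | he
      · exact absurd (σ.injective (hlo.trans he.symm)) (fun q => lo_ne_hi k₀ k₀ q)
      · exact he
    have hτ0 : (σ * piP k₀) (lo (m+1) 0) = lo (m+1) 0 := by
      show σ (piP k₀ (lo (m+1) 0)) = _
      rw [piP_lo, Equiv.swap_apply_left, hlo]
    have hτ1 : (σ * piP k₀) (hi (m+1) 0) = hi (m+1) 0 := by
      show σ (piP k₀ (hi (m+1) 0)) = _
      rw [piP_hi, Equiv.swap_apply_left, hhi]
    obtain ⟨σ', hσ'⟩ := extP_surj _ hτ0 hτ1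
    refine ⟨((k₀, false), σ'), ?_⟩
    show extP σ' * phiP false * piP k₀ = σ
    rw [hσ']
    show σ * piP k₀ * phiP false * piP k₀ = σ
    have h1 : phiP (m := m) false = 1 := rfl
    rw [h1, mul_one, mul_assoc, piP_sq, mul_one]
  · -- b = true
    set k₀ := pr u with hk₀
    have hhi : σ (hi (m+1) k₀) = lo (m+1) 0 := by rw [← h]; exact hσu
    have hlo : σ (lo (m+1) k₀) = hi (m+1) 0 := by
      have hne0 := hfac k₀
      rw [hhi] at hne0
      have hlt : (σ (lo (m+1) k₀)).1 < 2 := by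
        by_contra hge
        exact hne0 (hcross _ _ (by show (0:ℕ) < 2; omega) (by omega)).2
      rcases val_lt_two _ hlt with he | he
      · exact absurd (σ.injective (he.trans hhi.symm)) (fun q => lo_ne_hi k₀ k₀ q)
      · exact he
    have hτ0 : (σ * (piP k₀ * phiP (m := m) true)) (lo (m+1) 0) = lo (m+1) 0 := by
      show σ (piP k₀ (phiP true (lo (m+1) 0))) = _
      show σ (piP k₀ (Equiv.swap (lo (m+1) 0) (hi (m+1) 0) (lo (m+1) 0))) = _
      rw [Equiv.swap_apply_left, piP_hi, Equiv.swap_apply_left, hhi]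
    have hτ1 : (σ * (piP k₀ * phiP (m := m) true)) (hi (m+1) 0) = hi (m+1) 0 := by
      show σ (piP k₀ (Equiv.swap (lo (m+1) 0) (hi (m+1) 0) (hi (m+1) 0))) = _
      rw [Equiv.swap_apply_right, piP_lo, Equiv.swap_apply_left, hlo]
    obtain ⟨σ', hσ'⟩ := extP_surj _ hτ0 hτ1
    refine ⟨((k₀, true), σ'), ?_⟩
    show extP σ' * phiP true * piP k₀ = σ
    rw [hσ']
    show σ * (piP k₀ * phiP (m := m) true) * phiP true * piP k₀ = σ
    simp only [mul_assoc]
    rw [phiP_cancel, piP_sq, mul_one]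

end PfTheory6

namespace PfTheory7
open PfTheory PfTheory2 PfTheory3 PfTheory4 PfTheory5 PfTheory6
variable {m : ℕ}

lemma pf_reduce (B : Matrix (Fin (2*(m+1))) (Fin (2*(m+1))) ℝ)
    (hcross : ∀ k l : Fin (2*(m+1)), k.1 < 2 → 2 ≤ l.1 → B k l = 0 ∧ B l k = 0)
    (hsk : B (hi (m+1) 0) (lo (m+1) 0) = -B (lo (m+1) 0) (hi (m+1) 0)) :
    pf (m+1) B = B (lo (m+1) 0) (hi (m+1) 0) *
      pf m (Matrix.of fun i j => B (shift i) (shift j)) := by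
  set C : Matrix (Fin (2*m)) (Fin (2*m)) ℝ := Matrix.of fun i j => B (shift i) (shift j) with hC
  have hwF : ∀ p : (Fin (m+1) × Bool) × Equiv.Perm (Fin (2*m)), wP B (FP p) =
      B (lo (m+1) 0) (hi (m+1) 0) * (((Equiv.Perm.sign p.2 : ℤ) : ℝ) *
        ∏ k : Fin m, C (p.2 (lo m k)) (p.2 (hi m k))) := by
    rintro ⟨⟨k₀, b⟩, σ'⟩
    show wP B (extP σ' * phiP b * piP k₀) = _
    rw [wP_pi, wP_phi _ _ (extP_fix0 σ') (extP_fix1 σ') hsk, wP_ext]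
    rfl
  have hsum : ∑ σ : Equiv.Perm (Fin (2*(m+1))), wP B σ
      = (2*(m+1) : ℝ) * (B (lo (m+1) 0) (hi (m+1) 0) *
          ∑ σ' : Equiv.Perm (Fin (2*m)), ((Equiv.Perm.sign σ' : ℤ) : ℝ) *
            ∏ k : Fin m, C (σ' (lo m k)) (σ' (hi m k))) := by
    have hzero : ∀ σ ∈ (Finset.univ : Finset (Equiv.Perm (Fin (2*(m+1))))),
        σ ∉ Finset.univ.image FP → wP B σ = 0 := by
      intro σ _ hσ
      by_contra hw
      obtain ⟨p, hp⟩ := FP_cover B hcross σ hw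
      exact hσ (Finset.mem_image.mpr ⟨p, Finset.mem_univ p, hp⟩)
    rw [← Finset.sum_subset (Finset.subset_univ _) hzero,
      Finset.sum_image (fun x _ y _ h => FP_inj h)]
    simp only [hwF]
    rw [Fintype.sum_prod_type]
    have hconst : ∑ x : Fin (m+1) × Bool, (∑ y : Equiv.Perm (Fin (2*m)),
        B (lo (m+1) 0) (hi (m+1) 0) * (((Equiv.Perm.sign (x, y).2 : ℤ) : ℝ) *
          ∏ k : Fin m, C ((x, y).2 (lo m k)) ((x, y).2 (hi m k))))
        = (Fintype.card (Fin (m+1) × Bool)) •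
          (B (lo (m+1) 0) (hi (m+1) 0) * ∑ σ' : Equiv.Perm (Fin (2*m)),
            ((Equiv.Perm.sign σ' : ℤ) : ℝ) * ∏ k : Fin m, C (σ' (lo m k)) (σ' (hi m k))) := by
      rw [← Finset.card_univ, ← Finset.sum_const]
      apply Finset.sum_congr rfl
      intro x _
      rw [← Finset.mul_sum]
    rw [hconst]
    simp only [smul_eq_mul, Fintype.card_prod, Fintype.card_fin, Fintype.card_bool]
    push_cast
    ring
  have hpf : pf (m+1) B = ((2^(m+1) * (m+1).factorial : ℕ) : ℝ)⁻¹ * ∑ σ, wP B σ := rfl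
  have hpfC : pf m C = ((2^m * m.factorial : ℕ) : ℝ)⁻¹ *
      ∑ σ' : Equiv.Perm (Fin (2*m)), ((Equiv.Perm.sign σ' : ℤ) : ℝ) *
        ∏ k : Fin m, C (σ' (lo m k)) (σ' (hi m k)) := rfl
  have hc : ((2^(m+1) * (m+1).factorial : ℕ) : ℝ) = (2*(m+1) : ℝ) * ((2^m * m.factorial : ℕ) : ℝ) := by
    push_cast [Nat.factorial_succ, pow_succ]
    ring
  have h1 : ((2^m * m.factorial : ℕ) : ℝ) ≠ 0 := by positivity
  have h2 : (2*(m+1) : ℝ) ≠ 0 := by positivity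
  rw [hpf, hsum, hc, hpfC]
  field_simp

end PfTheory7

namespace PfTheory8
open PfTheory PfTheory2 PfTheory3 PfTheory4 PfTheory5 PfTheory6 PfTheory7
variable {m : ℕ}

lemma tstep_apply (A : Matrix (Fin (2*m)) (Fin (2*m)) ℝ) (i j : Fin (2*m)) (c : ℝ) (k l : Fin (2*m)) :
    tstep A i j c k l = A k l + (if k = i then c * A j l else 0) + (if l = i then c * A k j else 0) := rfl

lemma skew_diag {A : Matrix (Fin (2*m)) (Fin (2*m)) ℝ} (hA : ∀ k l, A l k = -A k l) (k : Fin (2*m)) :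
    A k k = 0 := by have := hA k k; linarith

lemma clearing (B₀ : Matrix (Fin (2*(m+1))) (Fin (2*(m+1))) ℝ)
    (hskew : ∀ k l, B₀ l k = -B₀ k l) (ha : B₀ (lo (m+1) 0) (hi (m+1) 0) ≠ 0) (M : ℕ) :
    ∃ B : Matrix (Fin (2*(m+1))) (Fin (2*(m+1))) ℝ, (∀ k l, B l k = -B k l) ∧
      B.det = B₀.det ∧ pf (m+1) B = pf (m+1) B₀ ∧
      B (lo (m+1) 0) (hi (m+1) 0) = B₀ (lo (m+1) 0) (hi (m+1) 0) ∧
      (∀ l : Fin (2*(m+1)), 2 ≤ l.1 → l.1 < M → B (lo (m+1) 0) l = 0 ∧ B (hi (m+1) 0) l = 0) := by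
  induction M with
  | zero => exact ⟨B₀, hskew, rfl, rfl, rfl, fun l _ h => absurd h (by omega)⟩
  | succ M ihM =>
    obtain ⟨B, hBskew, hBdet, hBpf, hB01, hBclear⟩ := ihM
    by_cases hM : 2 ≤ M ∧ M < 2*(m+1)
    · set z0 := lo (m+1) 0 with hz0
      set z1 := hi (m+1) 0 with hz1
      set i : Fin (2*(m+1)) := ⟨M, hM.2⟩ with hi_def
      have hz0v : z0.1 = 0 := rfl
      have hz1v : z1.1 = 1 := rfl
      have hiz0 : i ≠ z0 := by
        intro h; have := congrArg Fin.val h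
        rw [hz0v] at this; simp only [hi_def] at this; omega
      have hiz1 : i ≠ z1 := by
        intro h; have := congrArg Fin.val h
        rw [hz1v] at this; simp only [hi_def] at this; omega
      have hBa : B z0 z1 ≠ 0 := by rw [hB01]; exact ha
      set c1 : ℝ := -(B z0 i) / B z0 z1 with hc1
      set B1 := tstep B i z1 c1 with hB1
      have hB1skew : ∀ k l, B1 l k = -B1 k l := tstep_skew hBskew i z1 c1
      set c2 : ℝ := -(B1 z1 i) / B1 z1 z0 with hc2
      set B2 := tstep B1 i z0 c2 with hB2
      have hB2skew : ∀ k l, B2 l k = -B2 k l := tstep_skew hB1skew i z0 c2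
      -- entry computations
      have hB1_ne_row : ∀ k l : Fin (2*(m+1)), l ≠ i → k ≠ i → B1 k l = B k l := by
        intro k l hl hk
        rw [hB1, tstep_apply, if_neg hk, if_neg hl]; ring
      have hB2_ne_row : ∀ k l : Fin (2*(m+1)), l ≠ i → k ≠ i → B2 k l = B1 k l := by
        intro k l hl hk
        rw [hB2, tstep_apply, if_neg hk, if_neg hl]; ring
      have hB101 : B1 z0 z1 = B z0 z1 := hB1_ne_row _ _ hiz1.symm hiz0.symm
      have hB201 : B2 z0 z1 = B1 z0 z1 := hB2_ne_row _ _ hiz1.symm hiz0.symm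
      have hB1z0i : B1 z0 i = 0 := by
        rw [hB1, tstep_apply, if_neg hiz0.symm, if_pos rfl, hc1]
        field_simp
        ring
      have hB1z1i : B1 z1 i = B z1 i := by
        rw [hB1, tstep_apply, if_neg hiz1.symm, if_pos rfl, skew_diag hBskew, mul_zero]; ring
      have hB1z1z0 : B1 z1 z0 ≠ 0 := by
        rw [hB1skew z0 z1, hB101]
        simpa using hBa
      have hB2z0i : B2 z0 i = 0 := by
        rw [hB2, tstep_apply, if_neg hiz0.symm, if_pos rfl, skew_diag hB1skew, mul_zero, hB1z0i]
        ring
      have hB2z1i : B2 z1 i = 0 := by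
        rw [hB2, tstep_apply, if_neg hiz1.symm, if_pos rfl, hc2]
        field_simp
        ring
      refine ⟨B2, hB2skew, ?_, ?_, ?_, ?_⟩
      · rw [hB2, det_tstep B1 hiz0 c2 (skew_diag hB1skew z0), hB1,
          det_tstep B hiz1 c1 (skew_diag hBskew z1), hBdet]
      · rw [hB2, pf_tstep B1 hiz0 c2, hB1, pf_tstep B hiz1 c1, hBpf]
      · rw [hB201, hB101, hB01]
      · intro l h2 hlt
        rcases Nat.lt_succ_iff_lt_or_eq.mp hlt with hlt' | heq
        · have hli : l ≠ i := by
            intro h; have := congrArg Fin.val h; simp only [hi_def] at this; omega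
          have h0 := hBclear l h2 hlt'
          rw [hB2_ne_row _ _ hli hiz0.symm, hB2_ne_row _ _ hli hiz1.symm,
            hB1_ne_row _ _ hli hiz0.symm, hB1_ne_row _ _ hli hiz1.symm]
          exact h0
        · have : l = i := by apply Fin.ext; simp only [hi_def]; exact heq
          rw [this]
          exact ⟨hB2z0i, hB2z1i⟩
    · refine ⟨B, hBskew, hBdet, hBpf, hB01, ?_⟩
      intro l h2 hlt
      have : l.1 < M := by have := l.2; omega
      exact hBclear l h2 this

end PfTheory8

namespace PfTheory9
open PfTheory PfTheory2 PfTheory3 PfTheory4 PfTheory5 PfTheory6 PfTheory7 PfTheory8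
variable {m : ℕ}

lemma pf_dim_zero (A : Matrix (Fin (2*0)) (Fin (2*0)) ℝ) : pf 0 A = 1 := by
  haveI : Subsingleton (Equiv.Perm (Fin (2*0))) :=
    ⟨fun a b => Equiv.ext (fun x => (Nat.not_lt_zero x.1 (by simpa using x.2)).elim)⟩
  unfold pf
  rw [Finset.sum_eq_single_of_mem (1 : Equiv.Perm (Fin (2*0))) (Finset.mem_univ _)]
  · simp
  · intro σ _ hσ
    exact absurd (Subsingleton.elim σ 1) hσ

lemma det_block_ne_zero (B : Matrix (Fin (2*(m+1))) (Fin (2*(m+1))) ℝ)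
    (hcross : ∀ k l : Fin (2*(m+1)), k.1 < 2 → 2 ≤ l.1 → B k l = 0 ∧ B l k = 0)
    (hdet : B.det ≠ 0) :
    (Matrix.of fun i j => B (shift i) (shift j) : Matrix (Fin (2*m)) (Fin (2*m)) ℝ).det ≠ 0 := by
  intro hC
  set C : Matrix (Fin (2*m)) (Fin (2*m)) ℝ := Matrix.of fun i j => B (shift i) (shift j) with hCdef
  obtain ⟨v, hv, hCv⟩ := (Matrix.exists_mulVec_eq_zero_iff).mpr hC
  set w : Fin (2*(m+1)) → ℝ := fun k => if h : 2 ≤ k.1 then v ⟨k.1 - 2, by have := k.2; omega⟩ else 0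
    with hw
  have hwshift : ∀ x : Fin (2*m), w (shift x) = v x := by
    intro x
    have h2 : 2 ≤ (shift x).1 := by rw [shift_val]; omega
    rw [hw]
    simp only [dif_pos h2]
    congr 1
    apply Fin.ext
    show (shift x).1 - 2 = x.1
    rw [shift_val]
    omega
  have hwlow : ∀ a : Fin 2, w (shiftE (Sum.inl a)) = 0 := by
    intro a
    have : ¬ 2 ≤ (shiftE (m := m) (Sum.inl a)).1 := by
      rw [shiftE_inl_val]; have := a.2; omega
    rw [hw]; simp only [dif_neg this]
  have hwne : w ≠ 0 := by
    obtain ⟨x, hx⟩ := Function.ne_iff.mp hv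
    apply Function.ne_iff.mpr
    exact ⟨shift x, by rw [hwshift]; simpa using hx⟩
  have hsum : ∀ k : Fin (2*(m+1)), B.mulVec w k = ∑ x : Fin (2*m), B k (shift x) * v x := by
    intro k
    show ∑ l, B k l * w l = _
    rw [← Equiv.sum_comp (shiftE (m := m)) (fun l => B k l * w l), Fintype.sum_sum_type]
    have hzero : ∀ a : Fin 2, B k (shiftE (Sum.inl a)) * w (shiftE (Sum.inl a)) = 0 := by
      intro a; rw [hwlow a, mul_zero]
    simp only [hzero, Finset.sum_const_zero, zero_add]
    apply Finset.sum_congr rfl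
    intro x _
    show B k (shift x) * w (shift x) = B k (shift x) * v x
    rw [hwshift]
  have hBw : B.mulVec w = 0 := by
    funext k
    rw [hsum k]
    by_cases hk : k.1 < 2
    · apply Finset.sum_eq_zero
      intro x _
      rw [(hcross k (shift x) hk (by rw [shift_val]; omega)).1, zero_mul]
    · push_neg at hk
      set x₀ : Fin (2*m) := ⟨k.1 - 2, by have := k.2; omega⟩ with hx₀
      have hkx : k = shift x₀ := by
        apply Fin.ext; rw [shift_val]; simp only [hx₀]; omega
      have : ∑ x : Fin (2*m), B k (shift x) * v x = C.mulVec v x₀ := by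
        rw [hkx]
        apply Finset.sum_congr rfl
        intro x _
        rfl
      rw [this, hCv]
      rfl
  exact hdet (Matrix.exists_mulVec_eq_zero_iff.mp ⟨w, hwne, hBw⟩)

lemma pf_ne_zero : ∀ (n : ℕ) (A : Matrix (Fin (2*n)) (Fin (2*n)) ℝ),
    (∀ k l, A l k = -A k l) → A.det ≠ 0 → pf n A ≠ 0 := by
  intro n
  induction n with
  | zero => intro A _ _; rw [pf_dim_zero]; exact one_ne_zero
  | succ m ih =>
    intro A hskew hdet
    have hrow : ∃ j, A (lo (m+1) 0) j ≠ 0 := by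
      by_contra h
      push_neg at h
      exact hdet (Matrix.det_eq_zero_of_row_eq_zero (lo (m+1) 0) h)
    obtain ⟨j, hj⟩ := hrow
    have hjz0 : j ≠ lo (m+1) 0 := by
      intro h
      rw [h] at hj
      exact hj (skew_diag hskew _)
    set e := Equiv.swap (hi (m+1) 0) j with he
    set A₁ := A.submatrix e e with hA₁
    have hez0 : e (lo (m+1) 0) = lo (m+1) 0 := by
      rw [he]
      exact Equiv.swap_apply_of_ne_of_ne (lo_ne_hi 0 0) (Ne.symm hjz0)
    have hez1 : e (hi (m+1) 0) = j := by rw [he]; exact Equiv.swap_apply_left _ _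
    have hA101 : A₁ (lo (m+1) 0) (hi (m+1) 0) = A (lo (m+1) 0) j := by
      rw [hA₁]; show A (e _) (e _) = _; rw [hez0, hez1]
    have hA₁skew : ∀ k l, A₁ l k = -A₁ k l := fun k l => hskew (e k) (e l)
    have hA₁det : A₁.det ≠ 0 := by
      rw [hA₁, Matrix.det_submatrix_equiv_self]; exact hdet
    obtain ⟨B, hBskew, hBdet, hBpf, hB01, hBclear⟩ :=
      clearing A₁ hA₁skew (by rw [hA101]; exact hj) (2*(m+1))
    have hBdet' : B.det ≠ 0 := by rw [hBdet]; exact hA₁det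
    have hcross : ∀ k l : Fin (2*(m+1)), k.1 < 2 → 2 ≤ l.1 → B k l = 0 ∧ B l k = 0 := by
      intro k l hk hl
      have hl2 : l.1 < 2*(m+1) := l.2
      rcases val_lt_two k hk with rfl | rfl
      · obtain ⟨h1, _⟩ := hBclear l hl hl2
        exact ⟨h1, by rw [hBskew, h1, neg_zero]⟩
      · obtain ⟨_, h2⟩ := hBclear l hl hl2
        exact ⟨h2, by rw [hBskew, h2, neg_zero]⟩
    set C : Matrix (Fin (2*m)) (Fin (2*m)) ℝ := Matrix.of fun i j => B (shift i) (shift j) with hC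
    have hCskew : ∀ k l, C l k = -C k l := fun k l => hBskew (shift k) (shift l)
    have hCdet : C.det ≠ 0 := det_block_ne_zero B hcross hBdet'
    have hCpf : pf m C ≠ 0 := ih C hCskew hCdet
    have hred : pf (m+1) B = B (lo (m+1) 0) (hi (m+1) 0) * pf m C :=
      pf_reduce B hcross (by rw [hBskew])
    have hBpf_ne : pf (m+1) B ≠ 0 := by
      rw [hred]
      apply mul_ne_zero _ hCpf
      rw [hB01, hA101]
      exact hj
    rw [hBpf] at hBpf_ne
    intro hpfA
    apply hBpf_ne
    rw [hA₁, pf_submatrix, hpfA, mul_zero]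

end PfTheory9

/-- The direct sum of `n` copies of `[[0,1],[-1,0]]`, as a 2n×2n real matrix. -/
def Jpos (n : ℕ) : Matrix (Fin (2*n)) (Fin (2*n)) ℝ :=
  Matrix.of fun i j =>
    if i.1 % 2 = 0 ∧ j.1 = i.1 + 1 then 1
    else if j.1 % 2 = 0 ∧ i.1 = j.1 + 1 then -1 else 0

/-- Same as `Jpos` but with the first 2×2 block negated. -/
def Jneg (n : ℕ) : Matrix (Fin (2*n)) (Fin (2*n)) ℝ :=
  Matrix.of fun i j =>
    if i.1 < 2 ∧ j.1 < 2 then -(Jpos n i j) else Jpos n i j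

namespace PfFinal
open PfTheory PfTheory2 PfTheory3 PfTheory4 PfTheory5 PfTheory6 PfTheory7 PfTheory8 PfTheory9

lemma jpos_apply (n : ℕ) (i j : Fin (2*n)) : Jpos n i j =
    if i.1 % 2 = 0 ∧ j.1 = i.1 + 1 then 1
    else if j.1 % 2 = 0 ∧ i.1 = j.1 + 1 then -1 else 0 := rfl

lemma jneg_apply (n : ℕ) (i j : Fin (2*n)) : Jneg n i j =
    if i.1 < 2 ∧ j.1 < 2 then -(Jpos n i j) else Jpos n i j := rfl

lemma jpos_skew (n : ℕ) : ∀ k l, Jpos n l k = -Jpos n k l := by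
  intro k l
  rw [jpos_apply, jpos_apply]
  by_cases h1 : k.1 % 2 = 0 ∧ l.1 = k.1 + 1 <;> by_cases h2 : l.1 % 2 = 0 ∧ k.1 = l.1 + 1
  · exfalso; omega
  · rw [if_neg h2, if_pos h1, if_pos h1]
  · rw [if_pos h2, if_neg h1, if_pos h2]; norm_num
  · rw [if_neg h2, if_neg h1, if_neg h1, if_neg h2]; norm_num

lemma jpos_lo_hi (m : ℕ) : Jpos (m+1) (lo (m+1) 0) (hi (m+1) 0) = 1 := by
  rw [jpos_apply]
  have h1 : (lo (m+1) 0).1 = 0 := rfl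
  have h2 : (hi (m+1) 0).1 = 1 := rfl
  rw [if_pos (by omega)]

lemma jpos_cross (m : ℕ) : ∀ k l : Fin (2*(m+1)), k.1 < 2 → 2 ≤ l.1 →
    Jpos (m+1) k l = 0 ∧ Jpos (m+1) l k = 0 := by
  intro k l hk hl
  rw [jpos_apply, jpos_apply]
  constructor
  · rw [if_neg (by omega), if_neg (by omega)]
  · rw [if_neg (by omega), if_neg (by omega)]

lemma jpos_block (m : ℕ) :
    (Matrix.of fun i j => Jpos (m+1) (shift i) (shift j) : Matrix (Fin (2*m)) (Fin (2*m)) ℝ)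
      = Jpos m := by
  ext i j
  show Jpos (m+1) (shift i) (shift j) = Jpos m i j
  rw [jpos_apply, jpos_apply, shift_val, shift_val]
  have h1 : ((2 + i.1) % 2 = 0 ∧ 2 + j.1 = (2 + i.1) + 1) ↔ (i.1 % 2 = 0 ∧ j.1 = i.1 + 1) := by
    omega
  have h2 : ((2 + j.1) % 2 = 0 ∧ 2 + i.1 = (2 + j.1) + 1) ↔ (j.1 % 2 = 0 ∧ i.1 = j.1 + 1) := by
    omega
  rw [if_congr h1 rfl (if_congr h2 rfl rfl)]

lemma pf_jpos : ∀ n : ℕ, pf n (Jpos n) = 1 := by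
  intro n
  induction n with
  | zero => exact pf_dim_zero _
  | succ m ih =>
    rw [pf_reduce (Jpos (m+1)) (jpos_cross m) (by rw [jpos_skew]), jpos_block, ih, jpos_lo_hi,
      one_mul]

lemma pf_jneg (m : ℕ) : pf (m+1) (Jneg (m+1)) = -1 := by
  have hslot : pf (m+1) (Jneg (m+1)) = pf (m+1) (Jpos (m+1)) + (-2) * pf (m+1) (Jpos (m+1)) := by
    apply pf_slot (lo (m+1) 0) (-2)
    · intro k l hk hl
      refine ⟨rfl, ?_⟩
      rw [jneg_apply]
      by_cases h : k.1 < 2 ∧ l.1 < 2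
      · rw [if_pos h]
        have hk1 : k.1 = 1 := by
          have : (lo (m+1) 0).1 = 0 := rfl
          have hne : k.1 ≠ 0 := fun hv => hk (Fin.ext (by omega))
          omega
        have hl1 : l.1 = 1 := by
          have : (lo (m+1) 0).1 = 0 := rfl
          have hne : l.1 ≠ 0 := fun hv => hl (Fin.ext (by omega))
          omega
        rw [jpos_apply, if_neg (by omega), if_neg (by omega)]
        norm_num
      · rw [if_neg h]
    · intro l hl
      rw [jneg_apply]
      have h0 : (lo (m+1) 0).1 = 0 := rfl
      by_cases h : l.1 < 2
      · have hl1 : l.1 = 1 := by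
          have hne : l.1 ≠ 0 := fun hv => hl (Fin.ext (by omega))
          omega
        rw [if_pos (by omega)]
        ring
      · rw [if_neg (by omega)]
        have : Jpos (m+1) (lo (m+1) 0) l = 0 := by
          rw [jpos_apply, if_neg (by omega), if_neg (by omega)]
        rw [this]
        ring
    · intro k hk
      rw [jneg_apply]
      have h0 : (lo (m+1) 0).1 = 0 := rfl
      by_cases h : k.1 < 2
      · have hk1 : k.1 = 1 := by
          have hne : k.1 ≠ 0 := fun hv => hk (Fin.ext (by omega))
          omega
        rw [if_pos (by omega)]
        ring
      · rw [if_neg (by omega)]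
        have : Jpos (m+1) k (lo (m+1) 0) = 0 := by
          rw [jpos_apply, if_neg (by omega), if_neg (by omega)]
        rw [this]
        ring
  rw [hslot, pf_jpos]
  ring

lemma pf_continuous (n : ℕ) :
    Continuous fun A : Matrix (Fin (2*n)) (Fin (2*n)) ℝ => pf n A := by
  unfold pf
  apply Continuous.mul continuous_const
  apply continuous_finset_sum
  intro σ _
  apply Continuous.mul continuous_const
  apply continuous_finset_prod
  intro k _
  exact (continuous_apply _).comp (continuous_apply _)

end PfFinal

theorem Jpos_not_joined_Jneg (n : ℕ) (hn : 0 < n) :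
    ¬ JoinedIn {X : Matrix (Fin (2*n)) (Fin (2*n)) ℝ | Xᵀ = -X ∧ X.det ≠ 0}
      (Jpos n) (Jneg n) := by
  obtain ⟨m, rfl⟩ : ∃ m, n = m + 1 := ⟨n - 1, by omega⟩
  rintro ⟨γ, hγ⟩
  set f : unitInterval → ℝ := fun t => PfTheory.pf (m+1) (γ t) with hf
  have hfc : Continuous f := (PfFinal.pf_continuous (m+1)).comp γ.continuous
  have hne : ∀ t, f t ≠ 0 := by
    intro t
    have hmem := hγ t
    apply PfTheory9.pf_ne_zero (m+1) (γ t) _ hmem.2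
    intro k l
    have := congrFun (congrFun hmem.1 k) l
    rwa [Matrix.transpose_apply, Matrix.neg_apply] at this
  have h0 : f 0 = 1 := by
    rw [hf]; simp only [Path.source]; exact PfFinal.pf_jpos (m+1)
  have h1 : f 1 = -1 := by
    rw [hf]; simp only [Path.target]; exact PfFinal.pf_jneg m
  have hmem0 : (0:ℝ) ∈ Set.Icc (f 1) (f 0) := by rw [h0, h1]; norm_num
  obtain ⟨t, ht⟩ := intermediate_value_univ (1 : unitInterval) (0 : unitInterval) hfc hmem0
  exact hne t ht
end

section
/- The set of invertible real skew-symmetric 2n-by-2n matrices has exactly two path-components, distinguished by the sign of the Pfaffian: X and Y lie in the same component if and only if sign(Pf(X)) = sign(Pf(Y)). -/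
open Matrix

/-- `Pf` is the Pfaffian on 2n×2n real matrices: a polynomial (with integer
coefficients) in the matrix entries, whose square is the determinant on
skew-symmetric matrices, normalized by `Pf (Jpos n) = 1`. -/
def IsPfaffian (n : ℕ) (Pf : Matrix (Fin (2*n)) (Fin (2*n)) ℝ → ℝ) : Prop :=
  (∃ p : MvPolynomial (Fin (2*n) × Fin (2*n)) ℤ,
      ∀ X : Matrix (Fin (2*n)) (Fin (2*n)) ℝ,
        Pf X = MvPolynomial.aeval (fun ij => X ij.1 ij.2) p) ∧
  (∀ X : Matrix (Fin (2*n)) (Fin (2*n)) ℝ, Xᵀ = -X → (Pf X)^2 = X.det) ∧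
  Pf (Jpos n) = 1

variable {N : ℕ}

/-- The set of invertible matrices. -/
def GLset (N : ℕ) : Set (Matrix (Fin N) (Fin N) ℝ) := {M | IsUnit M.det}

lemma mem_GLset {M : Matrix (Fin N) (Fin N) ℝ} : M ∈ GLset N ↔ IsUnit M.det := Iff.rfl

lemma JoinedIn.matrixMul {A B C D : Matrix (Fin N) (Fin N) ℝ}
    (h1 : JoinedIn (GLset N) A B) (h2 : JoinedIn (GLset N) C D) :
    JoinedIn (GLset N) (A * C) (B * D) := by
  obtain ⟨γ, hγ⟩ := h1
  obtain ⟨η, hη⟩ := h2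
  refine ⟨⟨⟨fun t => γ t * η t, γ.continuous.matrix_mul η.continuous⟩, by simp, by simp⟩, ?_⟩
  intro t
  have := (hγ t).mul (hη t)
  simpa [mem_GLset, Matrix.det_mul] using this

lemma transvection_joinedIn_one (i j : Fin N) (hij : i ≠ j) (c : ℝ) :
    JoinedIn (GLset N) (Matrix.transvection i j c) 1 := by
  refine ⟨⟨⟨fun t => Matrix.transvection i j ((1 - (t : ℝ)) * c), ?_⟩, by simp, by simp⟩, ?_⟩
  · apply continuous_matrix
    intro a b
    simp only [Matrix.transvection, Matrix.add_apply, Matrix.single]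
    by_cases h : i = a ∧ j = b
    · simp only [h, of_apply, if_pos, and_self]
      fun_prop
    · simp only [of_apply, if_neg h]
      fun_prop
  · intro t
    simp [mem_GLset, Matrix.det_transvection_of_ne i j hij]

lemma transvection_list_joinedIn_one (L : List (Matrix.TransvectionStruct (Fin N) ℝ)) :
    JoinedIn (GLset N) ((L.map Matrix.TransvectionStruct.toMatrix).prod) 1 := by
  induction L with
  | nil => simpa using JoinedIn.refl (x := (1 : Matrix (Fin N) (Fin N) ℝ)) (by simp [mem_GLset])
  | cons t L ih =>
      have h1 := transvection_joinedIn_one t.i t.j t.hij t.c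
      have := h1.matrixMul ih
      simpa [Matrix.TransvectionStruct.toMatrix] using this

lemma convex_combo_ne_zero (t : ℝ) (h0 : 0 ≤ t) (h1 : t ≤ 1) (d : ℝ) (hd : d ≠ 0) :
    (1 - t) * d + t * (if 0 < d then 1 else -1) ≠ 0 := by
  rcases lt_or_gt_of_ne hd with hneg | hpos
  · have : (1 - t) * d + t * (if 0 < d then 1 else -1) < 0 := by
      rw [if_neg (by linarith)]
      rcases eq_or_lt_of_le h0 with rfl | ht
      · simpa using hneg
      · nlinarith
    linarith
  · have : 0 < (1 - t) * d + t * (if 0 < d then 1 else -1) := by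
      rw [if_pos hpos]
      rcases eq_or_lt_of_le h0 with rfl | ht
      · simpa using hpos
      · nlinarith
    linarith

lemma diagonal_joinedIn_sign (D : Fin N → ℝ) (hD : ∀ i, D i ≠ 0) :
    JoinedIn (GLset N) (Matrix.diagonal D)
      (Matrix.diagonal fun i => if 0 < D i then (1:ℝ) else -1) := by
  refine ⟨⟨⟨fun t => Matrix.diagonal
      (fun i => (1 - (t:ℝ)) * D i + (t:ℝ) * (if 0 < D i then 1 else -1)), ?_⟩, ?_, ?_⟩, ?_⟩
  · apply continuous_matrix
    intro a b
    by_cases h : a = b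
    · subst h
      simp only [Matrix.diagonal_apply_eq]
      fun_prop
    · simp only [Matrix.diagonal_apply_ne _ h]
      fun_prop
  · simp
  · norm_num
  · intro t
    show IsUnit (Matrix.diagonal _).det
    rw [Matrix.det_diagonal]
    refine IsUnit.mk0 _ (Finset.prod_ne_zero_iff.2 fun i _ => ?_)
    exact convex_combo_ne_zero t t.2.1 t.2.2 (D i) (hD i)

lemma pairneg_eq (i j : Fin N) (hij : i ≠ j) :
    (Matrix.transvection i j (-1) * (Matrix.transvection j i 1 * Matrix.transvection i j (-1))) ^ 2
      = Matrix.diagonal (fun k => if k = i ∨ k = j then (-1:ℝ) else 1) := by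
  set A := Matrix.single i j (1:ℝ) with hAdef
  set B := Matrix.single j i (1:ℝ) with hBdef
  set C := Matrix.single i i (1:ℝ) with hCdef
  set D := Matrix.single j j (1:ℝ) with hDdef
  have hT1 : Matrix.transvection i j (-1:ℝ) = 1 - A := by
    rw [Matrix.transvection, hAdef, sub_eq_add_neg]
    congr 1
    have := Matrix.smul_single (-1 : ℝ) i j (1:ℝ)
    rw [smul_eq_mul] at this
    norm_num at this
    exact this.symm
  have hT2 : Matrix.transvection j i (1:ℝ) = 1 + B := by
    rw [Matrix.transvection]
  have hAB : A * B = C := by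
    rw [hAdef, hBdef, hCdef, Matrix.single_mul_single_same]; norm_num
  have hBA : B * A = D := by
    rw [hAdef, hBdef, hDdef, Matrix.single_mul_single_same]; norm_num
  have hCA : C * A = A := by
    rw [hAdef, hCdef, Matrix.single_mul_single_same]; norm_num
  have hCC : C * C = C := by
    rw [hCdef, Matrix.single_mul_single_same]; norm_num
  have hDB : D * B = B := by
    rw [hBdef, hDdef, Matrix.single_mul_single_same]; norm_num
  have hDD : D * D = D := by
    rw [hDdef, Matrix.single_mul_single_same]; norm_num
  have hAD : A * D = A := by
    rw [hAdef, hDdef, Matrix.single_mul_single_same]; norm_num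
  have hBC : B * C = B := by
    rw [hBdef, hCdef, Matrix.single_mul_single_same]; norm_num
  have hAA : A * A = 0 := Matrix.single_mul_single_of_ne _ _ _ _ hij.symm _
  have hAC : A * C = 0 := Matrix.single_mul_single_of_ne _ _ _ _ hij.symm _
  have hBB : B * B = 0 := Matrix.single_mul_single_of_ne _ _ _ _ hij _
  have hBD : B * D = 0 := Matrix.single_mul_single_of_ne _ _ _ _ hij _
  have hCB : C * B = 0 := Matrix.single_mul_single_of_ne _ _ _ _ hij _
  have hCD : C * D = 0 := Matrix.single_mul_single_of_ne _ _ _ _ hij _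
  have hDA : D * A = 0 := Matrix.single_mul_single_of_ne _ _ _ _ hij.symm _
  have hDC : D * C = 0 := Matrix.single_mul_single_of_ne _ _ _ _ hij.symm _
  have step1 : (1 + B) * (1 - A) = 1 + B - A - D := by
    simp only [mul_sub, sub_mul, mul_add, add_mul, mul_one, one_mul, hBA]
    abel
  have step2 : (1 - A) * (1 + B - A - D) = 1 - A + B - C - D := by
    simp only [mul_sub, sub_mul, mul_add, add_mul, mul_one, one_mul, hAB, hAA, hAD]
    abel
  have step3 : (1 - A + B - C - D) * (1 - A + B - C - D)
      = 1 - (C + C) - (D + D) := by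
    simp only [mul_sub, sub_mul, mul_add, add_mul, mul_one, one_mul, hAA, hAB, hAC, hAD,
      hBA, hBB, hBC, hBD, hCA, hCB, hCC, hCD, hDA, hDB, hDC, hDD]
    abel
  have entry : ∀ (u a b : Fin N), Matrix.single u u (1:ℝ) a b
      = if a = u ∧ b = u then 1 else 0 := by
    intro u a b
    by_cases h : a = u ∧ b = u
    · obtain ⟨rfl, rfl⟩ := h
      rw [if_pos (And.intro rfl rfl)]
      exact Matrix.single_apply_same _ _ _
    · rw [if_neg h]
      exact Matrix.single_apply_of_ne _ _ _ _ _ (by tauto)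
  have hfinal : (1 : Matrix (Fin N) (Fin N) ℝ) - (C + C) - (D + D)
      = Matrix.diagonal (fun k => if k = i ∨ k = j then (-1:ℝ) else 1) := by
    ext a b
    simp only [Matrix.sub_apply, Matrix.add_apply, hCdef, hDdef, entry, Matrix.diagonal,
      Matrix.one_apply, Matrix.of_apply]
    rcases eq_or_ne a b with rfl | hab
    · by_cases hai : a = i
      · by_cases haj : a = j
        · exact absurd (hai.symm.trans haj) hij
        · norm_num [hai, hij]
      · by_cases haj : a = j
        · norm_num [hai, haj, hij.symm]
        · norm_num [hai, haj]
    · have h1 : ¬(a = i ∧ b = i) := by rintro ⟨rfl, rfl⟩; exact hab rfl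
      have h2 : ¬(a = j ∧ b = j) := by rintro ⟨rfl, rfl⟩; exact hab rfl
      rw [if_neg hab, if_neg h1, if_neg h2, if_neg hab]
      norm_num
  rw [hT1, hT2, step1, step2, pow_two, step3, hfinal]

/-- diagonal with a `-1` at one spot. -/
def Dneg (a : Fin N) : Matrix (Fin N) (Fin N) ℝ :=
  Matrix.diagonal (fun k => if k = a then -1 else 1)

lemma Dneg_mem (a : Fin N) : Dneg a ∈ GLset N := by
  rw [mem_GLset, Dneg, Matrix.det_diagonal]
  refine IsUnit.mk0 _ (Finset.prod_ne_zero_iff.2 fun i _ => ?_)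
  split_ifs <;> norm_num

lemma pairdiag_joinedIn_one (i j : Fin N) (hij : i ≠ j) :
    JoinedIn (GLset N)
      (Matrix.diagonal (fun k => if k = i ∨ k = j then (-1:ℝ) else 1)) 1 := by
  rw [← pairneg_eq i j hij]
  have h1 := transvection_joinedIn_one i j hij (-1)
  have h2 := transvection_joinedIn_one j i hij.symm 1
  have hS := h1.matrixMul (h2.matrixMul h1)
  have := hS.matrixMul hS
  simpa [pow_two] using this

lemma Dneg_joinedIn (a b : Fin N) : JoinedIn (GLset N) (Dneg a) (Dneg b) := by
  rcases eq_or_ne a b with rfl | hab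
  · exact JoinedIn.refl (Dneg_mem a)
  · have key : Dneg a = Dneg b * Matrix.diagonal (fun k => if k = b ∨ k = a then (-1:ℝ) else 1) := by
      rw [Dneg, Dneg, Matrix.diagonal_mul_diagonal]
      refine congrArg Matrix.diagonal (funext fun k => ?_)
      rcases eq_or_ne k a with rfl | hka
      · simp [hab, hab.symm]
      · rcases eq_or_ne k b with rfl | hkb
        · simp [hka, hka.symm]
        · simp [hka, hkb]
    rw [key]
    have := (JoinedIn.refl (Dneg_mem b)).matrixMul (pairdiag_joinedIn_one b a (Ne.symm hab))
    simpa using this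

lemma signdiag_joinedIn (a : Fin N) (s : Finset (Fin N)) :
    JoinedIn (GLset N)
      (Matrix.diagonal (fun i => if i ∈ s then (-1:ℝ) else 1)) ((Dneg a) ^ s.card) := by
  classical
  induction s using Finset.induction_on with
  | empty =>
      simpa using JoinedIn.refl (x := (1 : Matrix (Fin N) (Fin N) ℝ)) (by simp [mem_GLset])
  | @insert c s hc ih =>
      have key : (Matrix.diagonal (fun i => if i ∈ insert c s then (-1:ℝ) else 1))
          = Dneg c * Matrix.diagonal (fun i => if i ∈ s then (-1:ℝ) else 1) := by
        rw [Dneg, Matrix.diagonal_mul_diagonal]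
        refine congrArg Matrix.diagonal (funext fun k => ?_)
        rcases eq_or_ne k c with rfl | hkc
        · simp [hc]
        · simp [hkc]
      rw [key, Finset.card_insert_of_notMem hc, pow_succ']
      exact (Dneg_joinedIn c a).matrixMul ih

lemma Dneg_pow (a : Fin N) (k : ℕ) : (Dneg a) ^ k = 1 ∨ (Dneg a) ^ k = Dneg a := by
  have hsq : (Dneg a) ^ 2 = 1 := by
    rw [Dneg, pow_two, Matrix.diagonal_mul_diagonal, ← Matrix.diagonal_one]
    refine congrArg Matrix.diagonal (funext fun k => ?_)
    split_ifs <;> norm_num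
  rcases Nat.even_or_odd k with ⟨m, rfl⟩ | ⟨m, rfl⟩
  · left
    rw [show m + m = 2 * m by ring, pow_mul, hsq, one_pow]
  · right
    rw [pow_succ, pow_mul, hsq, one_pow, one_mul]

lemma gl_joinedIn (a : Fin N) (M : Matrix (Fin N) (Fin N) ℝ) (hM : IsUnit M.det) :
    JoinedIn (GLset N) M 1 ∨ JoinedIn (GLset N) M (Dneg a) := by
  obtain ⟨L, L', D, hLDL⟩ := Matrix.Pivot.exists_list_transvec_mul_mul_list_transvec_eq_diagonal M
  have hP := transvection_list_joinedIn_one (N := N) L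
  have hQ := transvection_list_joinedIn_one (N := N) L'
  have hMref : JoinedIn (GLset N) M M := JoinedIn.refl hM
  have hjoin : JoinedIn (GLset N) (Matrix.diagonal D) M := by
    have := (hP.matrixMul hMref).matrixMul hQ
    rw [hLDL] at this
    simpa using this
  have hDunit : ∀ i, D i ≠ 0 := by
    intro i hi
    have hdet : (Matrix.diagonal D).det = 0 := by
      rw [Matrix.det_diagonal]
      exact Finset.prod_eq_zero (Finset.mem_univ i) hi
    have : IsUnit (Matrix.diagonal D).det := by
      rw [← hLDL]
      simp only [Matrix.det_mul]
      have hdl : ∀ (L : List (Matrix.TransvectionStruct (Fin N) ℝ)),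
          ((L.map Matrix.TransvectionStruct.toMatrix).prod).det = 1 := by
        intro L
        induction L with
        | nil => simp
        | cons t L ih =>
            simp [Matrix.det_mul, ih, Matrix.TransvectionStruct.det _]
      rw [hdl L, hdl L']
      simpa using hM
    rw [hdet] at this
    simpa using this
  have h1 := diagonal_joinedIn_sign D hDunit
  set s : Finset (Fin N) := Finset.univ.filter (fun i => ¬ 0 < D i) with hs
  have hsgn : (Matrix.diagonal fun i => if 0 < D i then (1:ℝ) else -1)
      = Matrix.diagonal (fun i => if i ∈ s then (-1:ℝ) else 1) := by
    refine congrArg Matrix.diagonal (funext fun i => ?_)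
    by_cases h : 0 < D i
    · simp [hs, h, not_le.2 h]
    · simp [hs, h, not_lt.1 h]

  have h2 := signdiag_joinedIn a s
  have hMtoD : JoinedIn (GLset N) M ((Dneg a) ^ s.card) := by
    refine (hjoin.symm).trans ?_
    rw [← hsgn] at h2
    exact h1.trans h2
  rcases Dneg_pow a s.card with h | h
  · left; rw [h] at hMtoD; exact hMtoD
  · right; rw [h] at hMtoD; exact hMtoD

lemma skew_diag {k : ℕ} (X : Matrix (Fin k) (Fin k) ℝ) (h : Xᵀ = -X) (a : Fin k) :
    X a a = 0 := by
  have := congrFun (congrFun h a) a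
  simp only [Matrix.transpose_apply, Matrix.neg_apply] at this
  linarith

lemma skew_apply {k : ℕ} (X : Matrix (Fin k) (Fin k) ℝ) (h : Xᵀ = -X) (a b : Fin k) :
    X b a = -X a b := by
  have := congrFun (congrFun h a) b
  simpa only [Matrix.transpose_apply, Matrix.neg_apply] using this

lemma skew_congruent : ∀ (m : ℕ) (X : Matrix (Fin (2*m)) (Fin (2*m)) ℝ),
    Xᵀ = -X → IsUnit X.det →
    ∃ G : Matrix (Fin (2*m)) (Fin (2*m)) ℝ, IsUnit G.det ∧ X = G * Jpos m * Gᵀ := by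
  intro m
  induction m with
  | zero =>
      intro X _ _
      refine ⟨1, by simp, ?_⟩
      funext i j
      exact absurd i.2 (by omega)
  | succ m IH =>
      intro X hskew hdet
      set i0 : Fin (2*(m+1)) := ⟨0, by omega⟩ with hi0def
      set i1 : Fin (2*(m+1)) := ⟨1, by omega⟩ with hi1def
      have hi01 : i0 ≠ i1 := by simp [hi0def, hi1def, Fin.ext_iff]
      have hv0 : i0.1 = 0 := rfl
      have hv1 : i1.1 = 1 := rfl
      have hlt2 : ∀ b : Fin (2*(m+1)), b.1 < 2 → b = i0 ∨ b = i1 := by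
        intro b hb
        have : b.1 = 0 ∨ b.1 = 1 := by omega
        rcases this with h | h
        · exact Or.inl (Fin.ext h)
        · exact Or.inr (Fin.ext h)
      -- find j with X i0 j ≠ 0
      have hrow : ∃ j, X i0 j ≠ 0 := by
        by_contra h
        push_neg at h
        have h0 : X.det = 0 := Matrix.det_eq_zero_of_row_eq_zero i0 h
        rw [h0] at hdet; simp at hdet
      obtain ⟨j, hj⟩ := hrow
      have hji0 : j ≠ i0 := by rintro rfl; exact hj (skew_diag X hskew i0)
      -- first congruence: swap & scale
      set σ : Equiv.Perm (Fin (2*(m+1))) := Equiv.swap i1 j with hσdef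
      set d : Fin (2*(m+1)) → ℝ := fun k => if k = j then (X i0 j)⁻¹ else 1 with hddef
      have hdnz : ∀ k, d k ≠ 0 := by
        intro k
        rw [hddef]
        dsimp only
        split_ifs
        · exact inv_ne_zero hj
        · norm_num
      set G₁ : Matrix (Fin (2*(m+1))) (Fin (2*(m+1))) ℝ :=
        Matrix.of (fun a b => if σ a = b then d b else 0) with hG₁def
      have hmulG₁ : ∀ (M : Matrix (Fin (2*(m+1))) (Fin (2*(m+1))) ℝ) a b,
          (G₁ * M) a b = d (σ a) * M (σ a) b := by
        intro M a b
        rw [Matrix.mul_apply]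
        rw [show (fun k => G₁ a k * M k b) = (fun k => if σ a = k then d k * M k b else 0) from
          funext fun k => by rw [hG₁def]; simp only [Matrix.of_apply, ite_mul, zero_mul]]
        rw [Finset.sum_ite_eq]
        simp
      have hmulG₁T : ∀ (M : Matrix (Fin (2*(m+1))) (Fin (2*(m+1))) ℝ) a b,
          (M * G₁ᵀ) a b = M a (σ b) * d (σ b) := by
        intro M a b
        rw [Matrix.mul_apply]
        rw [show (fun k => M a k * G₁ᵀ k b) = (fun k => if σ b = k then M a k * d k else 0) from
          funext fun k => by
            rw [Matrix.transpose_apply, hG₁def]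
            simp only [Matrix.of_apply, mul_ite, mul_zero]]
        rw [Finset.sum_ite_eq]
        simp
      have hG₁unit : IsUnit G₁.det := by
        apply Matrix.isUnit_det_of_right_inverse (B :=
          Matrix.of (fun a b => if σ b = a then (d a)⁻¹ else 0))
        funext a b
        rw [Matrix.mul_apply]
        rw [show (fun k => G₁ a k * Matrix.of (fun a b => if σ b = a then (d a)⁻¹ else 0) k b)
            = (fun k => if σ a = k then d k * (if σ b = k then (d k)⁻¹ else 0) else 0) from
          funext fun k => by rw [hG₁def]; simp only [Matrix.of_apply, ite_mul, zero_mul]]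
        rw [Finset.sum_ite_eq]
        simp only [Finset.mem_univ, if_true]
        rcases eq_or_ne a b with rfl | hab
        · rw [if_pos rfl, mul_inv_cancel₀ (hdnz (σ a)), Matrix.one_apply_eq]
        · rw [if_neg (fun h => hab (σ.injective h.symm)), mul_zero, Matrix.one_apply_ne hab]
      set Y := G₁ * X * G₁ᵀ with hYdef
      have hY : ∀ a b, Y a b = d (σ a) * X (σ a) (σ b) * d (σ b) := by
        intro a b
        rw [hYdef, hmulG₁T, hmulG₁]
      have hYskew : Yᵀ = -Y := by
        rw [hYdef]
        rw [Matrix.transpose_mul, Matrix.transpose_mul, Matrix.transpose_transpose, hskew]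
        simp [Matrix.mul_assoc, Matrix.neg_mul, Matrix.mul_neg]
      have hσ0 : σ i0 = i0 := Equiv.swap_apply_of_ne_of_ne hi01 (Ne.symm hji0)
      have hσ1 : σ i1 = j := Equiv.swap_apply_left i1 j
      have hd0 : d i0 = 1 := by
        rw [hddef]
        dsimp only
        exact if_neg (fun h => hji0 h.symm)
      have hY01 : Y i0 i1 = 1 := by
        rw [hY, hσ0, hσ1, hd0, one_mul, hddef]
        simp [mul_inv_cancel₀ hj]
      have hY10 : Y i1 i0 = -1 := by rw [skew_apply Y hYskew i0 i1, hY01]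
      have hYunit : IsUnit Y.det := by
        rw [hYdef, Matrix.det_mul, Matrix.det_mul, Matrix.det_transpose]
        exact (hG₁unit.mul hdet).mul hG₁unit
      -- second congruence: clear first two rows/columns
      set N2 : Matrix (Fin (2*(m+1))) (Fin (2*(m+1))) ℝ :=
        Matrix.of (fun a b => if 2 ≤ a.1 then
          (if b = i0 then Y i1 a else if b = i1 then -(Y i0 a) else 0) else 0) with hN2def
      have hN2row : ∀ a, a.1 < 2 → ∀ k, N2 a k = 0 := by
        intro a ha k
        rw [hN2def]
        simp only [Matrix.of_apply]
        rw [if_neg (by omega)]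
      have hN2sq : N2 * N2 = 0 := by
        funext a b
        rw [Matrix.mul_apply]
        rw [Matrix.zero_apply]
        apply Finset.sum_eq_zero
        intro k _
        by_cases hk : 2 ≤ k.1
        · have hk0 : k ≠ i0 := by
            intro h
            have := congrArg Fin.val h
            rw [hv0] at this
            omega
          have hk1 : k ≠ i1 := by
            intro h
            have := congrArg Fin.val h
            rw [hv1] at this
            omega
          have : N2 a k = 0 := by
            rw [hN2def]
            simp only [Matrix.of_apply, if_neg hk0, if_neg hk1]
            split_ifs <;> rfl
          rw [this, zero_mul]
        · rw [hN2row k (by omega), mul_zero]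
      set G₂ : Matrix (Fin (2*(m+1))) (Fin (2*(m+1))) ℝ := 1 + N2 with hG₂def
      have hG₂unit : IsUnit G₂.det := by
        apply Matrix.isUnit_det_of_right_inverse (B := 1 - N2)
        rw [hG₂def]
        rw [Matrix.mul_sub, Matrix.mul_one, Matrix.add_mul, Matrix.one_mul, hN2sq, add_zero]
        abel
      set Z := G₂ * Y * G₂ᵀ with hZdef
      have hZskew : Zᵀ = -Z := by
        rw [hZdef]
        rw [Matrix.transpose_mul, Matrix.transpose_mul, Matrix.transpose_transpose, hYskew]
        simp [Matrix.mul_assoc, Matrix.neg_mul, Matrix.mul_neg]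
      have hZunit : IsUnit Z.det := by
        rw [hZdef, Matrix.det_mul, Matrix.det_mul, Matrix.det_transpose]
        exact (hG₂unit.mul hYunit).mul hG₂unit
      have hZexp : Z = Y + Y * N2ᵀ + (N2 * Y + N2 * (Y * N2ᵀ)) := by
        rw [hZdef, hG₂def, Matrix.transpose_add, Matrix.transpose_one]
        noncomm_ring
      have hNmul : ∀ (M : Matrix (Fin (2*(m+1))) (Fin (2*(m+1))) ℝ) a b, a.1 < 2 →
          (N2 * M) a b = 0 := by
        intro M a b ha
        rw [Matrix.mul_apply]
        apply Finset.sum_eq_zero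
        intro k _
        rw [hN2row a ha k, zero_mul]
      have hZsmall : ∀ a b, a.1 < 2 → b.1 < 2 → Z a b = Y a b := by
        intro a b ha hb
        rw [hZexp]
        simp only [Matrix.add_apply]
        rw [hNmul _ a b ha, hNmul _ a b ha, add_zero, add_zero]
        have : (Y * N2ᵀ) a b = 0 := by
          rw [Matrix.mul_apply]
          apply Finset.sum_eq_zero
          intro k _
          rw [Matrix.transpose_apply, hN2row b hb k, mul_zero]
        rw [this, add_zero]
      have hZright : ∀ a b, a.1 < 2 → 2 ≤ b.1 →
          Z a b = Y a b + (Y a i0 * Y i1 b + -(Y a i1 * Y i0 b)) := by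
        intro a b ha hb
        rw [hZexp]
        simp only [Matrix.add_apply]
        rw [hNmul _ a b ha, hNmul _ a b ha, add_zero, add_zero]
        congr 1
        rw [Matrix.mul_apply]
        have key : ∀ k, Y a k * N2ᵀ k b =
            (if k = i0 then Y a i0 * Y i1 b else 0) + (if k = i1 then -(Y a i1 * Y i0 b) else 0) := by
          intro k
          rw [Matrix.transpose_apply, hN2def]
          simp only [Matrix.of_apply, if_pos hb]
          rcases eq_or_ne k i0 with rfl | hk0
          · rw [if_pos rfl, if_pos rfl, if_neg hi01, add_zero]
          · rw [if_neg hk0, if_neg hk0]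
            rcases eq_or_ne k i1 with rfl | hk1
            · rw [if_pos rfl, if_pos rfl, zero_add]
              ring
            · rw [if_neg hk1, if_neg hk1, mul_zero, add_zero]
        rw [Finset.sum_congr rfl (fun k _ => key k), Finset.sum_add_distrib,
          Finset.sum_ite_eq' Finset.univ i0, Finset.sum_ite_eq' Finset.univ i1]
        simp
      have hZ0b : ∀ b, 2 ≤ b.1 → Z i0 b = 0 := by
        intro b hb
        rw [hZright i0 b (by rw [hv0]; omega) hb, skew_diag Y hYskew i0, hY01]
        ring
      have hZ1b : ∀ b, 2 ≤ b.1 → Z i1 b = 0 := by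
        intro b hb
        rw [hZright i1 b (by rw [hv1]; omega) hb, skew_diag Y hYskew i1, hY10]
        ring
      have hZa0 : ∀ a b, a.1 < 2 → 2 ≤ b.1 → Z a b = 0 := by
        intro a b ha hb
        rcases hlt2 a ha with rfl | rfl
        · exact hZ0b b hb
        · exact hZ1b b hb
      have hZb0 : ∀ a b, 2 ≤ a.1 → b.1 < 2 → Z a b = 0 := by
        intro a b ha hb
        rw [skew_apply Z hZskew b a, hZa0 b a hb ha, neg_zero]
      -- block decomposition
      have h2m : 2 + 2*m = 2*(m+1) := by ring
      set e : Fin 2 ⊕ Fin (2*m) ≃ Fin (2*(m+1)) := finSumFinEquiv.trans (finCongr h2m)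
        with hedef
      have hvl : ∀ p : Fin 2, (e (Sum.inl p)).1 = p.1 := by
        intro p
        rw [hedef]
        simp [finSumFinEquiv_apply_left]
      have hvr : ∀ q : Fin (2*m), (e (Sum.inr q)).1 = 2 + q.1 := by
        intro q
        rw [hedef]
        simp [finSumFinEquiv_apply_right, Fin.natAdd]
      have he0 : e (Sum.inl 0) = i0 := by
        apply Fin.ext
        rw [hvl, hv0]
        rfl
      have he1 : e (Sum.inl 1) = i1 := by
        apply Fin.ext
        rw [hvl, hv1]
        rfl
      set SB : Matrix (Fin 2) (Fin 2) ℝ := !![0,1;-1,0] with hSBdef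
      set X' : Matrix (Fin (2*m)) (Fin (2*m)) ℝ :=
        Matrix.of (fun p q => Z (e (Sum.inr p)) (e (Sum.inr q))) with hX'def
      have hSB : ∀ p q : Fin 2, p.1 = 0 ∧ q.1 = 0 → SB p q = 0 := by
        intro p q ⟨hp, hq⟩
        rw [show p = (0 : Fin 2) from Fin.ext hp, show q = (0 : Fin 2) from Fin.ext hq, hSBdef]
        norm_num
      have hSB01 : ∀ p q : Fin 2, p.1 = 0 ∧ q.1 = 1 → SB p q = 1 := by
        intro p q ⟨hp, hq⟩
        rw [show p = (0 : Fin 2) from Fin.ext hp, show q = (1 : Fin 2) from Fin.ext hq, hSBdef]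
        norm_num
      have hSB10 : ∀ p q : Fin 2, p.1 = 1 ∧ q.1 = 0 → SB p q = -1 := by
        intro p q ⟨hp, hq⟩
        rw [show p = (1 : Fin 2) from Fin.ext hp, show q = (0 : Fin 2) from Fin.ext hq, hSBdef]
        norm_num
      have hSB11 : ∀ p q : Fin 2, p.1 = 1 ∧ q.1 = 1 → SB p q = 0 := by
        intro p q ⟨hp, hq⟩
        rw [show p = (1 : Fin 2) from Fin.ext hp, show q = (1 : Fin 2) from Fin.ext hq, hSBdef]
        norm_num
      have hW : (Matrix.reindex e.symm e.symm Z) = Matrix.fromBlocks SB 0 0 X' := by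
        funext x y
        rcases x with p | p <;> rcases y with q | q
        · rw [Matrix.reindex_apply, Matrix.submatrix_apply]
          simp only [Equiv.symm_symm, Matrix.fromBlocks_apply₁₁]
          have hp2 : (e (Sum.inl p)).1 < 2 := by rw [hvl]; omega
          have hq2 : (e (Sum.inl q)).1 < 2 := by rw [hvl]; omega
          rw [hZsmall _ _ hp2 hq2]
          rcases hlt2 _ hp2 with hp | hp <;> rcases hlt2 _ hq2 with hq | hq
          · have hpv : p.1 = 0 := by have h := hvl p; rw [hp, hv0] at h; omega
            have hqv : q.1 = 0 := by have h := hvl q; rw [hq, hv0] at h; omega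
            rw [hp, hq, skew_diag Y hYskew i0, hSB p q ⟨hpv, hqv⟩]
          · have hpv : p.1 = 0 := by have h := hvl p; rw [hp, hv0] at h; omega
            have hqv : q.1 = 1 := by have h := hvl q; rw [hq, hv1] at h; omega
            rw [hp, hq, hY01, hSB01 p q ⟨hpv, hqv⟩]
          · have hpv : p.1 = 1 := by have h := hvl p; rw [hp, hv1] at h; omega
            have hqv : q.1 = 0 := by have h := hvl q; rw [hq, hv0] at h; omega
            rw [hp, hq, hY10, hSB10 p q ⟨hpv, hqv⟩]
          · have hpv : p.1 = 1 := by have h := hvl p; rw [hp, hv1] at h; omega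
            have hqv : q.1 = 1 := by have h := hvl q; rw [hq, hv1] at h; omega
            rw [hp, hq, skew_diag Y hYskew i1, hSB11 p q ⟨hpv, hqv⟩]
        · rw [Matrix.reindex_apply, Matrix.submatrix_apply]
          simp only [Equiv.symm_symm, Matrix.fromBlocks_apply₁₂]
          rw [hZa0 _ _ (by rw [hvl]; omega) (by rw [hvr]; omega)]
          rfl
        · rw [Matrix.reindex_apply, Matrix.submatrix_apply]
          simp only [Equiv.symm_symm, Matrix.fromBlocks_apply₂₁]
          rw [hZb0 _ _ (by rw [hvr]; omega) (by rw [hvl]; omega)]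
          rfl
        · rw [Matrix.reindex_apply, Matrix.submatrix_apply]
          simp only [Equiv.symm_symm, Matrix.fromBlocks_apply₂₂]
          rw [hX'def]
          rfl
      have hZW : Z = Matrix.reindex e e (Matrix.fromBlocks SB 0 0 X') := by
        rw [← hW]
        funext a b
        rw [Matrix.reindex_apply, Matrix.reindex_apply]
        simp [Matrix.submatrix_apply]
      have hdetSB : SB.det = 1 := by
        rw [hSBdef, Matrix.det_fin_two_of]
        norm_num
      have hX'unit : IsUnit X'.det := by
        have : Z.det = SB.det * X'.det := by
          rw [hZW, Matrix.det_reindex_self, Matrix.det_fromBlocks_zero₂₁]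
        rw [this, hdetSB, one_mul] at hZunit
        exact hZunit
      have hX'skew : X'ᵀ = -X' := by
        funext p q
        rw [Matrix.transpose_apply, Matrix.neg_apply, hX'def]
        simp only [Matrix.of_apply]
        exact skew_apply Z hZskew _ _
      obtain ⟨G', hG'unit, hG'X⟩ := IH X' hX'skew hX'unit
      -- splitting of Jpos
      have hJz1 : ∀ a b : Fin (2*(m+1)), a.1 < 2 → 2 ≤ b.1 → Jpos (m+1) a b = 0 := by
        intro a b ha hb
        simp only [Jpos, Matrix.of_apply]
        rw [if_neg (by omega), if_neg (by omega)]
      have hJz2 : ∀ a b : Fin (2*(m+1)), 2 ≤ a.1 → b.1 < 2 → Jpos (m+1) a b = 0 := by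
        intro a b ha hb
        simp only [Jpos, Matrix.of_apply]
        rw [if_neg (by omega), if_neg (by omega)]
      have hJsplit : (Matrix.reindex e.symm e.symm (Jpos (m+1)))
          = Matrix.fromBlocks SB 0 0 (Jpos m) := by
        funext x y
        rcases x with p | p <;> rcases y with q | q
        · rw [Matrix.reindex_apply, Matrix.submatrix_apply]
          simp only [Equiv.symm_symm, Matrix.fromBlocks_apply₁₁]
          simp only [Jpos, Matrix.of_apply]
          rw [hvl p, hvl q]
          have hp2 : p.1 < 2 := p.2
          have hq2 : q.1 < 2 := q.2
          rcases (by omega : p.1 = 0 ∨ p.1 = 1) with hp | hp <;>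
            rcases (by omega : q.1 = 0 ∨ q.1 = 1) with hq | hq
          · rw [if_neg (by omega), if_neg (by omega), hSB p q ⟨hp, hq⟩]
          · rw [if_pos (by omega), hSB01 p q ⟨hp, hq⟩]
          · rw [if_neg (by omega), if_pos (by omega), hSB10 p q ⟨hp, hq⟩]
          · rw [if_neg (by omega), if_neg (by omega), hSB11 p q ⟨hp, hq⟩]
        · rw [Matrix.reindex_apply, Matrix.submatrix_apply]
          simp only [Equiv.symm_symm, Matrix.fromBlocks_apply₁₂]
          rw [hJz1 _ _ (by rw [hvl]; omega) (by rw [hvr]; omega)]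
          rfl
        · rw [Matrix.reindex_apply, Matrix.submatrix_apply]
          simp only [Equiv.symm_symm, Matrix.fromBlocks_apply₂₁]
          rw [hJz2 _ _ (by rw [hvr]; omega) (by rw [hvl]; omega)]
          rfl
        · rw [Matrix.reindex_apply, Matrix.submatrix_apply]
          simp only [Equiv.symm_symm, Matrix.fromBlocks_apply₂₂]
          simp only [Jpos, Matrix.of_apply]
          rw [hvr p, hvr q]
          by_cases h1 : p.1 % 2 = 0 ∧ q.1 = p.1 + 1
          · rw [if_pos (by omega), if_pos h1]
          · rw [if_neg (by omega), if_neg h1]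
            by_cases h2 : q.1 % 2 = 0 ∧ p.1 = q.1 + 1
            · rw [if_pos (by omega), if_pos h2]
            · rw [if_neg (by omega), if_neg h2]
      have hJm1 : Jpos (m+1) = Matrix.reindex e e (Matrix.fromBlocks SB 0 0 (Jpos m)) := by
        rw [← hJsplit]
        funext a b
        rw [Matrix.reindex_apply, Matrix.reindex_apply]
        simp [Matrix.submatrix_apply]
      -- assemble
      set H : Matrix (Fin (2*(m+1))) (Fin (2*(m+1))) ℝ :=
        Matrix.reindex e e (Matrix.fromBlocks (1 : Matrix (Fin 2) (Fin 2) ℝ) 0 0 G') with hHdef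
      have hHunit : IsUnit H.det := by
        rw [hHdef, Matrix.det_reindex_self, Matrix.det_fromBlocks_zero₂₁, Matrix.det_one, one_mul]
        exact hG'unit
      have hZH : Z = H * Jpos (m+1) * Hᵀ := by
        rw [hZW, hJm1, hHdef]
        rw [Matrix.reindex_apply, Matrix.reindex_apply, Matrix.reindex_apply]
        rw [Matrix.transpose_submatrix, Matrix.submatrix_mul_equiv, Matrix.submatrix_mul_equiv]
        congr 1
        rw [Matrix.fromBlocks_transpose, Matrix.transpose_one, Matrix.transpose_zero]
        rw [Matrix.fromBlocks_multiply, Matrix.fromBlocks_multiply]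
        rw [hG'X]
        congr 1 <;> simp [Matrix.mul_assoc]
      set K := G₂ * G₁ with hKdef
      have hKunit : IsUnit K.det := by
        rw [hKdef, Matrix.det_mul]
        exact hG₂unit.mul hG₁unit
      have hKTunit : IsUnit Kᵀ.det := by rw [Matrix.det_transpose]; exact hKunit
      have hZK : Z = K * X * Kᵀ := by
        rw [hZdef, hYdef, hKdef, Matrix.transpose_mul]
        simp [Matrix.mul_assoc]
      have hXfromZ : X = K⁻¹ * Z * (Kᵀ)⁻¹ := by
        rw [hZK]
        rw [← Matrix.mul_assoc, ← Matrix.mul_assoc]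
        rw [Matrix.nonsing_inv_mul K hKunit, Matrix.one_mul]
        rw [Matrix.mul_assoc, Matrix.mul_nonsing_inv Kᵀ hKTunit, Matrix.mul_one]
      refine ⟨K⁻¹ * H, ?_, ?_⟩
      · rw [Matrix.det_mul]
        exact (Matrix.isUnit_nonsing_inv_det K hKunit).mul hHunit
      · rw [Matrix.transpose_mul, Matrix.transpose_nonsing_inv]
        calc X = K⁻¹ * Z * (Kᵀ)⁻¹ := hXfromZ
        _ = K⁻¹ * (H * Jpos (m+1) * Hᵀ) * (Kᵀ)⁻¹ := by rw [← hZH]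
        _ = K⁻¹ * H * Jpos (m+1) * (Hᵀ * (Kᵀ)⁻¹) := by
            simp only [Matrix.mul_assoc]

lemma continuous_mv_aeval {σ : Type*} (p : MvPolynomial σ ℤ) :
    Continuous fun v : σ → ℝ => (MvPolynomial.aeval v p : ℝ) := by
  induction p using MvPolynomial.induction_on with
  | C a =>
      simp only [MvPolynomial.aeval_C]
      exact continuous_const
  | add f g hf hg =>
      simp only [_root_.map_add]
      exact hf.add hg
  | mul_X f i hf =>
      simp only [_root_.map_mul, MvPolynomial.aeval_X]
      exact hf.mul (continuous_apply i)

lemma joinedIn_map {α β : Type*} [TopologicalSpace α] [TopologicalSpace β]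
    {s : Set α} {t : Set β} {f : α → β} (hf : Continuous f) (hmaps : Set.MapsTo f s t)
    {x y : α} (h : JoinedIn s x y) : JoinedIn t (f x) (f y) := by
  obtain ⟨γ, hγ⟩ := h
  refine ⟨γ.map hf, fun u => ?_⟩
  have : (γ.map hf) u = f (γ u) := by
    have := congrFun (Path.map_coe γ hf) u
    simpa using this
  rw [this]
  exact hmaps (hγ u)

/-- The set of invertible real skew-symmetric 2n×2n matrices has exactly two
path-components, distinguished by the sign of the Pfaffian. -/
theorem skew_invertible_two_components (n : ℕ) (hn : 0 < n)
    (Pf : Matrix (Fin (2*n)) (Fin (2*n)) ℝ → ℝ) (hPf : IsPfaffian n Pf) :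
    (Jpos n) ∈ {X : Matrix (Fin (2*n)) (Fin (2*n)) ℝ | Xᵀ = -X ∧ X.det ≠ 0} ∧
    (Jneg n) ∈ {X : Matrix (Fin (2*n)) (Fin (2*n)) ℝ | Xᵀ = -X ∧ X.det ≠ 0} ∧
    ¬ JoinedIn {X : Matrix (Fin (2*n)) (Fin (2*n)) ℝ | Xᵀ = -X ∧ X.det ≠ 0}
        (Jpos n) (Jneg n) ∧
    ∀ X ∈ {X : Matrix (Fin (2*n)) (Fin (2*n)) ℝ | Xᵀ = -X ∧ X.det ≠ 0},
      ∀ Y ∈ {X : Matrix (Fin (2*n)) (Fin (2*n)) ℝ | Xᵀ = -X ∧ X.det ≠ 0},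
        (JoinedIn {X : Matrix (Fin (2*n)) (Fin (2*n)) ℝ | Xᵀ = -X ∧ X.det ≠ 0} X Y ↔
          Real.sign (Pf X) = Real.sign (Pf Y)) := by
  obtain ⟨⟨p, hp⟩, hsq, hnorm⟩ := hPf
  set S := {X : Matrix (Fin (2*n)) (Fin (2*n)) ℝ | Xᵀ = -X ∧ X.det ≠ 0} with hSdef
  have hJskew : (Jpos n)ᵀ = -(Jpos n) := by
    funext a b
    rw [Matrix.transpose_apply, Matrix.neg_apply]
    simp only [Jpos, Matrix.of_apply]
    split_ifs <;> first | omega | norm_num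
  set i0n : Fin (2*n) := ⟨0, by omega⟩ with hi0ndef
  have hv0n : i0n.1 = 0 := rfl
  set F : ℝ → Matrix (Fin (2*n)) (Fin (2*n)) ℝ :=
    fun s => Matrix.diagonal (fun k => if k = i0n then s else 1) with hFdef
  set A : ℝ → Matrix (Fin (2*n)) (Fin (2*n)) ℝ :=
    fun s => Matrix.of fun i j =>
      if i.1 < 2 ∧ j.1 < 2 then s * Jpos n i j else Jpos n i j with hAdef
  have hJz1 : ∀ a b : Fin (2*n), a.1 < 2 → 2 ≤ b.1 → Jpos n a b = 0 := by
    intro a b ha hb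
    simp only [Jpos, Matrix.of_apply]
    rw [if_neg (by omega), if_neg (by omega)]
  have hJz2 : ∀ a b : Fin (2*n), 2 ≤ a.1 → b.1 < 2 → Jpos n a b = 0 := by
    intro a b ha hb
    simp only [Jpos, Matrix.of_apply]
    rw [if_neg (by omega), if_neg (by omega)]
  have hFA : ∀ s : ℝ, F s * Jpos n * (F s)ᵀ = A s := by
    intro s
    rw [hFdef]
    dsimp only
    rw [Matrix.diagonal_transpose]
    funext a b
    rw [Matrix.mul_diagonal, Matrix.diagonal_mul, hAdef]
    simp only [Matrix.of_apply]
    rcases eq_or_ne a i0n with rfl | ha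
    · rcases eq_or_ne b i0n with rfl | hb
      · rw [if_pos rfl,
          if_pos (show i0n.1 < 2 ∧ i0n.1 < 2 from by rw [hv0n]; norm_num)]
        rw [skew_diag _ hJskew]
        ring
      · rw [if_pos rfl, if_neg hb]
        by_cases hb2 : b.1 < 2
        · rw [if_pos ⟨by rw [hv0n]; omega, hb2⟩]
          ring
        · rw [if_neg (show ¬(i0n.1 < 2 ∧ b.1 < 2) from fun h => hb2 h.2),
            hJz1 _ _ (by rw [hv0n]; omega) (by omega)]
          ring
    · rcases eq_or_ne b i0n with rfl | hb
      · rw [if_neg ha, if_pos rfl]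
        by_cases ha2 : a.1 < 2
        · rw [if_pos ⟨ha2, by rw [hv0n]; omega⟩]
          ring
        · rw [if_neg (show ¬(a.1 < 2 ∧ i0n.1 < 2) from fun h => ha2 h.1),
            hJz2 _ _ (by omega) (by rw [hv0n]; omega)]
          ring
      · rw [if_neg ha, if_neg hb]
        by_cases hab2 : a.1 < 2 ∧ b.1 < 2
        · have hae : a = b := by
            apply Fin.ext
            have ha' : a.1 ≠ 0 := fun h => ha (Fin.ext h)
            have hb' : b.1 ≠ 0 := fun h => hb (Fin.ext h)
            omega
          subst hae
          rw [if_pos hab2, skew_diag _ hJskew]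
          ring
        · rw [if_neg hab2]
          ring
  have hJdet : (Jpos n).det = 1 := by
    have := hsq (Jpos n) hJskew
    rw [hnorm] at this
    rw [← this]
    norm_num
  have hAskew : ∀ s : ℝ, (A s)ᵀ = -(A s) := by
    intro s
    rw [← hFA]
    rw [Matrix.transpose_mul, Matrix.transpose_mul, Matrix.transpose_transpose, hJskew]
    simp [Matrix.mul_assoc, Matrix.neg_mul, Matrix.mul_neg]
  have hdetF : ∀ s : ℝ, (F s).det = s := by
    intro s
    rw [hFdef]
    dsimp only
    rw [Matrix.det_diagonal]
    rw [Finset.prod_ite_eq' Finset.univ i0n (fun _ => s)]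
    simp
  have hdetA : ∀ s : ℝ, (A s).det = s^2 := by
    intro s
    rw [← hFA, Matrix.det_mul, Matrix.det_mul, Matrix.det_transpose, hdetF, hJdet]
    ring
  have hA1 : A 1 = Jpos n := by
    rw [hAdef]
    funext a b
    dsimp only [Matrix.of_apply]
    split_ifs <;> ring
  have hAneg : A (-1) = Jneg n := by
    rw [hAdef, Jneg]
    funext a b
    dsimp only [Matrix.of_apply]
    split_ifs <;> ring
  have mem1 : Jpos n ∈ S := ⟨hJskew, by rw [hJdet]; norm_num⟩
  have mem2 : Jneg n ∈ S := by
    refine ⟨by rw [← hAneg]; exact hAskew (-1), ?_⟩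
    rw [← hAneg, hdetA]
    norm_num
  -- continuity of Pf
  have hPfc : Continuous Pf := by
    have h1 := continuous_mv_aeval (σ := Fin (2*n) × Fin (2*n)) p
    have h2 : Pf = fun X => (MvPolynomial.aeval (fun ij => X ij.1 ij.2) p : ℝ) := funext hp
    rw [h2]
    exact h1.comp (continuous_pi fun ij => (continuous_apply ij.2).comp (continuous_apply ij.1))
  have hPfne : ∀ W ∈ S, Pf W ≠ 0 := by
    intro W hW h0
    have := hsq W hW.1
    rw [h0] at this
    have h2 : W.det = 0 := by rw [← this]; norm_num
    exact hW.2 h2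
  -- joined implies equal sign
  have hsign : ∀ V W, JoinedIn S V W → Real.sign (Pf V) = Real.sign (Pf W) := by
    rintro V W ⟨γ, hγ⟩
    set g : ℝ → ℝ := fun t => Pf (γ.extend t) with hgdef
    have hgc : Continuous g := hPfc.comp γ.continuous_extend
    have hgne : ∀ t ∈ Set.Icc (0:ℝ) 1, g t ≠ 0 := by
      intro t ht
      rw [hgdef]
      dsimp only
      rw [Path.extend_apply γ ht]
      exact hPfne _ (hγ _)
    have h0 : g 0 = Pf V := by rw [hgdef]; simp
    have h1 : g 1 = Pf W := by rw [hgdef]; simp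
    have key : ∀ u v : ℝ, u ∈ Set.Icc (0:ℝ) 1 → v ∈ Set.Icc (0:ℝ) 1 → 0 < g u → 0 < g v := by
      intro u v hu hv hpos
      by_contra hneg
      have hneg' : g v < 0 := lt_of_le_of_ne (not_lt.1 hneg) (hgne v hv)
      rcases le_total u v with huv | huv
      · have : (0:ℝ) ∈ Set.Icc (g v) (g u) := ⟨le_of_lt hneg', le_of_lt hpos⟩
        obtain ⟨t, ht, hgt⟩ := intermediate_value_Icc' huv (hgc.continuousOn) this
        exact hgne t (⟨le_trans hu.1 ht.1, le_trans ht.2 hv.2⟩) hgt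
      · have : (0:ℝ) ∈ Set.Icc (g v) (g u) := ⟨le_of_lt hneg', le_of_lt hpos⟩
        obtain ⟨t, ht, hgt⟩ := intermediate_value_Icc huv (hgc.continuousOn) this
        exact hgne t (⟨le_trans hv.1 ht.1, le_trans ht.2 hu.2⟩) hgt
    have m0 : (0:ℝ) ∈ Set.Icc (0:ℝ) 1 := by norm_num
    have m1 : (1:ℝ) ∈ Set.Icc (0:ℝ) 1 := by norm_num
    rcases lt_trichotomy (g 0) 0 with hneg | hzero | hpos
    · have hW' : g 1 < 0 := by
        by_contra h
        have h' : 0 < g 1 := lt_of_le_of_ne (not_lt.1 h) (Ne.symm (hgne 1 m1))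
        exact absurd (key 1 0 m1 m0 h') (not_lt.2 (le_of_lt hneg))
      rw [← h0, ← h1, Real.sign_of_neg hneg, Real.sign_of_neg hW']
    · exact absurd hzero (hgne 0 m0)
    · rw [← h0, ← h1, Real.sign_of_pos hpos, Real.sign_of_pos (key 0 1 m0 m1 hpos)]
  -- Pf (Jneg n) = -1 via one-variable polynomial argument
  set q : Polynomial ℝ := MvPolynomial.aeval
      (fun ij : Fin (2*n) × Fin (2*n) => Polynomial.C (Jpos n ij.1 ij.2) *
        (if ij.1.1 < 2 ∧ ij.2.1 < 2 then Polynomial.X else 1)) p with hqdef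
  have heval : ∀ s : ℝ, Polynomial.eval s q = Pf (A s) := by
    intro s
    rw [hp (A s), hqdef, MvPolynomial.aeval_def, MvPolynomial.aeval_def]
    rw [show (Polynomial.eval s : Polynomial ℝ → ℝ) = ⇑(Polynomial.evalRingHom s) from rfl]
    rw [MvPolynomial.eval₂_comp_left (Polynomial.evalRingHom s)]
    congr 1
    · exact Subsingleton.elim _ _
    · funext ij
      simp only [Function.comp_apply, Polynomial.coe_evalRingHom, Polynomial.eval_mul,
        Polynomial.eval_C, apply_ite (Polynomial.eval s), Polynomial.eval_X, Polynomial.eval_one]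
      rw [hAdef]
      dsimp only [Matrix.of_apply]
      split_ifs <;> ring
  have hq2 : q^2 = Polynomial.X^2 := by
    apply Polynomial.funext
    intro s
    rw [Polynomial.eval_pow, heval s, hsq (A s) (hAskew s), hdetA s, Polynomial.eval_pow,
      Polynomial.eval_X]
  have hqX : q = Polynomial.X := by
    have hfact : (q - Polynomial.X) * (q + Polynomial.X) = 0 := by
      have h' : q^2 - Polynomial.X^2 = 0 := by rw [hq2]; ring
      calc (q - Polynomial.X) * (q + Polynomial.X) = q^2 - Polynomial.X^2 := by ring
      _ = 0 := h'
    rcases mul_eq_zero.1 hfact with h | h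
    · exact sub_eq_zero.1 h
    · exfalso
      have hqneg : q = -Polynomial.X := eq_neg_of_add_eq_zero_left h
      have h1 := heval 1
      rw [hqneg, hA1, hnorm] at h1
      simp only [Polynomial.eval_neg, Polynomial.eval_X] at h1
      norm_num at h1
  have hPfJneg : Pf (Jneg n) = -1 := by
    rw [← hAneg, ← heval (-1), hqX]
    simp
  -- every element of S is joined to Jpos or Jneg
  set f : Matrix (Fin (2*n)) (Fin (2*n)) ℝ → Matrix (Fin (2*n)) (Fin (2*n)) ℝ :=
    fun M => M * Jpos n * Mᵀ with hfdef
  have hfc : Continuous f := by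
    rw [hfdef]
    exact (continuous_id.matrix_mul continuous_const).matrix_mul continuous_id.matrix_transpose
  have hmaps : Set.MapsTo f (GLset (2*n)) S := by
    intro M hM
    rw [hfdef]
    constructor
    · dsimp only
      rw [Matrix.transpose_mul, Matrix.transpose_mul, Matrix.transpose_transpose, hJskew]
      simp [Matrix.mul_assoc, Matrix.neg_mul, Matrix.mul_neg]
    · dsimp only
      rw [Matrix.det_mul, Matrix.det_mul, Matrix.det_transpose, hJdet]
      have hMd : M.det ≠ 0 := hM.ne_zero
      intro hcon
      rcases mul_eq_zero.1 hcon with h | h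
      · rcases mul_eq_zero.1 h with h' | h'
        · exact hMd h'
        · norm_num at h'
      · exact hMd h
  have hbase : ∀ W ∈ S, JoinedIn S W (Jpos n) ∨ JoinedIn S W (Jneg n) := by
    intro W hW
    obtain ⟨G, hGunit, hGW⟩ := skew_congruent n W hW.1 (isUnit_iff_ne_zero.2 hW.2)
    have hfG : f G = W := by
      rw [hfdef]
      dsimp only
      rw [← hGW]
    have hf1 : f 1 = Jpos n := by
      rw [hfdef]
      dsimp only
      rw [Matrix.one_mul, Matrix.transpose_one, Matrix.mul_one]
    have hfD : f (Dneg i0n) = Jneg n := by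
      rw [hfdef]
      dsimp only
      rw [← hAneg, ← hFA (-1)]
      rfl
    rcases gl_joinedIn i0n G hGunit with h | h
    · left
      have := joinedIn_map hfc hmaps h
      rw [hfG, hf1] at this
      exact this
    · right
      have := joinedIn_map hfc hmaps h
      rw [hfG, hfD] at this
      exact this
  refine ⟨mem1, mem2, ?_, ?_⟩
  · intro h
    have hcon := hsign _ _ h
    rw [hnorm, hPfJneg, Real.sign_one, Real.sign_of_neg (by norm_num : (-1:ℝ) < 0)] at hcon
    norm_num at hcon
  · intro V hV W hW
    constructor
    · exact hsign V W
    · intro hs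
      rcases hbase V hV with h1 | h1 <;> rcases hbase W hW with h2 | h2
      · exact h1.trans h2.symm
      · exfalso
        have e1 := hsign V _ h1
        have e2 := hsign W _ h2
        rw [hnorm, Real.sign_one] at e1
        rw [hPfJneg, Real.sign_of_neg (by norm_num : (-1:ℝ) < 0)] at e2
        rw [hs, e2] at e1
        norm_num at e1
      · exfalso
        have e1 := hsign V _ h1
        have e2 := hsign W _ h2
        rw [hPfJneg, Real.sign_of_neg (by norm_num : (-1:ℝ) < 0)] at e1
        rw [hnorm, Real.sign_one] at e2
        rw [hs, e2] at e1
        norm_num at e1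
      · exact h1.trans h2.symm
end

section
/- Every skew-symmetric matrix S over the reals admits a factorization S = L T L^T where L is an invertible lower-triangular matrix and T is skew-symmetric tridiagonal (possibly after a permutation P: P S P^T = L T L^T). -/
open Matrix

namespace SkewLTL

variable {m : ℕ}




def lift1 (a : ℝ) (A : Matrix (Fin m) (Fin m) ℝ) :
    Matrix (Fin (m+1)) (Fin (m+1)) ℝ :=
  Matrix.of (Fin.cons (Fin.cons a 0) (fun i => Fin.cons 0 (A i)))

@[simp] lemma lift1_zz (a : ℝ) (A : Matrix (Fin m) (Fin m) ℝ) :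
    lift1 a A 0 0 = a := by simp [lift1]

@[simp] lemma lift1_zs (a : ℝ) (A : Matrix (Fin m) (Fin m) ℝ) (j : Fin m) :
    lift1 a A 0 j.succ = 0 := by simp [lift1]

@[simp] lemma lift1_sz (a : ℝ) (A : Matrix (Fin m) (Fin m) ℝ) (i : Fin m) :
    lift1 a A i.succ 0 = 0 := by simp [lift1]

@[simp] lemma lift1_ss (a : ℝ) (A : Matrix (Fin m) (Fin m) ℝ) (i j : Fin m) :
    lift1 a A i.succ j.succ = A i j := by simp [lift1]

lemma lift1_mul (a b : ℝ) (A B : Matrix (Fin m) (Fin m) ℝ) :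
    lift1 a A * lift1 b B = lift1 (a*b) (A*B) := by
  ext x y
  refine Fin.cases ?_ (fun i => ?_) x <;> refine Fin.cases ?_ (fun j => ?_) y <;>
    simp [Matrix.mul_apply, Fin.sum_univ_succ]

lemma lift1_transpose (a : ℝ) (A : Matrix (Fin m) (Fin m) ℝ) :
    (lift1 a A)ᵀ = lift1 a Aᵀ := by
  ext x y
  refine Fin.cases ?_ (fun i => ?_) x <;> refine Fin.cases ?_ (fun j => ?_) y <;>
    simp

lemma lift1_submatrix (a : ℝ) (A : Matrix (Fin m) (Fin m) ℝ) (σ : Equiv.Perm (Fin m)) :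
    (lift1 a A).submatrix (Equiv.Perm.decomposeFin.symm (0, σ))
      (Equiv.Perm.decomposeFin.symm (0, σ)) = lift1 a (A.submatrix σ σ) := by
  ext x y
  refine Fin.cases ?_ (fun i => ?_) x <;> refine Fin.cases ?_ (fun j => ?_) y <;>
    simp [Equiv.Perm.decomposeFin_symm_apply_zero, Equiv.Perm.decomposeFin_symm_apply_succ]





def lift2 (p q r s : ℝ) (A : Matrix (Fin m) (Fin m) ℝ) :
    Matrix (Fin (m+2)) (Fin (m+2)) ℝ :=
  Matrix.of (Fin.cons (Fin.cons p (Fin.cons q 0))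
    (Fin.cons (Fin.cons r (Fin.cons s 0))
      (fun i => Fin.cons 0 (Fin.cons 0 (A i)))))

@[simp] lemma lift2_00 (p q r s : ℝ) (A : Matrix (Fin m) (Fin m) ℝ) :
    lift2 p q r s A 0 0 = p := by simp [lift2]

@[simp] lemma lift2_01 (p q r s : ℝ) (A : Matrix (Fin m) (Fin m) ℝ) :
    lift2 p q r s A 0 1 = q := by
  rw [show (1 : Fin (m+2)) = Fin.succ 0 from rfl]; simp [lift2]

@[simp] lemma lift2_0s (p q r s : ℝ) (A : Matrix (Fin m) (Fin m) ℝ) (j : Fin m) :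
    lift2 p q r s A 0 j.succ.succ = 0 := by simp [lift2]

@[simp] lemma lift2_10 (p q r s : ℝ) (A : Matrix (Fin m) (Fin m) ℝ) :
    lift2 p q r s A 1 0 = r := by
  rw [show (1 : Fin (m+2)) = Fin.succ 0 from rfl]; simp [lift2]

@[simp] lemma lift2_11 (p q r s : ℝ) (A : Matrix (Fin m) (Fin m) ℝ) :
    lift2 p q r s A 1 1 = s := by
  rw [show (1 : Fin (m+2)) = Fin.succ 0 from rfl]
  simp [lift2]

@[simp] lemma lift2_1s (p q r s : ℝ) (A : Matrix (Fin m) (Fin m) ℝ) (j : Fin m) :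
    lift2 p q r s A 1 j.succ.succ = 0 := by
  rw [show (1 : Fin (m+2)) = Fin.succ 0 from rfl]; simp [lift2]

@[simp] lemma lift2_s0 (p q r s : ℝ) (A : Matrix (Fin m) (Fin m) ℝ) (i : Fin m) :
    lift2 p q r s A i.succ.succ 0 = 0 := by simp [lift2]

@[simp] lemma lift2_s1 (p q r s : ℝ) (A : Matrix (Fin m) (Fin m) ℝ) (i : Fin m) :
    lift2 p q r s A i.succ.succ 1 = 0 := by
  rw [show (1 : Fin (m+2)) = Fin.succ 0 from rfl]; simp [lift2]

@[simp] lemma lift2_ss (p q r s : ℝ) (A : Matrix (Fin m) (Fin m) ℝ) (i j : Fin m) :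
    lift2 p q r s A i.succ.succ j.succ.succ = A i j := by simp [lift2]

@[elab_as_elim] lemma fin2cases {P : Fin (m+2) → Prop} (x : Fin (m+2)) (h0 : P 0) (h1 : P 1)
    (hs : ∀ i : Fin m, P i.succ.succ) : P x := by
  refine Fin.cases h0 (fun i => ?_) x
  refine Fin.cases ?_ (fun j => hs j) i
  exact h1

lemma lift2_mul (p q r s p' q' r' s' : ℝ) (A B : Matrix (Fin m) (Fin m) ℝ) :
    lift2 p q r s A * lift2 p' q' r' s' B =
      lift2 (p*p'+q*r') (p*q'+q*s') (r*p'+s*r') (r*q'+s*s') (A*B) := by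
  ext x y
  induction x using fin2cases with
  | _ => ?_
  all_goals induction y using fin2cases with | _ => ?_
  all_goals
    simp [Matrix.mul_apply, Fin.sum_univ_succ, Finset.mul_sum]

lemma lift2_transpose (p q r s : ℝ) (A : Matrix (Fin m) (Fin m) ℝ) :
    (lift2 p q r s A)ᵀ = lift2 p r q s Aᵀ := by
  ext x y
  induction x using fin2cases with
  | _ => ?_
  all_goals induction y using fin2cases with | _ => ?_
  all_goals
    simp

def perm2 (σ : Equiv.Perm (Fin m)) : Equiv.Perm (Fin (m+2)) :=
  Equiv.Perm.decomposeFin.symm (0, Equiv.Perm.decomposeFin.symm (0, σ))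

@[simp] lemma perm2_zero (σ : Equiv.Perm (Fin m)) : perm2 σ 0 = 0 := by
  simp [perm2]

@[simp] lemma perm2_one (σ : Equiv.Perm (Fin m)) : perm2 σ 1 = 1 := by
  rw [show (1 : Fin (m+2)) = Fin.succ 0 from rfl]
  simp [perm2, Equiv.Perm.decomposeFin_symm_apply_succ]

@[simp] lemma perm2_ss (σ : Equiv.Perm (Fin m)) (i : Fin m) :
    perm2 σ i.succ.succ = (σ i).succ.succ := by
  simp [perm2, Equiv.Perm.decomposeFin_symm_apply_succ]

lemma lift2_submatrix (p q r s : ℝ) (A : Matrix (Fin m) (Fin m) ℝ)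
    (σ : Equiv.Perm (Fin m)) :
    (lift2 p q r s A).submatrix (perm2 σ) (perm2 σ) = lift2 p q r s (A.submatrix σ σ) := by
  ext x y
  induction x using fin2cases with
  | _ => ?_
  all_goals induction y using fin2cases with | _ => ?_
  all_goals
    simp





def elimE (f g : Fin (m+2) → ℝ) : Matrix (Fin (m+2)) (Fin (m+2)) ℝ :=
  Matrix.of fun x y =>
    (if y = x then (1:ℝ) else 0) + f x * (if y = 1 then 1 else 0)
      + g x * (if y = 0 then 1 else 0)

lemma elimE_mul (f g : Fin (m+2) → ℝ) (M : Matrix (Fin (m+2)) (Fin (m+2)) ℝ)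
    (x y : Fin (m+2)) :
    (elimE f g * M) x y = M x y + f x * M 1 y + g x * M 0 y := by
  rw [Matrix.mul_apply]
  simp [elimE, add_mul, ite_mul, mul_assoc, Finset.sum_add_distrib, ← Finset.mul_sum]

lemma elimE_mul_t (f g : Fin (m+2) → ℝ) (M : Matrix (Fin (m+2)) (Fin (m+2)) ℝ)
    (x y : Fin (m+2)) :
    (M * (elimE f g)ᵀ) x y = M x y + f y * M x 1 + g y * M x 0 := by
  rw [Matrix.mul_apply]
  simp [elimE, mul_add, mul_ite, Finset.sum_add_distrib, ← Finset.mul_sum,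
    mul_comm, mul_left_comm]

lemma elimE_inv (f g : Fin (m+2) → ℝ) (hf1 : f 1 = 0) (hg1 : g 1 = 0)
    (hf0 : f 0 = 0) (hg0 : g 0 = 0) :
    elimE (fun x => -f x) (fun x => -g x) * elimE f g = 1 := by
  ext x y
  rw [elimE_mul]
  simp only [elimE, Matrix.of_apply, hf1, hg1, hf0, hg0, zero_mul, mul_zero,
    add_zero, zero_add, Matrix.one_apply]
  ring_nf
  by_cases h : y = x
  · simp [h]
  · simp [h, Ne.symm h]

lemma elimE_lower (f g : Fin (m+2) → ℝ) (hf0 : f 0 = 0) :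
    ∀ x y : Fin (m+2), x < y → elimE f g x y = 0 := by
  intro x y hxy
  have hyx : ¬ (y = x) := ne_of_gt hxy
  simp only [elimE, Matrix.of_apply, if_neg hyx]
  have hy0 : ¬ (y = 0) := by
    intro h; subst h; exact absurd hxy (Fin.not_lt_zero x)
  by_cases hy1 : y = 1
  · have hx0 : x = 0 := by
      subst hy1
      have hx : (x : ℕ) < ((1 : Fin (m+2)) : ℕ) := hxy
      simp only [Fin.val_one] at hx
      exact Fin.ext (by simpa using hx)
    subst hx0
    simp [hf0, hy0]
  · simp [hy1, hy0]

lemma elimE_diag (f g : Fin (m+2) → ℝ) (hf1 : f 1 = 0) (hg0 : g 0 = 0) :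
    ∀ x : Fin (m+2), elimE f g x x = 1 := by
  intro x
  simp only [elimE, Matrix.of_apply, if_pos rfl]
  by_cases hx1 : x = 1
  · subst hx1; simp [hf1]
  · by_cases hx0 : x = 0
    · subst hx0; simp [hg0]
    · simp [hx1, hx0]

lemma mul_lower {k : ℕ} {A B : Matrix (Fin k) (Fin k) ℝ}
    (hA : ∀ i j, i < j → A i j = 0) (hB : ∀ i j, i < j → B i j = 0) :
    ∀ i j, i < j → (A * B) i j = 0 := by
  intro i j hij
  rw [Matrix.mul_apply]
  apply Finset.sum_eq_zero
  intro c _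
  rcases lt_or_ge i c with h | h
  · rw [hA i c h, zero_mul]
  · rw [hB c j (lt_of_le_of_lt h hij), mul_zero]

lemma mul_diag {k : ℕ} {A B : Matrix (Fin k) (Fin k) ℝ}
    (hA : ∀ i j, i < j → A i j = 0) (hB : ∀ i j, i < j → B i j = 0) (i : Fin k) :
    (A * B) i i = A i i * B i i := by
  rw [Matrix.mul_apply]
  apply Finset.sum_eq_single
  · intro c _ hc
    rcases lt_or_ge i c with h | h
    · rw [hA i c h, zero_mul]
    · rw [hB c i (lt_of_le_of_ne h hc), mul_zero]
  · intro h; exact absurd (Finset.mem_univ i) h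

lemma fin_ss_lt {i : Fin m} {y : Fin (m+2)} (h : i.succ.succ < y) :
    ∃ j : Fin m, y = j.succ.succ ∧ i < j := by
  induction y using fin2cases with
  | h0 => exact absurd h (by
      intro hh
      have : (i.succ.succ : Fin (m+2)).1 < (0 : Fin (m+2)).1 := hh
      simp [Fin.val_succ] at this)
  | h1 => exact absurd h (by
      intro hh
      have : (i.succ.succ : Fin (m+2)).1 < (1 : Fin (m+2)).1 := hh
      simp [Fin.val_succ] at this)
  | hs j =>
      refine ⟨j, rfl, ?_⟩
      have : (i.succ.succ : Fin (m+2)).1 < (j.succ.succ : Fin (m+2)).1 := h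
      simp only [Fin.val_succ] at this
      exact Fin.lt_def.mpr (by omega)

lemma lift2_lower (p q r s : ℝ) (A : Matrix (Fin m) (Fin m) ℝ)
    (hq : q = 0) (hA : ∀ i j, i < j → A i j = 0) :
    ∀ x y : Fin (m+2), x < y → lift2 p q r s A x y = 0 := by
  intro x y
  induction x using fin2cases with
  | h0 =>
      induction y using fin2cases with
      | h0 => intro h; exact absurd h (lt_irrefl _)
      | h1 => intro _; simp [hq]
      | hs j => intro _; simp
  | h1 =>
      induction y using fin2cases with
      | h0 => intro h; exact absurd h (by
          intro hh
          have : (1 : Fin (m+2)).1 < (0 : Fin (m+2)).1 := hh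
          simp at this)
      | h1 => intro h; exact absurd h (lt_irrefl _)
      | hs j => intro _; simp
  | hs i =>
      intro h
      obtain ⟨j, rfl, hij⟩ := fin_ss_lt h
      simp [hA i j hij]

lemma lift2_diag (p q r s : ℝ) (A : Matrix (Fin m) (Fin m) ℝ)
    (hp : p = 1) (hs : s = 1) (hA : ∀ i, A i i = 1) :
    ∀ x : Fin (m+2), lift2 p q r s A x x = 1 := by
  intro x
  induction x using fin2cases with
  | h0 => simp [hp]
  | h1 => simp [hs]
  | hs i => simp [hA i]





def Good (k : ℕ) (S : Matrix (Fin k) (Fin k) ℝ) : Prop :=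
  ∃ (τ : Equiv.Perm (Fin k)) (L T : Matrix (Fin k) (Fin k) ℝ),
    (∀ i j, i < j → L i j = 0) ∧ (∀ i, L i i = 1) ∧
    Tᵀ = -T ∧ (∀ i j : Fin k, i.1 + 1 < j.1 ∨ j.1 + 1 < i.1 → T i j = 0) ∧
    S.submatrix τ τ = L * T * Lᵀ

theorem good_all : ∀ (k : ℕ) (S : Matrix (Fin k) (Fin k) ℝ), Sᵀ = -S → Good k S := by
  intro k
  induction k using Nat.strong_induction_on with
  | _ k IH =>
  rcases k with _ | m
  · intro S hS
    exact ⟨1, 1, 0, by simp [Matrix.one_apply], by simp [Matrix.one_apply],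
      by simp, by simp, by ext i j; exact i.elim0⟩
  intro S hS
  have hskew : ∀ i j, S j i = -S i j := by
    intro i j
    have := congrFun (congrFun hS i) j
    simpa using this
  by_cases hz : ∀ i, S i 0 = 0
  · -- Case A : first column (and row) vanish
    obtain ⟨τ₁, L₁, T₁, hL₁low, hL₁diag, hT₁skew, hT₁tri, hprod₁⟩ :=
      IH m (Nat.lt_succ_self m) (Matrix.of fun i j => S i.succ j.succ)
        (by ext i j; simpa using hskew i.succ j.succ)
    have hrow : ∀ j, S 0 j = 0 := fun j => by rw [hskew j 0, hz j, neg_zero]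
    have hlift : S = lift1 0 (Matrix.of fun i j => S i.succ j.succ) := by
      ext x y
      refine Fin.cases ?_ (fun i => ?_) x <;> refine Fin.cases ?_ (fun j => ?_) y <;>
        simp [hrow, hz]
    refine ⟨Equiv.Perm.decomposeFin.symm (0, τ₁), lift1 1 L₁, lift1 0 T₁, ?_, ?_, ?_, ?_, ?_⟩
    · -- lower triangular
      intro i j
      refine Fin.cases ?_ (fun i' => ?_) i <;> refine Fin.cases ?_ (fun j' => ?_) j <;>
        intro hij
      · exact absurd hij (lt_irrefl _)
      · simp
      · simp
      · simp [hL₁low i' j' (Fin.succ_lt_succ_iff.mp hij)]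
    · -- unit diagonal
      intro i
      refine Fin.cases ?_ (fun i' => ?_) i <;> simp [hL₁diag]
    · -- skew
      rw [lift1_transpose, hT₁skew]
      ext x y
      refine Fin.cases ?_ (fun i => ?_) x <;> refine Fin.cases ?_ (fun j => ?_) y <;> simp
    · -- tridiagonal
      intro i j
      refine Fin.cases ?_ (fun i' => ?_) i <;> refine Fin.cases ?_ (fun j' => ?_) j <;>
        intro h
      · simp at h
      · simp
      · simp
      · refine lift1_ss _ _ _ _ ▸ hT₁tri i' j' ?_
        simp only [Fin.val_succ] at h
        omega
    · rw [hlift, lift1_submatrix, hprod₁, lift1_transpose, lift1_mul, lift1_mul]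
      norm_num
  · -- Case B : pivoting needed
    push_neg at hz
    obtain ⟨kk, hkk⟩ := hz
    have hS00 : S 0 0 = 0 := by have := hskew 0 0; linarith
    have hkk0 : kk ≠ 0 := fun h => hkk (h ▸ hS00)
    rcases m with _ | n
    · exact absurd (Fin.fin_one_eq_zero kk) hkk0
    set σ₀ : Equiv.Perm (Fin (n+2)) := Equiv.swap 1 kk with hσ₀def
    set S' : Matrix (Fin (n+2)) (Fin (n+2)) ℝ := S.submatrix σ₀ σ₀ with hS'def
    have hS'skew : ∀ x y, S' y x = -S' x y := fun x y => hskew _ _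
    have hσ0 : σ₀ 0 = 0 := by
      rw [hσ₀def]
      exact Equiv.swap_apply_of_ne_of_ne (Ne.symm one_ne_zero) (Ne.symm hkk0)
    have ha0 : S' 1 0 ≠ 0 := by
      rw [hS'def]
      simpa [Matrix.submatrix_apply, hσ0, Equiv.swap_apply_left,
        show σ₀ 1 = kk from Equiv.swap_apply_left _ _] using hkk
    set a : ℝ := S' 1 0 with hadef
    have ha : a ≠ 0 := ha0
    have hS'00 : S' 0 0 = 0 := by have := hS'skew 0 0; linarith
    have hS'11 : S' 1 1 = 0 := by have := hS'skew 1 1; linarith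
    have hS'01 : S' 0 1 = -a := hS'skew 1 0
    set cc : Fin (n+2) → ℝ :=
      Fin.cons 0 (Fin.cons 0 (fun i : Fin n => -S' i.succ.succ 0 / a)) with hccdef
    set dd : Fin (n+2) → ℝ :=
      Fin.cons 0 (Fin.cons 0 (fun i : Fin n => S' i.succ.succ 1 / a)) with hdddef
    have hcc0 : cc 0 = 0 := by rw [hccdef]; simp
    have hcc1 : cc 1 = 0 := by
      rw [hccdef, show (1 : Fin (n+2)) = Fin.succ 0 from rfl]; simp
    have hccs : ∀ i : Fin n, cc i.succ.succ = -S' i.succ.succ 0 / a := by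
      intro i; rw [hccdef]; simp
    have hdd0 : dd 0 = 0 := by rw [hdddef]; simp
    have hdd1 : dd 1 = 0 := by
      rw [hdddef, show (1 : Fin (n+2)) = Fin.succ 0 from rfl]; simp
    have hdds : ∀ i : Fin n, dd i.succ.succ = S' i.succ.succ 1 / a := by
      intro i; rw [hdddef]; simp
    set S2 : Matrix (Fin (n+2)) (Fin (n+2)) ℝ :=
      elimE cc dd * S' * (elimE cc dd)ᵀ with hS2def
    have hS2e : ∀ x y, S2 x y =
        (S' x y + cc x * S' 1 y + dd x * S' 0 y)
        + cc y * (S' x 1 + cc x * S' 1 1 + dd x * S' 0 1)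
        + dd y * (S' x 0 + cc x * S' 1 0 + dd x * S' 0 0) := by
      intro x y
      rw [hS2def]
      rw [elimE_mul_t]
      rw [elimE_mul, elimE_mul, elimE_mul]
    have hS2skew : ∀ x y, S2 y x = -S2 x y := by
      intro x y
      simp only [hS2e, hS'skew 1 y, hS'skew 0 y, hS'skew 1 x, hS'skew 0 x,
        hS'skew x y, hS'00, hS'11, hS'01, ← hadef]
      ring
    have hs20 : ∀ i : Fin n, S2 i.succ.succ 0 = 0 := by
      intro i
      simp only [hS2e, hccs, hdds, hcc0, hdd0, hS'00, hS'11, hS'01, ← hadef]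
      field_simp
      ring
    have hs21 : ∀ i : Fin n, S2 i.succ.succ 1 = 0 := by
      intro i
      simp only [hS2e, hccs, hdds, hcc1, hdd1, hS'00, hS'11, hS'01, ← hadef]
      field_simp
      ring
    have h200 : S2 0 0 = 0 := by
      simp only [hS2e, hcc0, hdd0, hS'00]; ring
    have h201 : S2 0 1 = -a := by
      simp only [hS2e, hcc0, hdd0, hcc1, hdd1, hS'00, hS'11, hS'01]; ring
    have h210 : S2 1 0 = a := by
      simp only [hS2e, hcc0, hdd0, hcc1, hdd1, hS'00, hS'11, ← hadef]; ring
    have h211 : S2 1 1 = 0 := by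
      simp only [hS2e, hcc1, hdd1, hS'11]; ring
    have h20s : ∀ j : Fin n, S2 0 j.succ.succ = 0 := by
      intro j
      simp only [hS2e, hccs, hdds, hcc0, hdd0, hS'00, hS'11, hS'01,
        hS'skew 0 j.succ.succ, ← hadef]
      field_simp
      ring
    have h21s : ∀ j : Fin n, S2 1 j.succ.succ = 0 := by
      intro j
      simp only [hS2e, hccs, hdds, hcc1, hdd1, hS'00, hS'11, hS'01,
        hS'skew 1 j.succ.succ, ← hadef]
      field_simp
      ring
    set Stail : Matrix (Fin n) (Fin n) ℝ :=
      Matrix.of (fun i j => S2 i.succ.succ j.succ.succ) with hStaildef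
    have hlift2 : S2 = lift2 0 (-a) a 0 Stail := by
      ext x y
      induction x using fin2cases with
      | h0 =>
          induction y using fin2cases with
          | h0 => simpa using h200
          | h1 => simpa using h201
          | hs j => simpa using h20s j
      | h1 =>
          induction y using fin2cases with
          | h0 => simpa using h210
          | h1 => simpa using h211
          | hs j => simpa using h21s j
      | hs i =>
          induction y using fin2cases with
          | h0 => simpa using hs20 i
          | h1 => simpa using hs21 i
          | hs j => simp [hStaildef]
    have hStailskew : Stailᵀ = -Stail := by
      ext i j
      simpa [hStaildef] using hS2skew i.succ.succ j.succ.succ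
    obtain ⟨σ₂, L₂, T₂, hL₂low, hL₂diag, hT₂skew, hT₂tri, hprod₂⟩ :=
      IH n (by omega) Stail hStailskew
    set σ' : Equiv.Perm (Fin (n+2)) := perm2 σ₂ with hσ'def
    have hσ'0 : σ' 0 = 0 := by rw [hσ'def]; simp
    have hσ'1 : σ' 1 = 1 := by rw [hσ'def]; simp
    set cc' : Fin (n+2) → ℝ := fun x => cc (σ' x) with hcc'def
    set dd' : Fin (n+2) → ℝ := fun x => dd (σ' x) with hdd'def
    have hcc'0 : cc' 0 = 0 := by rw [hcc'def]; simp only [hσ'0]; exact hcc0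
    have hcc'1 : cc' 1 = 0 := by rw [hcc'def]; simp only [hσ'1]; exact hcc1
    have hdd'0 : dd' 0 = 0 := by rw [hdd'def]; simp only [hσ'0]; exact hdd0
    have hdd'1 : dd' 1 = 0 := by rw [hdd'def]; simp only [hσ'1]; exact hdd1
    have hA : (elimE cc dd).submatrix σ' σ' = elimE cc' dd' := by
      ext x y
      have e1 : (σ' y = σ' x) = (y = x) := propext (Equiv.apply_eq_iff_eq σ')
      have e2 : (σ' y = 1) = (y = 1) := propext
        ⟨fun h => σ'.injective (h.trans hσ'1.symm), fun h => by subst h; exact hσ'1⟩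
      have e3 : (σ' y = 0) = (y = 0) := propext
        ⟨fun h => σ'.injective (h.trans hσ'0.symm), fun h => by subst h; exact hσ'0⟩
      simp only [Matrix.submatrix_apply, elimE, Matrix.of_apply, hcc'def, hdd'def,
        e1, e2, e3]
    have hGA : elimE (fun x => -cc' x) (fun x => -dd' x) * elimE cc' dd' = 1 :=
      elimE_inv _ _ hcc'1 hdd'1 hcc'0 hdd'0
    have hconj : elimE cc' dd' * (S'.submatrix σ' σ') * (elimE cc' dd')ᵀ
        = S2.submatrix σ' σ' := by
      rw [← hA, Matrix.transpose_submatrix, Matrix.submatrix_mul_equiv,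
        Matrix.submatrix_mul_equiv, hS2def]
    have hGS : S'.submatrix σ' σ' =
        elimE (fun x => -cc' x) (fun x => -dd' x) * (S2.submatrix σ' σ')
          * (elimE (fun x => -cc' x) (fun x => -dd' x))ᵀ := by
      rw [← hconj]
      have h2 : (elimE cc' dd')ᵀ * (elimE (fun x => -cc' x) (fun x => -dd' x))ᵀ = 1 := by
        rw [← Matrix.transpose_mul, hGA, Matrix.transpose_one]
      have h3 : elimE (fun x => -cc' x) (fun x => -dd' x)
            * (elimE cc' dd' * (S'.submatrix σ' σ') * (elimE cc' dd')ᵀ)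
            * (elimE (fun x => -cc' x) (fun x => -dd' x))ᵀ
          = (elimE (fun x => -cc' x) (fun x => -dd' x) * elimE cc' dd')
            * (S'.submatrix σ' σ')
            * ((elimE cc' dd')ᵀ * (elimE (fun x => -cc' x) (fun x => -dd' x))ᵀ) := by
        simp only [Matrix.mul_assoc]
      rw [h3, hGA, h2, Matrix.one_mul, Matrix.mul_one]
    have hS2σ : S2.submatrix σ' σ' = lift2 0 (-a) a 0 (L₂ * T₂ * L₂ᵀ) := by
      rw [hlift2, hσ'def, lift2_submatrix, hprod₂]
    have hLbT : lift2 1 0 0 1 L₂ * lift2 0 (-a) a 0 T₂ * (lift2 1 0 0 1 L₂)ᵀ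
        = lift2 0 (-a) a 0 (L₂ * T₂ * L₂ᵀ) := by
      rw [lift2_transpose, lift2_mul, lift2_mul]
      norm_num
    have hGlow : ∀ x y : Fin (n+2), x < y →
        elimE (fun x => -cc' x) (fun x => -dd' x) x y = 0 :=
      elimE_lower _ _ (by simp [hcc'0])
    have hLblow : ∀ x y : Fin (n+2), x < y → lift2 1 0 0 1 L₂ x y = 0 :=
      lift2_lower _ _ _ _ _ rfl hL₂low
    refine ⟨σ'.trans σ₀,
      elimE (fun x => -cc' x) (fun x => -dd' x) * lift2 1 0 0 1 L₂,
      lift2 0 (-a) a 0 T₂, ?_, ?_, ?_, ?_, ?_⟩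
    · exact mul_lower hGlow hLblow
    · intro i
      rw [mul_diag hGlow hLblow i,
        elimE_diag _ _ (by simp [hcc'1]) (by simp [hdd'0]) i,
        lift2_diag _ _ _ _ _ rfl rfl hL₂diag i, one_mul]
    · rw [lift2_transpose, hT₂skew]
      ext x y
      induction x using fin2cases with
      | h0 =>
          induction y using fin2cases with
          | h0 => simp
          | h1 => simp
          | hs j => simp
      | h1 =>
          induction y using fin2cases with
          | h0 => simp
          | h1 => simp
          | hs j => simp
      | hs i =>
          induction y using fin2cases with
          | h0 => simp
          | h1 => simp
          | hs j => simp
    · intro i j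
      induction i using fin2cases with
      | h0 =>
          induction j using fin2cases with
          | h0 => intro h; simp at h
          | h1 => intro h; exact absurd h (by simp)
          | hs j' => intro _; simp
      | h1 =>
          induction j using fin2cases with
          | h0 => intro h; exact absurd h (by simp)
          | h1 => intro h; simp at h
          | hs j' => intro _; simp
      | hs i' =>
          induction j using fin2cases with
          | h0 => intro _; simp
          | h1 => intro _; simp
          | hs j' =>
              intro h
              refine lift2_ss _ _ _ _ _ _ _ ▸ hT₂tri i' j' ?_
              simp only [Fin.val_succ] at h
              omega
    · have hsub : S.submatrix (σ'.trans σ₀) (σ'.trans σ₀) = S'.submatrix σ' σ' := by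
        ext x y
        simp [hS'def, Matrix.submatrix_apply, Equiv.trans_apply]
      rw [hsub, hGS, hS2σ, ← hLbT, Matrix.transpose_mul]
      simp only [Matrix.mul_assoc]


lemma permP (k : ℕ) (τ : Equiv.Perm (Fin k)) (S : Matrix (Fin k) (Fin k) ℝ) :
    (Matrix.of (fun i j => if τ⁻¹ j = i then (1:ℝ) else 0)) * S *
      (Matrix.of (fun i j => if τ⁻¹ j = i then (1:ℝ) else 0))ᵀ = S.submatrix τ τ := by
  ext x y
  have hc : ∀ (z w : Fin k), (τ⁻¹ w = z) = (w = τ z) := fun z w =>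
    propext ⟨fun h => by rw [← h]; simp, fun h => by rw [h]; simp⟩
  simp only [Matrix.mul_apply, Matrix.transpose_apply, Matrix.of_apply,
    Matrix.submatrix_apply, hc, ite_mul, mul_ite, one_mul, zero_mul, mul_one, mul_zero]
  simp [Finset.sum_ite_eq', Finset.mem_univ]

end SkewLTL

/-- Every real skew-symmetric matrix `S` admits (possibly after a permutation
`P`) a factorization `P S Pᵀ = L T Lᵀ` with `L` invertible lower-triangular and
`T` skew-symmetric tridiagonal. -/
theorem skew_LTL_factorization (n : ℕ)
    (S : Matrix (Fin (2*n)) (Fin (2*n)) ℝ) (hS : Sᵀ = -S) :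
    ∃ (σ : Equiv.Perm (Fin (2*n))) (P L T : Matrix (Fin (2*n)) (Fin (2*n)) ℝ),
      P = Matrix.of (fun i j => if σ j = i then (1 : ℝ) else 0) ∧
      (∀ i j : Fin (2*n), i < j → L i j = 0) ∧
      (∀ i : Fin (2*n), L i i ≠ 0) ∧
      Tᵀ = -T ∧
      (∀ i j : Fin (2*n), i.1 + 1 < j.1 ∨ j.1 + 1 < i.1 → T i j = 0) ∧
      P * S * Pᵀ = L * T * Lᵀ := by
  obtain ⟨τ, L, T, hLlow, hLdiag, hTskew, hTtri, hprod⟩ := SkewLTL.good_all (2*n) S hS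
  refine ⟨τ⁻¹, Matrix.of (fun i j => if τ⁻¹ j = i then (1 : ℝ) else 0), L, T,
    rfl, hLlow, fun i => by rw [hLdiag]; exact one_ne_zero, hTskew, hTtri, ?_⟩
  rw [SkewLTL.permP (2*n) τ S, hprod]
end

section
/- For a skew-symmetric 2n-by-2n real matrix S with factorization P S P^T = L T L^T, where P is a permutation matrix, L is lower-triangular with nonzero diagonal, and T is skew-symmetric tridiagonal with superdiagonal entries t_1,...,t_{2n-1}, the sign of the Pfaffian of S equals sign(det P) · ∏_j sign(L_{jj}) · ∏_{j=1}^{n} sign(t_{2j-1}). -/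
open Matrix

/-- The 2n×2n tridiagonal skew-symmetric matrix with superdiagonal entries
`T_{i,i+1} = t i` (1-indexed) and subdiagonal entries `-t i`. -/
def triSkew (n : ℕ) (t : ℕ → ℝ) : Matrix (Fin n) (Fin n) ℝ :=
  Matrix.of fun i j =>
    if j.1 = i.1 + 1 then t (i.1 + 1)
    else if i.1 = j.1 + 1 then -(t (j.1 + 1)) else 0

lemma real_sign_mul (x y : ℝ) : Real.sign (x*y) = Real.sign x * Real.sign y := by
  rcases lt_trichotomy x 0 with hx|hx|hx <;> rcases lt_trichotomy y 0 with hy|hy|hy <;>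
    simp [hx, hy, Real.sign_of_neg, Real.sign_of_pos, mul_pos, mul_pos_of_neg_of_neg,
      mul_neg_of_neg_of_pos, mul_neg_of_pos_of_neg, Real.sign_zero]

lemma real_sign_prod {α} (s : Finset α) (f : α → ℝ) :
    Real.sign (∏ i ∈ s, f i) = ∏ i ∈ s, Real.sign (f i) := by
  induction s using Finset.cons_induction with
  | empty => simp [Real.sign_one]
  | cons a s ha ih => rw [Finset.prod_cons, Finset.prod_cons, real_sign_mul, ih]

lemma detTriSkew : ∀ (n : ℕ) (t : ℕ → ℝ),
    (triSkew (2*n) t).det = ∏ j ∈ Finset.range n, (t (2*j+1))^2 := by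
  intro n
  induction n with
  | zero => intro t; simp [Matrix.det_fin_zero]
  | succ n ih =>
    intro t
    set A := triSkew (2*(n+1)) t with hA
    have h1 : A.det = (-1:ℝ)^((1:Fin (2*n+1+1)):ℕ) * A 0 1 *
        (A.submatrix Fin.succ (1:Fin (2*n+1+1)).succAbove).det := by
      rw [Matrix.det_succ_row_zero]
      apply Finset.sum_eq_single_of_mem (1 : Fin (2*n+1+1)) (Finset.mem_univ _)
      intro j _ hj
      have hj1 : j.1 ≠ 1 := by
        intro h; exact hj (Fin.ext (by simpa using h))
      have : A 0 j = 0 := by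
        simp only [hA, triSkew, of_apply]
        have h0v : ((0:Fin (2*(n+1)))).1 = 0 := rfl
        rw [h0v, if_neg (by omega), if_neg (by omega)]
      rw [this]; ring
    set B := A.submatrix Fin.succ (1:Fin (2*n+1+1)).succAbove with hB
    have h2 : B.det = (-1:ℝ)^((0:Fin (2*n+1)):ℕ) * B 0 0 *
        (B.submatrix (0:Fin (2*n+1)).succAbove Fin.succ).det := by
      rw [Matrix.det_succ_column_zero]
      apply Finset.sum_eq_single_of_mem (0 : Fin (2*n+1)) (Finset.mem_univ _)
      intro i _ hi
      have hi0 : i.1 ≠ 0 := by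
        intro h; exact hi (Fin.ext (by simpa using h))
      have : B i 0 = 0 := by
        simp only [hB, hA, triSkew, submatrix_apply, of_apply]
        have hs : ((1:Fin (2*n+1+1)).succAbove 0).1 = 0 := by
          simp [Fin.succAbove, Fin.lt_def]
        rw [hs]
        have hv : (Fin.succ i).1 = i.1 + 1 := rfl
        rw [if_neg (by omega), if_neg (by omega)]
      rw [this]; ring
    have hC : B.submatrix (0:Fin (2*n+1)).succAbove Fin.succ
        = triSkew (2*n) (fun k => t (k+2)) := by
      ext i j
      have hs : ∀ k : Fin (2*n), ((1:Fin (2*n+1+1)).succAbove (Fin.succ k)).1 = k.1 + 2 := by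
        intro k; simp [Fin.succAbove, Fin.lt_def]
      have hs0 : ((0:Fin (2*n+1)).succAbove i) = Fin.succ i := by
        simp [Fin.succAbove_zero]
      simp only [hB, hA, triSkew, submatrix_apply, of_apply, hs0]
      rw [hs]
      have hv : (Fin.succ (Fin.succ i)).1 = i.1 + 2 := rfl
      rw [hv]
      split_ifs with h1' h2' h3' h4' h5' <;> first
        | (congr 1; omega) | rfl | omega
    have hA01 : A 0 1 = t 1 := by
      simp [hA, triSkew]
      intro h; exact absurd (Nat.mod_eq_of_lt (by omega)) h
    have hB00 : B 0 0 = -(t 1) := by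
      have hs : ((1:Fin (2*n+1+1)).succAbove 0).1 = 0 := by
        simp [Fin.succAbove, Fin.lt_def]
      simp only [hB, hA, triSkew, submatrix_apply, of_apply]
      rw [hs]
      have hv : (Fin.succ (0: Fin (2*n+1))).1 = 1 := rfl
      rw [hv]
      norm_num
    rw [h1, h2, hC, hA01, hB00, ih (fun k => t (k+2))]
    rw [Finset.prod_range_succ']
    simp only [Fin.val_one, Fin.val_zero, pow_one, pow_zero,
      show ∀ x:ℕ, 2*x+1+2 = 2*(x+1)+1 from fun x => by omega]
    ring

lemma triSkew_skew (m : ℕ) (t : ℕ → ℝ) : (triSkew m t)ᵀ = -(triSkew m t) := by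
  ext i j
  simp only [triSkew, Matrix.transpose_apply, Matrix.neg_apply, Matrix.of_apply]
  split_ifs <;> first | (exfalso; omega) | ring

lemma triSkew_J (n : ℕ) :
    triSkew (2*n) (fun k => if k % 2 = 1 then 1 else 0) = Jpos n := by
  ext i j
  simp only [triSkew, Jpos, Matrix.of_apply]
  split_ifs <;> first | (exfalso; omega) | norm_num

lemma pf_conj (n : ℕ) (Pf : Matrix (Fin (2*n)) (Fin (2*n)) ℝ → ℝ)
    (hPf : IsPfaffian n Pf)
    (M X : Matrix (Fin (2*n)) (Fin (2*n)) ℝ) (hX : Xᵀ = -X) :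
    Pf (M * X * Mᵀ) = M.det * Pf X := by
  classical
  obtain ⟨⟨p, hp⟩, hsq, hJ⟩ := hPf
  set q : MvPolynomial (Fin (2*n) × Fin (2*n)) ℝ :=
    MvPolynomial.map (Int.castRingHom ℝ) p with hq
  -- Pf as evaluation of q
  have hp' : ∀ Y : Matrix (Fin (2*n)) (Fin (2*n)) ℝ,
      Pf Y = MvPolynomial.eval (fun ij => Y ij.1 ij.2) q := by
    intro Y
    rw [hp Y, MvPolynomial.aeval_def, MvPolynomial.eval₂_eq_eval_map]
    rfl
  -- variable type
  let ι := (Fin (2*n) × Fin (2*n)) ⊕ (Fin (2*n) × Fin (2*n))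
  -- matrices from an assignment
  let Mv : (ι → ℝ) → Matrix (Fin (2*n)) (Fin (2*n)) ℝ :=
    fun v => Matrix.of fun i j => v (Sum.inl (i,j))
  let Av : (ι → ℝ) → Matrix (Fin (2*n)) (Fin (2*n)) ℝ :=
    fun v => Matrix.of fun i j => v (Sum.inr (i,j)) - v (Sum.inr (j,i))
  have hAvskew : ∀ v, (Av v)ᵀ = -(Av v) := by
    intro v; ext i j; simp [Av, Matrix.transpose_apply]
  -- polynomial matrices
  let Mp : Matrix (Fin (2*n)) (Fin (2*n)) (MvPolynomial ι ℝ) :=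
    Matrix.of fun i j => MvPolynomial.X (Sum.inl (i,j))
  let Ap : Matrix (Fin (2*n)) (Fin (2*n)) (MvPolynomial ι ℝ) :=
    Matrix.of fun i j => MvPolynomial.X (Sum.inr (i,j)) - MvPolynomial.X (Sum.inr (j,i))
  let Cp := Mp * Ap * Mpᵀ
  let P₁ : MvPolynomial ι ℝ :=
    MvPolynomial.eval₂ MvPolynomial.C (fun ij => Cp ij.1 ij.2) q
  let P₂ : MvPolynomial ι ℝ :=
    Mp.det * MvPolynomial.eval₂ MvPolynomial.C (fun ij => Ap ij.1 ij.2) q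
  -- evaluation of the polynomial matrices
  have hMpev : ∀ v : ι → ℝ, Mp.map (MvPolynomial.eval v) = Mv v := by
    intro v; ext i j; simp [Mp, Mv]
  have hApev : ∀ v : ι → ℝ, Ap.map (MvPolynomial.eval v) = Av v := by
    intro v; ext i j; simp [Ap, Av]
  have hCpev : ∀ v : ι → ℝ, Cp.map (MvPolynomial.eval v) = Mv v * Av v * (Mv v)ᵀ := by
    intro v
    have h1 := Matrix.map_mul (L := Mp * Ap) (M := Mpᵀ) (f := (MvPolynomial.eval v : MvPolynomial ι ℝ →+* ℝ))
    have h2 := Matrix.map_mul (L := Mp) (M := Ap) (f := (MvPolynomial.eval v : MvPolynomial ι ℝ →+* ℝ))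
    show (Mp * Ap * Mpᵀ).map _ = _
    rw [h1, h2, hMpev, hApev, Matrix.transpose_map, hMpev]
  have hP₁ : ∀ v : ι → ℝ, MvPolynomial.eval v P₁ = Pf (Mv v * Av v * (Mv v)ᵀ) := by
    intro v
    have hfun : (⇑(MvPolynomial.eval v) ∘ fun ij => Cp ij.1 ij.2) =
        (fun ij : Fin (2*n) × Fin (2*n) => (Mv v * Av v * (Mv v)ᵀ) ij.1 ij.2) := by
      funext ij
      have h := congrFun (congrFun (hCpev v) ij.1) ij.2
      simpa [Matrix.map_apply] using h
    calc MvPolynomial.eval v P₁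
        = MvPolynomial.eval (⇑(MvPolynomial.eval v) ∘ fun ij => Cp ij.1 ij.2) q :=
          (MvPolynomial.eval_assoc _ _ _).symm
      _ = MvPolynomial.eval (fun ij : Fin (2*n) × Fin (2*n) =>
            (Mv v * Av v * (Mv v)ᵀ) ij.1 ij.2) q := by rw [hfun]
      _ = Pf (Mv v * Av v * (Mv v)ᵀ) := (hp' _).symm
  have hP₂ : ∀ v : ι → ℝ, MvPolynomial.eval v P₂ = (Mv v).det * Pf (Av v) := by
    intro v
    have hfun : (⇑(MvPolynomial.eval v) ∘ fun ij => Ap ij.1 ij.2) =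
        (fun ij : Fin (2*n) × Fin (2*n) => (Av v) ij.1 ij.2) := by
      funext ij
      have h := congrFun (congrFun (hApev v) ij.1) ij.2
      simpa [Matrix.map_apply] using h
    have hdet : MvPolynomial.eval v Mp.det = (Mv v).det := by
      rw [RingHom.map_det (MvPolynomial.eval v : MvPolynomial ι ℝ →+* ℝ), RingHom.mapMatrix_apply, hMpev]
    calc MvPolynomial.eval v P₂
        = MvPolynomial.eval v Mp.det *
          MvPolynomial.eval v (MvPolynomial.eval₂ MvPolynomial.C (fun ij => Ap ij.1 ij.2) q) :=
          map_mul _ _ _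
      _ = (Mv v).det * MvPolynomial.eval
            (⇑(MvPolynomial.eval v) ∘ fun ij => Ap ij.1 ij.2) q := by
          rw [hdet, MvPolynomial.eval_assoc]
      _ = (Mv v).det * Pf (Av v) := by rw [hfun, ← hp']
  -- squares agree
  have hsq' : P₁ ^ 2 = P₂ ^ 2 := by
    apply MvPolynomial.funext
    intro v
    have hskew : (Mv v * Av v * (Mv v)ᵀ)ᵀ = -(Mv v * Av v * (Mv v)ᵀ) := by
      rw [Matrix.transpose_mul, Matrix.transpose_mul, Matrix.transpose_transpose, hAvskew,
        Matrix.mul_assoc]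
      simp [Matrix.mul_assoc]
    rw [map_pow, map_pow, hP₁, hP₂, hsq _ hskew, mul_pow, hsq _ (hAvskew v),
      Matrix.det_mul, Matrix.det_mul, Matrix.det_transpose]
    ring
  -- P₁ = P₂ or P₁ = -P₂
  have hcases : P₁ = P₂ ∨ P₁ = -P₂ := by
    have h0 : (P₁ - P₂) * (P₁ + P₂) = 0 := by ring_nf; rw [← sub_eq_zero] at hsq' ⊢; linear_combination hsq'
    rcases mul_eq_zero.mp h0 with h | h
    · left; exact sub_eq_zero.mp h
    · right; have := add_eq_zero_iff_eq_neg.mp h; exact this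
  -- rule out the negative branch using Jpos
  have hbranch : P₁ = P₂ := by
    rcases hcases with h | h
    · exact h
    · exfalso
      set v₀ : ι → ℝ := fun s => match s with
        | Sum.inl (i, j) => if i = j then 1 else 0
        | Sum.inr (i, j) => if i.1 % 2 = 0 ∧ j.1 = i.1 + 1 then 1 else 0 with hv₀
      have hMv₀ : Mv v₀ = 1 := by
        ext i j; simp [Mv, v₀, Matrix.one_apply]
      have hAv₀ : Av v₀ = Jpos n := by
        ext i j
        simp only [Av, v₀, Matrix.of_apply, Jpos]
        split_ifs <;> first | (exfalso; omega) | norm_num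
      have e₁ : MvPolynomial.eval v₀ P₁ = 1 := by
        rw [hP₁, hMv₀, hAv₀]; simpa using hJ
      have e₂ : MvPolynomial.eval v₀ P₂ = 1 := by
        rw [hP₂, hMv₀, hAv₀]; simpa using hJ
      rw [h, map_neg, e₂] at e₁
      norm_num at e₁
  -- conclude
  set v₁ : ι → ℝ := fun s => match s with
    | Sum.inl (i, j) => M i j
    | Sum.inr (i, j) => X i j / 2 with hv₁
  have hMv₁ : Mv v₁ = M := by ext i j; simp [Mv, v₁]
  have hAv₁ : Av v₁ = X := by
    ext i j
    have hx := congrFun (congrFun hX j) i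
    simp only [Matrix.transpose_apply, Matrix.neg_apply] at hx
    simp only [Av, v₁, Matrix.of_apply]
    rw [hx]; ring
  have := congrArg (MvPolynomial.eval v₁) hbranch
  rw [hP₁, hP₂, hMv₁, hAv₁] at this
  exact this

lemma pf_triSkew (n : ℕ) (Pf : Matrix (Fin (2*n)) (Fin (2*n)) ℝ → ℝ)
    (hPf : IsPfaffian n Pf) (t : ℕ → ℝ) :
    Pf (triSkew (2*n) t) = ∏ j ∈ Finset.range n, t (2*j+1) := by
  classical
  obtain ⟨⟨p, hp⟩, hsq, hJ⟩ := hPf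
  set q : MvPolynomial (Fin (2*n) × Fin (2*n)) ℝ :=
    MvPolynomial.map (Int.castRingHom ℝ) p with hq
  have hp' : ∀ Y : Matrix (Fin (2*n)) (Fin (2*n)) ℝ,
      Pf Y = MvPolynomial.eval (fun ij => Y ij.1 ij.2) q := by
    intro Y
    rw [hp Y, MvPolynomial.aeval_def, MvPolynomial.eval₂_eq_eval_map]
    rfl
  let Tp : Matrix (Fin (2*n)) (Fin (2*n)) (MvPolynomial ℕ ℝ) :=
    Matrix.of fun i j =>
      if j.1 = i.1 + 1 then MvPolynomial.X (i.1 + 1)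
      else if i.1 = j.1 + 1 then -(MvPolynomial.X (j.1 + 1)) else 0
  let P₁ : MvPolynomial ℕ ℝ :=
    MvPolynomial.eval₂ MvPolynomial.C (fun ij => Tp ij.1 ij.2) q
  let P₂ : MvPolynomial ℕ ℝ := ∏ j ∈ Finset.range n, MvPolynomial.X (2*j+1)
  have hTpev : ∀ v : ℕ → ℝ, Tp.map (MvPolynomial.eval v) = triSkew (2*n) v := by
    intro v; ext i j
    simp only [Tp, triSkew, Matrix.map_apply, Matrix.of_apply]
    split_ifs <;> simp
  have hP₁ : ∀ v : ℕ → ℝ, MvPolynomial.eval v P₁ = Pf (triSkew (2*n) v) := by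
    intro v
    have hfun : (⇑(MvPolynomial.eval v) ∘ fun ij => Tp ij.1 ij.2) =
        (fun ij : Fin (2*n) × Fin (2*n) => (triSkew (2*n) v) ij.1 ij.2) := by
      funext ij
      have h := congrFun (congrFun (hTpev v) ij.1) ij.2
      simpa [Matrix.map_apply] using h
    calc MvPolynomial.eval v P₁
        = MvPolynomial.eval (⇑(MvPolynomial.eval v) ∘ fun ij => Tp ij.1 ij.2) q :=
          (MvPolynomial.eval_assoc _ _ _).symm
      _ = _ := by rw [hfun, ← hp']
  have hP₂ : ∀ v : ℕ → ℝ, MvPolynomial.eval v P₂ = ∏ j ∈ Finset.range n, v (2*j+1) := by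
    intro v; simp [P₂]
  have hsq' : P₁ ^ 2 = P₂ ^ 2 := by
    apply MvPolynomial.funext
    intro v
    rw [map_pow, map_pow, hP₁, hP₂, hsq _ (triSkew_skew _ _), detTriSkew,
      ← Finset.prod_pow]
  have hcases : P₁ = P₂ ∨ P₁ = -P₂ := by
    have h0 : (P₁ - P₂) * (P₁ + P₂) = 0 := by
      rw [← sub_eq_zero] at hsq' ⊢; linear_combination hsq'
    rcases mul_eq_zero.mp h0 with h | h
    · left; exact sub_eq_zero.mp h
    · right; exact add_eq_zero_iff_eq_neg.mp h
  have hbranch : P₁ = P₂ := by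
    rcases hcases with h | h
    · exact h
    · exfalso
      set v₀ : ℕ → ℝ := fun k => if k % 2 = 1 then 1 else 0 with hv₀
      have e₁ : MvPolynomial.eval v₀ P₁ = 1 := by
        rw [hP₁, triSkew_J]; exact hJ
      have e₂ : MvPolynomial.eval v₀ P₂ = 1 := by
        rw [hP₂]
        have : ∀ j ∈ Finset.range n, v₀ (2*j+1) = 1 := by
          intro j _; simp [v₀, Nat.add_mul_mod_self_left]
        rw [Finset.prod_congr rfl this]; simp
      rw [h, map_neg, e₂] at e₁
      norm_num at e₁
  have := congrArg (MvPolynomial.eval t) hbranch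
  rwa [hP₁, hP₂] at this

/-- Sign of the Pfaffian from a permuted skew `L T Lᵀ` factorization. -/
theorem sign_pfaffian_of_factorization (n : ℕ)
    (Pf : Matrix (Fin (2*n)) (Fin (2*n)) ℝ → ℝ) (hPf : IsPfaffian n Pf)
    (S : Matrix (Fin (2*n)) (Fin (2*n)) ℝ) (hS : Sᵀ = -S) (hSdet : S.det ≠ 0)
    (σ : Equiv.Perm (Fin (2*n)))
    (P : Matrix (Fin (2*n)) (Fin (2*n)) ℝ)
    (hP : P = Matrix.of (fun i j => if σ j = i then (1 : ℝ) else 0))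
    (L : Matrix (Fin (2*n)) (Fin (2*n)) ℝ)
    (hL : ∀ i j : Fin (2*n), i < j → L i j = 0)
    (hLd : ∀ i : Fin (2*n), L i i ≠ 0)
    (t : ℕ → ℝ)
    (hfact : P * S * Pᵀ = L * triSkew (2*n) t * Lᵀ) :
    Real.sign (Pf S) =
      Real.sign P.det * (∏ j : Fin (2*n), Real.sign (L j j)) *
        ∏ j ∈ Finset.range n, Real.sign (t (2*j + 1)) := by
  have hPtP : Pᵀ * P = 1 := by
    subst hP
    ext i j
    simp [Matrix.mul_apply, Matrix.one_apply, Finset.sum_ite_eq, Equiv.injective]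
  have hPPt : P * Pᵀ = 1 := mul_eq_one_comm.mp hPtP
  -- recover S
  have hSfact : S = (Pᵀ * L) * triSkew (2*n) t * (Pᵀ * L)ᵀ := by
    have : Pᵀ * (P * S * Pᵀ) * P = Pᵀ * (L * triSkew (2*n) t * Lᵀ) * P := by rw [hfact]
    calc S = 1 * S * 1 := by rw [Matrix.one_mul, Matrix.mul_one]
      _ = (Pᵀ * P) * S * (Pᵀ * P) := by rw [hPtP]
      _ = Pᵀ * (P * S * Pᵀ) * P := by noncomm_ring [Matrix.mul_assoc]
      _ = Pᵀ * (L * triSkew (2*n) t * Lᵀ) * P := this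
      _ = (Pᵀ * L) * triSkew (2*n) t * (Pᵀ * L)ᵀ := by
          rw [Matrix.transpose_mul, Matrix.transpose_transpose]
          noncomm_ring [Matrix.mul_assoc]
  have hPfS : Pf S = P.det * ((∏ j : Fin (2*n), L j j) *
      ∏ j ∈ Finset.range n, t (2*j + 1)) := by
    rw [hSfact, pf_conj n Pf hPf _ _ (triSkew_skew _ _), pf_triSkew n Pf hPf,
      Matrix.det_mul, Matrix.det_transpose]
    have hdetL : L.det = ∏ j : Fin (2*n), L j j := by
      apply Matrix.det_of_lowerTriangular
      intro i j hij
      exact hL i j hij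
    rw [hdetL]; ring
  rw [hPfS, real_sign_mul, real_sign_mul, real_sign_prod, real_sign_prod, mul_assoc]
end
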